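/- arXiv:1810.08687 — 9 statements merged into one kernel-verified Lean document; each statement's English description precedes it below -/
import Mathlib

section
/- For every integer n ≥ 2, the number of quadruples (x, y, z, t) of integers with 1 ≤ x < y < z < t ≤ n and gcd(z − x, t − y, n) = 1 equals (1/2)·n·J₁(n) + (1/24)·n·(n − 6)·J₂(n); equivalently, 24 times this count equals 12·n·J₁(n) + n·(n − 6)·J₂(n). -/
/-- Jordan totient function `J_k(n) = n^k * ∏_{p prime, p ∣ n} (1 - p^{-k})`, valued in `ℚ`. -/
def jordanTotient (k n : ℕ) : ℚ := (n : ℚ) ^ k * ∏ p ∈ n.primeFactors, (1 - 1 / (p : ℚ) ^ k)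

open Finset

private lemma hockey (k : ℕ) : ∀ M : ℕ, ∑ i ∈ range M, i.choose k = M.choose (k+1) := by
  intro M
  induction M with
  | zero => simp
  | succ M ih => rw [Finset.sum_range_succ, ih, Nat.choose_succ_succ' (M) k]; omega

def ch2 (M : ℕ) : Finset (ℕ × ℕ) := (range M ×ˢ range M).filter fun p => p.1 < p.2
def ch3 (M : ℕ) : Finset (ℕ × ℕ × ℕ) :=
  (range M ×ˢ range M ×ˢ range M).filter fun p => p.1 < p.2.1 ∧ p.2.1 < p.2.2
def ch4 (M : ℕ) : Finset (ℕ × ℕ × ℕ × ℕ) :=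
  (range M ×ˢ range M ×ˢ range M ×ˢ range M).filter
    fun p => p.1 < p.2.1 ∧ p.2.1 < p.2.2.1 ∧ p.2.2.1 < p.2.2.2

lemma ch2_card (M : ℕ) : (ch2 M).card = M.choose 2 := by
  induction M with
  | zero => simp [ch2]
  | succ M ih =>
    have hs : ch2 (M+1) = ch2 M ∪ (range M).image (fun i => (i, M)) := by
      ext ⟨i, j⟩
      simp only [ch2, mem_filter, mem_product, mem_range, mem_union, mem_image, Prod.mk.injEq]
      constructor
      · rintro ⟨⟨hi, hj⟩, hij⟩
        rcases Nat.lt_or_ge j M with h | h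
        · left; exact ⟨⟨by omega, h⟩, hij⟩
        · right; exact ⟨i, by omega, rfl, by omega⟩
      · rintro (⟨⟨hi, hj⟩, hij⟩ | ⟨a, ha, rfl, rfl⟩) <;> omega
    have hd : Disjoint (ch2 M) ((range M).image (fun i => (i, M))) := by
      simp only [Finset.disjoint_left, ch2, mem_filter, mem_product, mem_range, mem_image,
        Prod.mk.injEq]
      rintro ⟨i, j⟩ ⟨⟨hi, hj⟩, hij⟩ ⟨a, ha, rfl, rfl⟩
      omega
    rw [hs, Finset.card_union_of_disjoint hd, ih,
      Finset.card_image_of_injective _ (fun a b h => by simpa using (Prod.mk.injEq ..).mp h |>.1), card_range,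
      Nat.choose_succ_succ' M 1]
    simp [Nat.add_comm]

lemma ch3_card (M : ℕ) : (ch3 M).card = M.choose 3 := by
  induction M with
  | zero => simp [ch3]
  | succ M ih =>
    have hs : ch3 (M+1) = ch3 M ∪ (ch2 M).image (fun p => (p.1, p.2, M)) := by
      ext ⟨i, j, k⟩
      simp only [ch3, ch2, mem_filter, mem_product, mem_range, mem_union, mem_image,
        Prod.mk.injEq, Prod.exists]
      constructor
      · rintro ⟨⟨hi, hj, hk⟩, hij, hjk⟩
        rcases Nat.lt_or_ge k M with h | h
        · left; exact ⟨⟨by omega, by omega, h⟩, hij, hjk⟩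
        · right; exact ⟨i, j, ⟨⟨by omega, by omega⟩, by omega⟩, rfl, rfl, by omega⟩
      · rintro (⟨⟨hi, hj, hk⟩, hij, hjk⟩ | ⟨a, b, ⟨⟨ha, hb⟩, hab⟩, rfl, rfl, rfl⟩) <;> omega
    have hd : Disjoint (ch3 M) ((ch2 M).image (fun p => (p.1, p.2, M))) := by
      simp only [Finset.disjoint_left, ch3, ch2, mem_filter, mem_product, mem_range, mem_image,
        Prod.mk.injEq, Prod.exists]
      rintro ⟨i, j, k⟩ ⟨⟨hi, hj, hk⟩, hij, hjk⟩ ⟨a, b, hm, rfl, rfl, rfl⟩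
      dsimp only at *
      omega
    have hinj : Set.InjOn (fun p : ℕ × ℕ => (p.1, p.2, M)) (ch2 M) := by
      rintro ⟨a, b⟩ _ ⟨c, d⟩ _ h
      simp only [Prod.mk.injEq] at h
      simp [h.1, h.2.1]
    rw [hs, Finset.card_union_of_disjoint hd, ih, Finset.card_image_of_injOn hinj, ch2_card,
      Nat.choose_succ_succ' M 2, Nat.add_comm]

lemma ch4_card (M : ℕ) : (ch4 M).card = M.choose 4 := by
  induction M with
  | zero => simp [ch4]
  | succ M ih =>
    have hs : ch4 (M+1) = ch4 M ∪ (ch3 M).image (fun p => (p.1, p.2.1, p.2.2, M)) := by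
      ext ⟨i, j, k, l⟩
      simp only [ch4, ch3, mem_filter, mem_product, mem_range, mem_union, mem_image,
        Prod.mk.injEq, Prod.exists]
      constructor
      · rintro ⟨⟨hi, hj, hk, hl⟩, hij, hjk, hkl⟩
        rcases Nat.lt_or_ge l M with h | h
        · left; exact ⟨⟨by omega, by omega, by omega, h⟩, hij, hjk, hkl⟩
        · right; exact ⟨i, j, k, ⟨⟨by omega, by omega, by omega⟩, by omega, by omega⟩, rfl, rfl,
            rfl, by omega⟩
      · rintro (⟨⟨hi, hj, hk, hl⟩, hij, hjk, hkl⟩ |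
          ⟨a, b, c, ⟨⟨ha, hb, hc⟩, hab, hbc⟩, rfl, rfl, rfl, rfl⟩) <;> omega
    have hd : Disjoint (ch4 M) ((ch3 M).image (fun p => (p.1, p.2.1, p.2.2, M))) := by
      simp only [Finset.disjoint_left, ch4, ch3, mem_filter, mem_product, mem_range, mem_image,
        Prod.mk.injEq, Prod.exists]
      rintro ⟨i, j, k, l⟩ ⟨⟨hi, hj, hk, hl⟩, hij, hjk, hkl⟩ ⟨a, b, c, hm, rfl, rfl, rfl, rfl⟩
      dsimp only at *
      omega
    have hinj : Set.InjOn (fun p : ℕ × ℕ × ℕ => (p.1, p.2.1, p.2.2, M)) (ch3 M) := by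
      rintro ⟨a, b, c⟩ _ ⟨d, e, f⟩ _ h
      simp only [Prod.mk.injEq] at h
      simp [h.1, h.2.1, h.2.2.1]
    rw [hs, Finset.card_union_of_disjoint hd, ih, Finset.card_image_of_injOn hinj, ch3_card,
      Nat.choose_succ_succ' M 3, Nat.add_comm]

/-- Weak/strict chain quadruples with prescribed gaps. -/
def chW (a b c M : ℕ) : Finset (ℕ × ℕ × ℕ × ℕ) :=
  (range M ×ˢ range M ×ˢ range M ×ˢ range M).filter
    fun v => v.1 + a ≤ v.2.1 ∧ v.2.1 + b ≤ v.2.2.1 ∧ v.2.2.1 + c ≤ v.2.2.2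

lemma chW_card {a b c : ℕ} (ha : a ≤ 1) (hb : b ≤ 1) (hc : c ≤ 1) (M : ℕ) :
    (chW a b c M).card = (M + 3 - a - b - c).choose 4 := by
  rw [← ch4_card]
  apply Finset.card_bij' (fun v _ => (v.1, v.2.1 + 1 - a, v.2.2.1 + 2 - a - b, v.2.2.2 + 3 - a - b - c))
    (fun v _ => (v.1, v.2.1 - (1 - a), v.2.2.1 - (2 - a - b), v.2.2.2 - (3 - a - b - c))) <;>
  · rintro ⟨i, j, k, l⟩ hv
    first
    | (simp only [ch4, chW, mem_filter, mem_product, mem_range] at hv ⊢; omega)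
    | (simp only [ch4, chW, mem_filter, mem_product, mem_range] at hv
       simp only [Prod.mk.injEq, true_and]
       omega)
    | (simp only [Prod.mk.injEq, true_and]; omega)
    | omega

lemma mul_add_lt_iff {d r s : ℕ} (hr : r < d) (hs : s < d) (i j : ℕ) :
    d * i + r < d * j + s ↔ (i < j ∨ (i = j ∧ r < s)) := by
  constructor
  · intro h
    rcases lt_trichotomy i j with h' | h' | h'
    · exact Or.inl h'
    · subst h'; exact Or.inr ⟨rfl, lt_of_add_lt_add_left h⟩
    · exfalso
      have h1 : d * (j + 1) ≤ d * i := Nat.mul_le_mul_left d h'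
      have h2 : d * (j + 1) = d * j + d := by ring
      linarith
  · rintro (h | ⟨rfl, h⟩)
    · have h1 : d * (i + 1) ≤ d * j := Nat.mul_le_mul_left d h
      have h2 : d * (i + 1) = d * i + d := by ring
      linarith
    · linarith

lemma mul_add_lt_mul_iff {d r : ℕ} (hr : r < d) (k m : ℕ) :
    d * k + r < d * m ↔ k < m := by
  constructor
  · intro h
    by_contra hc
    have h1 : d * m ≤ d * k := Nat.mul_le_mul_left d (by omega)
    linarith
  · intro h
    have h1 : d * (k + 1) ≤ d * m := Nat.mul_le_mul_left d h
    have h2 : d * (k + 1) = d * k + d := by ring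
    linarith

def Nset (n d : ℕ) : Finset (ℕ × ℕ × ℕ × ℕ) :=
  (range n ×ˢ range n ×ˢ range n ×ˢ range n).filter
    fun v => v.1 < v.2.1 ∧ v.2.1 < v.2.2.1 ∧ v.2.2.1 < v.2.2.2 ∧
      d ∣ v.2.2.1 - v.1 ∧ d ∣ v.2.2.2 - v.2.1

lemma fiber_card (d m : ℕ) {r s : ℕ} (hr : r < d) (hs : s < d) :
    ((Nset (d * m) d).filter (fun v => (v.1 % d, v.2.1 % d) = (r, s))).card
      = (m + 3 - (if r < s then 0 else 1) - (if s < r then 0 else 1)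
          - (if r < s then 0 else 1)).choose 4 := by
  set a : ℕ := if r < s then 0 else 1 with hadef
  set b : ℕ := if s < r then 0 else 1 with hbdef
  have ha : a ≤ 1 := by simp [hadef]; split <;> omega
  have hb : b ≤ 1 := by simp [hbdef]; split <;> omega
  rw [← chW_card ha hb ha m]
  apply Finset.card_bij' (fun v _ => (v.1 / d, v.2.1 / d, v.2.2.1 / d, v.2.2.2 / d))
    (fun w _ => (d * w.1 + r, d * w.2.1 + s, d * w.2.2.1 + r, d * w.2.2.2 + s))
  · rintro ⟨x, y, z, t⟩ hv
    simp only [Nset, mem_filter, mem_product, mem_range, Prod.mk.injEq] at hv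
    obtain ⟨⟨⟨hx, hy, hz, ht⟩, hxy, hyz, hzt, ⟨q1, hq1⟩, ⟨q2, hq2⟩⟩, hxr, hys⟩ := hv
    have hd : 0 < d := by omega
    have hzx : z = x + d * q1 := by omega
    have hty : t = y + d * q2 := by omega
    have hzr : z % d = r := by rw [hzx, Nat.add_mul_mod_self_left, hxr]
    have hts : t % d = s := by rw [hty, Nat.add_mul_mod_self_left, hys]
    have ex : x = d * (x / d) + r := by rw [← hxr]; exact (Nat.div_add_mod x d).symm
    have ey : y = d * (y / d) + s := by rw [← hys]; exact (Nat.div_add_mod y d).symm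
    have ez : z = d * (z / d) + r := by rw [← hzr]; exact (Nat.div_add_mod z d).symm
    have et : t = d * (t / d) + s := by rw [← hts]; exact (Nat.div_add_mod t d).symm
    have m1 : x / d < m := by rw [← mul_add_lt_mul_iff hr (x/d) m, ← ex]; exact hx
    have m2 : y / d < m := by rw [← mul_add_lt_mul_iff hs (y/d) m, ← ey]; exact hy
    have m3 : z / d < m := by rw [← mul_add_lt_mul_iff hr (z/d) m, ← ez]; exact hz
    have m4 : t / d < m := by rw [← mul_add_lt_mul_iff hs (t/d) m, ← et]; exact ht
    have c1 : x / d < y / d ∨ (x / d = y / d ∧ r < s) := by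
      rw [← mul_add_lt_iff hr hs]; rw [← ex, ← ey]; exact hxy
    have c2 : y / d < z / d ∨ (y / d = z / d ∧ s < r) := by
      rw [← mul_add_lt_iff hs hr]; rw [← ey, ← ez]; exact hyz
    have c3 : z / d < t / d ∨ (z / d = t / d ∧ r < s) := by
      rw [← mul_add_lt_iff hr hs]; rw [← ez, ← et]; exact hzt
    simp only [chW, mem_filter, mem_product, mem_range]
    refine ⟨⟨m1, m2, m3, m4⟩, ?_, ?_, ?_⟩
    · rcases c1 with h | ⟨h, h'⟩
      · omega
      · have : a = 0 := by rw [hadef, if_pos h']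
        omega
    · rcases c2 with h | ⟨h, h'⟩
      · omega
      · have : b = 0 := by rw [hbdef, if_pos h']
        omega
    · rcases c3 with h | ⟨h, h'⟩
      · omega
      · have : a = 0 := by rw [hadef, if_pos h']
        omega
  · rintro ⟨i, j, k, l⟩ hw
    simp only [chW, mem_filter, mem_product, mem_range] at hw
    obtain ⟨⟨hi, hj, hk, hl⟩, hij, hjk, hkl⟩ := hw
    have hik : i ≤ k := by omega
    have hjl : j ≤ l := by omega
    simp only [Nset, mem_filter, mem_product, mem_range, Prod.mk.injEq]
    refine ⟨⟨⟨?_, ?_, ?_, ?_⟩, ?_, ?_, ?_, ?_, ?_⟩, ?_, ?_⟩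
    · exact (mul_add_lt_mul_iff hr i m).2 hi
    · exact (mul_add_lt_mul_iff hs j m).2 hj
    · exact (mul_add_lt_mul_iff hr k m).2 hk
    · exact (mul_add_lt_mul_iff hs l m).2 hl
    · rw [mul_add_lt_iff hr hs]
      rcases Nat.lt_or_ge i j with h | h
      · exact Or.inl h
      · right
        have h2 : i = j := by omega
        have h0 : a = 0 := by omega
        refine ⟨h2, ?_⟩
        rw [hadef] at h0
        by_contra hc
        simp [hc] at h0
    · rw [mul_add_lt_iff hs hr]
      rcases Nat.lt_or_ge j k with h | h
      · exact Or.inl h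
      · right
        have h2 : j = k := by omega
        have h0 : b = 0 := by omega
        refine ⟨h2, ?_⟩
        rw [hbdef] at h0
        by_contra hc
        simp [hc] at h0
    · rw [mul_add_lt_iff hr hs]
      rcases Nat.lt_or_ge k l with h | h
      · exact Or.inl h
      · right
        have h2 : k = l := by omega
        have h0 : a = 0 := by omega
        refine ⟨h2, ?_⟩
        rw [hadef] at h0
        by_contra hc
        simp [hc] at h0
    · rw [Nat.add_sub_add_right]
      exact Nat.dvd_sub (Dvd.intro k rfl) (Dvd.intro i rfl)
    · rw [Nat.add_sub_add_right]
      exact Nat.dvd_sub (Dvd.intro l rfl) (Dvd.intro j rfl)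
    · rw [Nat.mul_add_mod]; exact Nat.mod_eq_of_lt hr
    · rw [Nat.mul_add_mod]; exact Nat.mod_eq_of_lt hs
  · rintro ⟨x, y, z, t⟩ hv
    simp only [Nset, mem_filter, mem_product, mem_range, Prod.mk.injEq] at hv
    obtain ⟨⟨⟨hx, hy, hz, ht⟩, hxy, hyz, hzt, ⟨q1, hq1⟩, ⟨q2, hq2⟩⟩, hxr, hys⟩ := hv
    have hzx : z = x + d * q1 := by omega
    have hty : t = y + d * q2 := by omega
    have hzr : z % d = r := by rw [hzx, Nat.add_mul_mod_self_left, hxr]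
    have hts : t % d = s := by rw [hty, Nat.add_mul_mod_self_left, hys]
    simp only [Prod.mk.injEq]
    refine ⟨?_, ?_, ?_, ?_⟩
    · rw [← hxr]; exact Nat.div_add_mod x d
    · rw [← hys]; exact Nat.div_add_mod y d
    · rw [← hzr]; exact Nat.div_add_mod z d
    · rw [← hts]; exact Nat.div_add_mod t d
  · rintro ⟨i, j, k, l⟩ hw
    have hd : 0 < d := by omega
    simp only [Prod.mk.injEq]
    refine ⟨?_, ?_, ?_, ?_⟩ <;>
      rw [Nat.mul_add_div hd, Nat.div_eq_of_lt (by omega), Nat.add_zero]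

lemma diag_card (d : ℕ) :
    ((range d ×ˢ range d).filter (fun p => p.1 = p.2)).card = d := by
  have h : ((range d ×ˢ range d).filter (fun p => p.1 = p.2))
      = (range d).image (fun r => (r, r)) := by
    ext ⟨a, b⟩
    simp only [mem_filter, mem_product, mem_range, mem_image, Prod.mk.injEq]
    constructor
    · rintro ⟨⟨ha, hb⟩, h⟩; exact ⟨a, ha, rfl, h⟩
    · rintro ⟨c, hc, rfl, rfl⟩; exact ⟨⟨hc, hc⟩, rfl⟩
  rw [h, Finset.card_image_of_injective _ (fun x y hxy => by simpa using (Prod.mk.injEq ..).mp hxy |>.1), card_range]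

lemma gt_card (d : ℕ) :
    ((range d ×ˢ range d).filter (fun p => p.2 < p.1)).card = d.choose 2 := by
  rw [← ch2_card d]
  apply Finset.card_nbij' (fun p => (p.2, p.1)) (fun p => (p.2, p.1))
  · rintro ⟨x, y⟩ h
    simp only [ch2, mem_filter, mem_product, mem_range, mem_coe, Set.mem_setOf_eq] at *
    exact ⟨⟨h.1.2, h.1.1⟩, h.2⟩
  · rintro ⟨x, y⟩ h
    simp only [ch2, mem_filter, mem_product, mem_range, mem_coe, Set.mem_setOf_eq] at *
    exact ⟨⟨h.1.2, h.1.1⟩, h.2⟩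
  · rintro ⟨x, y⟩ _
    rfl
  · rintro ⟨x, y⟩ _
    rfl

lemma sum_trichotomy (d A B C : ℕ) :
    ∑ p ∈ range d ×ˢ range d, (if p.1 = p.2 then A else if p.1 < p.2 then B else C)
      = d * A + d.choose 2 * B + d.choose 2 * C := by
  rw [Finset.sum_ite, Finset.sum_const, Finset.sum_ite, Finset.sum_const, Finset.sum_const]
  have h1 : ((range d ×ˢ range d).filter (fun p => p.1 = p.2)).card = d := diag_card d
  have h2 : (((range d ×ˢ range d).filter (fun p => ¬p.1 = p.2)).filter (fun p => p.1 < p.2))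
      = ch2 d := by
    rw [Finset.filter_filter]
    apply Finset.filter_congr
    rintro ⟨x, y⟩ _
    simp only [ch2]
    constructor
    · rintro ⟨_, h⟩; exact h
    · intro h; exact ⟨by omega, h⟩
  have h3 : (((range d ×ˢ range d).filter (fun p => ¬p.1 = p.2)).filter (fun p => ¬p.1 < p.2))
      = (range d ×ˢ range d).filter (fun p => p.2 < p.1) := by
    rw [Finset.filter_filter]
    apply Finset.filter_congr
    rintro ⟨x, y⟩ _
    constructor
    · rintro ⟨h1, h2⟩; omega
    · intro h; constructor <;> omega
  rw [h1, h2, h3, ch2_card, gt_card]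
  simp only [smul_eq_mul]
  ring

lemma Nset_card (d m : ℕ) (hd : 0 < d) :
    (Nset (d * m) d).card
      = d * m.choose 4 + d.choose 2 * ((m+2).choose 4) + d.choose 2 * ((m+1).choose 4) := by
  rw [Finset.card_eq_sum_card_fiberwise (f := fun v => (v.1 % d, v.2.1 % d))
    (t := range d ×ˢ range d) (fun v _ => by simp [Finset.mem_product, Nat.mod_lt _ hd])]
  rw [← sum_trichotomy d (m.choose 4) ((m+2).choose 4) ((m+1).choose 4)]
  apply Finset.sum_congr rfl
  rintro ⟨r, s⟩ hp
  simp only [mem_product, mem_range] at hp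
  rw [fiber_card d m hp.1 hp.2]
  rcases lt_trichotomy r s with h | h | h
  · have h1 : ¬ s < r := by omega
    have h2 : ¬ r = s := by omega
    simp only [if_pos h, if_neg h1, if_neg h2]
    norm_num
  · subst h
    simp only [lt_irrefl, if_neg, if_pos, ite_false, ite_true]
    norm_num
  · have h1 : ¬ r < s := by omega
    have h2 : ¬ r = s := by omega
    simp only [if_pos h, if_neg h1, if_neg h2]
    norm_num

lemma moebius_sum (N a b : ℕ) (hN : N ≠ 0) :
    ∑ e ∈ N.divisors,
        ((ArithmeticFunction.moebius e : ℤ) : ℚ) * (if e ∣ a ∧ e ∣ b then 1 else 0)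
      = if Nat.gcd (Nat.gcd a b) N = 1 then 1 else 0 := by
  have h1 : ∀ e ∈ N.divisors,
      ((ArithmeticFunction.moebius e : ℤ) : ℚ) * (if e ∣ a ∧ e ∣ b then 1 else 0)
      = if e ∣ a ∧ e ∣ b then ((ArithmeticFunction.moebius e : ℤ) : ℚ) else 0 := by
    intro e _
    rw [mul_ite, mul_one, mul_zero]
  rw [Finset.sum_congr rfl h1, ← Finset.sum_filter]
  have h2 : N.divisors.filter (fun e => e ∣ a ∧ e ∣ b) = (Nat.gcd (Nat.gcd a b) N).divisors := by
    ext e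
    simp only [Nat.mem_divisors, Finset.mem_filter, Nat.dvd_gcd_iff]
    constructor
    · rintro ⟨⟨hdN, _⟩, hda, hdb⟩
      refine ⟨⟨⟨hda, hdb⟩, hdN⟩, ?_⟩
      rw [Ne, Nat.gcd_eq_zero_iff]
      rintro ⟨-, h⟩
      exact hN h
    · rintro ⟨⟨⟨hda, hdb⟩, hdN⟩, -⟩
      exact ⟨⟨hdN, hN⟩, hda, hdb⟩
  rw [h2]
  have h3 : (∑ e ∈ (Nat.gcd (Nat.gcd a b) N).divisors, (ArithmeticFunction.moebius e : ℤ))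
      = if Nat.gcd (Nat.gcd a b) N = 1 then 1 else 0 := by
    rw [← ArithmeticFunction.coe_mul_zeta_apply, ArithmeticFunction.moebius_mul_coe_zeta]
    exact ArithmeticFunction.one_apply
  have h4 : (∑ e ∈ (Nat.gcd (Nat.gcd a b) N).divisors,
      ((ArithmeticFunction.moebius e : ℤ) : ℚ))
      = (((∑ e ∈ (Nat.gcd (Nat.gcd a b) N).divisors, (ArithmeticFunction.moebius e : ℤ)) : ℤ) : ℚ) := by
    push_cast
    rfl
  rw [h4, h3]
  split <;> norm_num

def Qn (n : ℕ) : Finset (ℕ × ℕ × ℕ × ℕ) :=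
  (range n ×ˢ range n ×ˢ range n ×ˢ range n).filter
    fun v => v.1 < v.2.1 ∧ v.2.1 < v.2.2.1 ∧ v.2.2.1 < v.2.2.2 ∧
      Nat.gcd (Nat.gcd (v.2.2.1 - v.1) (v.2.2.2 - v.2.1)) n = 1

lemma step2 (n : ℕ) (hn : n ≠ 0) :
    ((Qn n).card : ℚ)
      = ∑ e ∈ n.divisors,
          ((ArithmeticFunction.moebius e : ℤ) : ℚ) * ((Nset n e).card : ℚ) := by
  have hrw : ∀ e ∈ n.divisors,
      ((ArithmeticFunction.moebius e : ℤ) : ℚ) * ((Nset n e).card : ℚ)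
      = ∑ v ∈ range n ×ˢ range n ×ˢ range n ×ˢ range n,
          ((ArithmeticFunction.moebius e : ℤ) : ℚ) *
            (if v.1 < v.2.1 ∧ v.2.1 < v.2.2.1 ∧ v.2.2.1 < v.2.2.2 ∧
                e ∣ v.2.2.1 - v.1 ∧ e ∣ v.2.2.2 - v.2.1 then 1 else 0) := by
    intro e _
    rw [Nset, Finset.card_filter]
    push_cast
    rw [Finset.mul_sum]
  rw [Finset.sum_congr rfl hrw, Finset.sum_comm, Qn, Finset.card_filter]
  push_cast
  apply Finset.sum_congr rfl
  intro v _
  by_cases hC : v.1 < v.2.1 ∧ v.2.1 < v.2.2.1 ∧ v.2.2.1 < v.2.2.2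
  · obtain ⟨h1, h2, h3⟩ := hC
    simp only [h1, h2, h3, true_and]
    exact (moebius_sum n _ _ hn).symm
  · rw [if_neg (fun h => hC ⟨h.1, h.2.1, h.2.2.1⟩)]
    rw [Finset.sum_eq_zero]
    intro e _
    rw [if_neg (fun h => hC ⟨h.1, h.2.1, h.2.2.1⟩), mul_zero]

lemma moebius_divisor_sum_zero (n : ℕ) (hn : 2 ≤ n) :
    ∑ e ∈ n.divisors, ((ArithmeticFunction.moebius e : ℤ) : ℚ) = 0 := by
  have h : (∑ e ∈ n.divisors, (ArithmeticFunction.moebius e : ℤ)) = 0 := by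
    rw [← ArithmeticFunction.coe_mul_zeta_apply, ArithmeticFunction.moebius_mul_coe_zeta,
      ArithmeticFunction.one_apply_ne (by omega)]
  exact_mod_cast h

lemma cast_choose_two (x : ℕ) : ((x.choose 2 : ℕ) : ℚ) = x * ((x:ℚ) - 1) / 2 := by
  induction x with
  | zero => simp
  | succ x ih =>
    rw [Nat.choose_succ_succ]
    push_cast
    rw [ih, Nat.choose_one_right]
    push_cast
    ring

lemma cast_choose_three (x : ℕ) : ((x.choose 3 : ℕ) : ℚ)
    = x * ((x:ℚ) - 1) * ((x:ℚ) - 2) / 6 := by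
  induction x with
  | zero => simp
  | succ x ih =>
    rw [Nat.choose_succ_succ]
    push_cast
    rw [ih, cast_choose_two]
    ring

lemma cast_choose_four (x : ℕ) : ((x.choose 4 : ℕ) : ℚ)
    = x * ((x:ℚ) - 1) * ((x:ℚ) - 2) * ((x:ℚ) - 3) / 24 := by
  induction x with
  | zero => simp
  | succ x ih =>
    rw [Nat.choose_succ_succ]
    push_cast
    rw [ih, cast_choose_three]
    ring

lemma jordan_sum (k n : ℕ) (hn : n ≠ 0) :
    ∑ e ∈ n.divisors, ((ArithmeticFunction.moebius e : ℤ) : ℚ) * ((n / e : ℕ) : ℚ) ^ k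
      = jordanTotient k n := by
  classical
  rw [← Finset.sum_filter_add_sum_filter_not n.divisors Squarefree]
  have hz : ∑ e ∈ n.divisors.filter (fun e => ¬ Squarefree e),
      ((ArithmeticFunction.moebius e : ℤ) : ℚ) * ((n / e : ℕ) : ℚ) ^ k = 0 := by
    apply Finset.sum_eq_zero
    intro e he
    rw [Finset.mem_filter] at he
    rw [ArithmeticFunction.moebius_eq_zero_of_not_squarefree he.2]
    simp
  rw [hz, add_zero, Nat.sum_divisors_filter_squarefree hn]
  have hidx : (UniqueFactorizationMonoid.normalizedFactors n).toFinset = n.primeFactors := by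
    rw [Nat.factors_eq]
    simp [Nat.toFinset_factors]
  rw [hidx, jordanTotient]
  have hexp : ∏ p ∈ n.primeFactors, (1 - 1/(p:ℚ)^k)
      = ∑ t ∈ n.primeFactors.powerset, ∏ p ∈ t, (-(1/(p:ℚ)^k)) := by
    have h : ∀ p ∈ n.primeFactors, (1 - 1/(p:ℚ)^k) = (-(1/(p:ℚ)^k) + 1) := by
      intro p _; ring
    rw [Finset.prod_congr rfl h, Finset.prod_add]
    apply Finset.sum_congr rfl
    intro t _
    rw [Finset.prod_const_one, mul_one]
  rw [hexp, Finset.mul_sum]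
  apply Finset.sum_congr rfl
  intro t ht
  rw [Finset.mem_powerset] at ht
  have hprodval : t.val.prod = ∏ p ∈ t, p := by
    rw [Finset.prod_eq_multiset_prod, Multiset.map_id']
  rw [hprodval]
  set d := ∏ p ∈ t, p with hd
  have hdvd : d ∣ n :=
    dvd_trans (Finset.prod_dvd_prod_of_subset _ _ _ ht) (Nat.prod_primeFactors_dvd n)
  have hdne : d ≠ 0 := fun h => hn (by simpa [h] using hdvd)
  have hmu : (ArithmeticFunction.moebius d : ℤ) = (-1) ^ t.card := by
    rw [hd, ArithmeticFunction.IsMultiplicative.map_prod_of_subset_primeFactors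
      ArithmeticFunction.isMultiplicative_moebius n t ht,
      Finset.prod_congr rfl
        (fun p hp => ArithmeticFunction.moebius_apply_prime
          (Nat.prime_of_mem_primeFactors (ht hp))),
      Finset.prod_const]
  have hcast : ((n / d : ℕ) : ℚ) = (n : ℚ) / (d : ℚ) :=
    Nat.cast_div hdvd (by exact_mod_cast hdne)
  have hprod : ∏ p ∈ t, (-(1/(p:ℚ)^k)) = (-1) ^ t.card * (1 / (d:ℚ)^k) := by
    have h : ∀ p ∈ t, (-(1/(p:ℚ)^k)) = (-1) * (1/(p:ℚ)^k) := by intro p _; ring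
    rw [Finset.prod_congr rfl h, Finset.prod_mul_distrib, Finset.prod_const]
    congr 1
    rw [Finset.prod_div_distrib, Finset.prod_const_one, Finset.prod_pow, hd]
    push_cast
    rfl
  have hdQ : ((d:ℚ))^k ≠ 0 := by
    apply pow_ne_zero
    exact_mod_cast hdne
  rw [hmu, hcast, hprod]
  push_cast
  rw [div_pow]
  field_simp

theorem quadruple_count_diagram_A (n : ℕ) (hn : 2 ≤ n) :
    (((Finset.Icc (1 : ℤ) n ×ˢ Finset.Icc (1 : ℤ) n ×ˢ Finset.Icc (1 : ℤ) n ×ˢ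
        Finset.Icc (1 : ℤ) n).filter
      (fun v => v.1 < v.2.1 ∧ v.2.1 < v.2.2.1 ∧ v.2.2.1 < v.2.2.2 ∧
        Int.gcd (Int.gcd (v.2.2.1 - v.1) (v.2.2.2 - v.2.1) : ℤ) (n : ℤ) = 1)).card : ℚ)
    = (1 / 2) * n * jordanTotient 1 n + (1 / 24) * n * ((n : ℚ) - 6) * jordanTotient 2 n := by
  classical
  have hn0 : n ≠ 0 := by omega
  have htrans : ((Finset.Icc (1 : ℤ) n ×ˢ Finset.Icc (1 : ℤ) n ×ˢ Finset.Icc (1 : ℤ) n ×ˢ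
      Finset.Icc (1 : ℤ) n).filter
      (fun v => v.1 < v.2.1 ∧ v.2.1 < v.2.2.1 ∧ v.2.2.1 < v.2.2.2 ∧
        Int.gcd (Int.gcd (v.2.2.1 - v.1) (v.2.2.2 - v.2.1) : ℤ) (n : ℤ) = 1)).card
      = (Qn n).card := by
    refine Finset.card_bij'
      (fun v _ => ((v.1 - 1).toNat, (v.2.1 - 1).toNat, (v.2.2.1 - 1).toNat, (v.2.2.2 - 1).toNat))
      (fun w _ => (((w.1 : ℤ) + 1, (w.2.1 : ℤ) + 1, (w.2.2.1 : ℤ) + 1, (w.2.2.2 : ℤ) + 1)))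
      ?_ ?_ ?_ ?_
    · rintro ⟨x, y, z, t⟩ hv
      simp only [mem_filter, mem_product, Finset.mem_Icc] at hv
      obtain ⟨⟨⟨hx1, hx2⟩, ⟨hy1, hy2⟩, ⟨hz1, hz2⟩, ht1, ht2⟩, hxy, hyz, hzt, hg⟩ := hv
      simp only [Qn, mem_filter, mem_product, mem_range]
      have e1 : z - x = (((z - 1).toNat - (x - 1).toNat : ℕ) : ℤ) := by omega
      have e2 : t - y = (((t - 1).toNat - (y - 1).toNat : ℕ) : ℤ) := by omega
      rw [e1, e2] at hg
      simp only [Int.gcd_natCast_natCast] at hg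
      refine ⟨⟨by omega, by omega, by omega, by omega⟩, by omega, by omega, by omega, hg⟩
    · rintro ⟨a, b, c, e⟩ hw
      simp only [Qn, mem_filter, mem_product, mem_range] at hw
      obtain ⟨⟨ha, hb, hc, he⟩, hab, hbc, hce, hg⟩ := hw
      simp only [mem_filter, mem_product, Finset.mem_Icc]
      have e1 : ((c : ℤ) + 1) - ((a : ℤ) + 1) = ((c - a : ℕ) : ℤ) := by omega
      have e2 : ((e : ℤ) + 1) - ((b : ℤ) + 1) = ((e - b : ℕ) : ℤ) := by omega
      refine ⟨⟨⟨by omega, by omega⟩, ⟨by omega, by omega⟩, ⟨by omega, by omega⟩, by omega,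
        by omega⟩, by omega, by omega, by omega, ?_⟩
      rw [e1, e2]
      simp only [Int.gcd_natCast_natCast]
      exact hg
    · rintro ⟨x, y, z, t⟩ hv
      simp only [mem_filter, mem_product, Finset.mem_Icc] at hv
      simp only [Prod.mk.injEq]
      refine ⟨by omega, by omega, by omega, by omega⟩
    · rintro ⟨a, b, c, e⟩ _
      simp only [Prod.mk.injEq]
      refine ⟨by omega, by omega, by omega, by omega⟩
  rw [htrans, step2 n hn0]
  have hper : ∀ e ∈ n.divisors,
      ((ArithmeticFunction.moebius e : ℤ) : ℚ) * ((Nset n e).card : ℚ)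
      = (n : ℚ) * ((n : ℚ) - 6) / 24 *
          (((ArithmeticFunction.moebius e : ℤ) : ℚ) * ((n / e : ℕ) : ℚ) ^ 2)
        + (n : ℚ) * 12 / 24 *
          (((ArithmeticFunction.moebius e : ℤ) : ℚ) * ((n / e : ℕ) : ℚ) ^ 1)
        - (n : ℚ) * ((n : ℚ) + 6) / 24 * ((ArithmeticFunction.moebius e : ℤ) : ℚ) := by
    intro e he
    obtain ⟨hdvd, -⟩ := Nat.mem_divisors.mp he
    have hepos : 0 < e := Nat.pos_of_dvd_of_pos hdvd (by omega)
    have hnm : n = e * (n / e) := (Nat.mul_div_cancel' hdvd).symm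
    rw [show Nset n e = Nset (e * (n / e)) e from by rw [← hnm]]
    rw [Nset_card e (n / e) hepos]
    have hnQ : (n : ℚ) = (e : ℚ) * ((n / e : ℕ) : ℚ) := by exact_mod_cast congrArg Nat.cast hnm
    push_cast
    rw [cast_choose_two, cast_choose_four, cast_choose_four, cast_choose_four, hnQ]
    push_cast
    ring
  rw [Finset.sum_congr rfl hper]
  rw [Finset.sum_sub_distrib, Finset.sum_add_distrib, ← Finset.mul_sum, ← Finset.mul_sum,
    ← Finset.mul_sum]
  rw [jordan_sum 2 n hn0, jordan_sum 1 n hn0, moebius_divisor_sum_zero n hn]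
  ring
end

section
/- For every positive integer n and every positive divisor d of n, the number of quadruples (x, y, z, t) of integers with 1 ≤ x < y < z < t ≤ n, d ∣ (z − x) and d ∣ (t − y) equals C(d, 2)·C(n/d, 2) + 3·C(d, 2)·C(n/d, 3) + d²·C(n/d, 4), where C(a, b) denotes the binomial coefficient a choose b. -/
open Finset

private lemma sum_choose_range (m k : ℕ) :
    ∑ c ∈ range m, c.choose k = m.choose (k + 1) := by
  induction m with
  | zero => simp
  | succ m ih =>
      rw [sum_range_succ, ih, Nat.choose_succ_succ' m k]
      omega

private lemma card_pairs (m : ℕ) :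
    ((range m ×ˢ range m).filter (fun p => p.1 < p.2)).card = m.choose 2 := by
  rw [Finset.card_eq_sum_card_fiberwise (f := fun p => p.2) (t := range m)
    (by intro x hx; simp only [mem_coe, mem_filter, mem_product, mem_range] at hx; exact mem_range.mpr hx.1.2)]
  have step : ∀ b ∈ range m,
      ((range m ×ˢ range m).filter (fun p => p.1 < p.2) |>.filter (fun p => p.2 = b)).card
        = b.choose 1 := by
    intro b hb
    simp only [mem_range] at hb
    rw [Nat.choose_one_right]
    refine Eq.trans (Finset.card_nbij' (i := fun p => p.1) (j := fun a => (a, b))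
      ?_ ?_ ?_ ?_) (card_range b)
    · intro p hp; simp only [mem_coe, mem_filter, mem_product, mem_range] at hp ⊢; omega
    · intro a ha
      simp only [mem_coe, mem_range] at ha
      simp only [mem_coe, mem_filter, mem_product, mem_range]
      exact ⟨⟨⟨ha.trans hb, hb⟩, ha⟩, trivial⟩
    · intro p hp
      simp only [mem_coe, mem_filter] at hp
      exact Prod.ext rfl hp.2.symm
    · intro a ha; rfl
  rw [Finset.sum_congr rfl step, sum_choose_range]

private lemma card_triples (m : ℕ) :
    ((range m ×ˢ range m ×ˢ range m).filter
      (fun p : ℕ × ℕ × ℕ => p.1 < p.2.1 ∧ p.2.1 < p.2.2)).card = m.choose 3 := by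
  rw [Finset.card_eq_sum_card_fiberwise (f := fun p => p.2.2) (t := range m)
    (by intro x hx; simp only [mem_coe, mem_filter, mem_product, mem_range] at hx
        exact mem_range.mpr hx.1.2.2)]
  have step : ∀ c ∈ range m,
      ((range m ×ˢ range m ×ˢ range m).filter
        (fun p : ℕ × ℕ × ℕ => p.1 < p.2.1 ∧ p.2.1 < p.2.2)
        |>.filter (fun p => p.2.2 = c)).card = c.choose 2 := by
    intro c hc
    simp only [mem_range] at hc
    rw [← card_pairs c]
    refine Finset.card_nbij' (i := fun p => (p.1, p.2.1)) (j := fun q => (q.1, q.2, c))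
      ?_ ?_ ?_ ?_
    · intro p hp; simp only [mem_coe, mem_filter, mem_product, mem_range] at hp ⊢; omega
    · intro q hq
      simp only [mem_coe, mem_filter, mem_product, mem_range] at hq
      simp only [mem_coe, mem_filter, mem_product, mem_range]
      refine ⟨⟨⟨?_, ?_, ?_⟩, ?_, ?_⟩, trivial⟩ <;> omega
    · rintro ⟨a, b, c'⟩ hp
      simp only [mem_coe, mem_filter] at hp
      simp [hp.2]
    · intro q hq; rfl
  rw [Finset.sum_congr rfl step, sum_choose_range]

private lemma card_quads (m : ℕ) :
    ((range m ×ˢ range m ×ˢ range m ×ˢ range m).filter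
      (fun p : ℕ × ℕ × ℕ × ℕ => p.1 < p.2.1 ∧ p.2.1 < p.2.2.1 ∧ p.2.2.1 < p.2.2.2)).card
      = m.choose 4 := by
  rw [Finset.card_eq_sum_card_fiberwise (f := fun p => p.2.2.2) (t := range m)
    (by intro x hx; simp only [mem_coe, mem_filter, mem_product, mem_range] at hx
        exact mem_range.mpr hx.1.2.2.2)]
  have step : ∀ c ∈ range m,
      ((range m ×ˢ range m ×ˢ range m ×ˢ range m).filter
        (fun p : ℕ × ℕ × ℕ × ℕ => p.1 < p.2.1 ∧ p.2.1 < p.2.2.1 ∧ p.2.2.1 < p.2.2.2)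
        |>.filter (fun p => p.2.2.2 = c)).card = c.choose 3 := by
    intro c hc
    simp only [mem_range] at hc
    rw [← card_triples c]
    refine Finset.card_nbij' (i := fun p => (p.1, p.2.1, p.2.2.1))
      (j := fun q => (q.1, q.2.1, q.2.2, c)) ?_ ?_ ?_ ?_
    · intro p hp; simp only [mem_coe, mem_filter, mem_product, mem_range] at hp ⊢; omega
    · intro q hq
      simp only [mem_coe, mem_filter, mem_product, mem_range] at hq
      simp only [mem_coe, mem_filter, mem_product, mem_range]
      refine ⟨⟨⟨?_, ?_, ?_, ?_⟩, ?_, ?_, ?_⟩, trivial⟩ <;> omega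
    · rintro ⟨a, b, c', d'⟩ hp
      simp only [mem_coe, mem_filter] at hp
      simp [hp.2]
    · intro q hq; rfl
  rw [Finset.sum_congr rfl step, sum_choose_range]

private lemma card_eq_lt_lt (m : ℕ) :
    ((range m ×ˢ range m ×ˢ range m ×ˢ range m).filter
      (fun p : ℕ × ℕ × ℕ × ℕ => p.1 = p.2.1 ∧ p.2.1 < p.2.2.1 ∧ p.2.2.1 < p.2.2.2)).card
      = m.choose 3 := by
  rw [← card_triples m]
  refine Finset.card_nbij' (i := fun p => p.2) (j := fun q => (q.1, q)) ?_ ?_ ?_ ?_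
  · intro p hp; simp only [mem_coe, mem_filter, mem_product, mem_range] at hp ⊢; omega
  · intro q hq
    simp only [mem_coe, mem_filter, mem_product, mem_range] at hq
    simp only [mem_coe, mem_filter, mem_product, mem_range]
    refine ⟨⟨?_, ?_, ?_, ?_⟩, trivial, ?_, ?_⟩ <;> omega
  · rintro ⟨a, b, c, d⟩ hp
    simp only [mem_coe, mem_filter] at hp
    simp [hp.2.1]
  · intro q hq; rfl

private lemma card_lt_eq_lt (m : ℕ) :
    ((range m ×ˢ range m ×ˢ range m ×ˢ range m).filter
      (fun p : ℕ × ℕ × ℕ × ℕ => p.1 < p.2.1 ∧ p.2.1 = p.2.2.1 ∧ p.2.2.1 < p.2.2.2)).card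
      = m.choose 3 := by
  rw [← card_triples m]
  refine Finset.card_nbij' (i := fun p => (p.1, p.2.1, p.2.2.2))
    (j := fun q => (q.1, q.2.1, q.2.1, q.2.2)) ?_ ?_ ?_ ?_
  · intro p hp; simp only [mem_coe, mem_filter, mem_product, mem_range] at hp ⊢; omega
  · intro q hq
    simp only [mem_coe, mem_filter, mem_product, mem_range] at hq
    simp only [mem_coe, mem_filter, mem_product, mem_range]
    refine ⟨⟨?_, ?_, ?_, ?_⟩, ?_, trivial, ?_⟩ <;> omega
  · rintro ⟨a, b, c, d⟩ hp
    simp only [mem_coe, mem_filter] at hp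
    simp [hp.2.2.1]
  · intro q hq; rfl

private lemma card_lt_lt_eq (m : ℕ) :
    ((range m ×ˢ range m ×ˢ range m ×ˢ range m).filter
      (fun p : ℕ × ℕ × ℕ × ℕ => p.1 < p.2.1 ∧ p.2.1 < p.2.2.1 ∧ p.2.2.1 = p.2.2.2)).card
      = m.choose 3 := by
  rw [← card_triples m]
  refine Finset.card_nbij' (i := fun p => (p.1, p.2.1, p.2.2.1))
    (j := fun q => (q.1, q.2.1, q.2.2, q.2.2)) ?_ ?_ ?_ ?_
  · intro p hp; simp only [mem_coe, mem_filter, mem_product, mem_range] at hp ⊢; omega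
  · intro q hq
    simp only [mem_coe, mem_filter, mem_product, mem_range] at hq
    simp only [mem_coe, mem_filter, mem_product, mem_range]
    refine ⟨⟨?_, ?_, ?_, ?_⟩, ?_, ?_, trivial⟩ <;> omega
  · rintro ⟨a, b, c, d⟩ hp
    simp only [mem_coe, mem_filter] at hp
    simp [hp.2.2.2]
  · intro q hq; rfl

private lemma card_eq_lt_eq (m : ℕ) :
    ((range m ×ˢ range m ×ˢ range m ×ˢ range m).filter
      (fun p : ℕ × ℕ × ℕ × ℕ => p.1 = p.2.1 ∧ p.2.1 < p.2.2.1 ∧ p.2.2.1 = p.2.2.2)).card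
      = m.choose 2 := by
  rw [← card_pairs m]
  refine Finset.card_nbij' (i := fun p => (p.1, p.2.2.1))
    (j := fun q => (q.1, q.1, q.2, q.2)) ?_ ?_ ?_ ?_
  · intro p hp; simp only [mem_coe, mem_filter, mem_product, mem_range] at hp ⊢; omega
  · intro q hq
    simp only [mem_coe, mem_filter, mem_product, mem_range] at hq
    simp only [mem_coe, mem_filter, mem_product, mem_range]
    refine ⟨⟨?_, ?_, ?_, ?_⟩, trivial, ?_, trivial⟩ <;> omega
  · rintro ⟨a, b, c, d⟩ hp
    simp only [mem_coe, mem_filter] at hp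
    simp [hp.2.1, hp.2.2.2]
  · intro q hq; rfl

private lemma card_pairs' (m : ℕ) :
    ((range m ×ˢ range m).filter (fun p => p.2 < p.1)).card = m.choose 2 := by
  rw [← card_pairs m]
  refine Finset.card_nbij' (i := fun p => (p.2, p.1)) (j := fun p => (p.2, p.1)) ?_ ?_ ?_ ?_
  · intro p hp; simp only [mem_coe, mem_filter, mem_product, mem_range] at hp ⊢; omega
  · intro p hp; simp only [mem_coe, mem_filter, mem_product, mem_range] at hp ⊢; omega
  · intro p _; rfl
  · intro p _; rfl


private lemma lex_iff (d q1 q2 r1 r2 : ℤ) (hd : 0 < d) (h1 : 0 ≤ r1) (h2 : r1 < d)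
    (h3 : 0 ≤ r2) (h4 : r2 < d) :
    d * q1 + r1 < d * q2 + r2 ↔ (q1 < q2 ∨ (q1 = q2 ∧ r1 < r2)) := by
  have key : ∀ a b : ℤ, a < b → d * a + d ≤ d * b := by
    intro a b hab
    have h := mul_le_mul_of_nonneg_left (by omega : a + 1 ≤ b) hd.le
    nlinarith
  constructor
  · intro h
    rcases lt_trichotomy q1 q2 with hq | hq | hq
    · exact Or.inl hq
    · subst hq; exact Or.inr ⟨rfl, by linarith⟩
    · exact absurd (key _ _ hq) (by linarith)
  · rintro (hq | ⟨rfl, hr⟩)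
    · have := key _ _ hq; linarith
    · linarith

private lemma dvd_iff' (d q1 q2 r1 r2 : ℤ) (hd : 0 < d) (h1 : 0 ≤ r1) (h2 : r1 < d)
    (h3 : 0 ≤ r2) (h4 : r2 < d) :
    d ∣ ((d * q2 + r2 + 1) - (d * q1 + r1 + 1)) ↔ r1 = r2 := by
  constructor
  · intro h
    have h5 : d ∣ (r2 - r1) := by
      have e : r2 - r1 = ((d * q2 + r2 + 1) - (d * q1 + r1 + 1)) - d * (q2 - q1) := by ring
      rw [e]
      exact dvd_sub h (Dvd.intro _ rfl)
    have := Int.eq_zero_of_abs_lt_dvd h5 (abs_lt.mpr ⟨by linarith, by linarith⟩)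
    linarith
  · rintro rfl
    exact ⟨q2 - q1, by ring⟩

private lemma decomp_div (d q r : ℕ) (hd : 0 < d) (hr : r < d) :
    (((d : ℤ) * q + r + 1 - 1) / d).toNat = q ∧ (((d : ℤ) * q + r + 1 - 1) % d).toNat = r := by
  have hd' : (0 : ℤ) < d := by exact_mod_cast hd
  have e : ((d : ℤ) * q + r + 1 - 1) = (r : ℤ) + (d : ℤ) * q := by ring
  rw [e]
  constructor
  · rw [Int.add_mul_ediv_left _ _ (by omega : (d:ℤ) ≠ 0),
      Int.ediv_eq_zero_of_lt (by positivity) (by exact_mod_cast hr), zero_add, Int.toNat_natCast]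
  · rw [Int.add_mul_emod_self_left, Int.emod_eq_of_lt (by positivity) (by exact_mod_cast hr),
      Int.toNat_natCast]

private lemma count_E (m d : ℕ) :
    (((range m ×ˢ range m ×ˢ range m ×ˢ range m) ×ˢ (range d ×ˢ range d)).filter
      (fun w : (ℕ × ℕ × ℕ × ℕ) × (ℕ × ℕ) =>
        (w.1.1 < w.1.2.1 ∨ (w.1.1 = w.1.2.1 ∧ w.2.1 < w.2.2)) ∧
        (w.1.2.1 < w.1.2.2.1 ∨ (w.1.2.1 = w.1.2.2.1 ∧ w.2.2 < w.2.1)) ∧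
        (w.1.2.2.1 < w.1.2.2.2 ∨ (w.1.2.2.1 = w.1.2.2.2 ∧ w.2.1 < w.2.2)))).card
    = d.choose 2 * m.choose 2 + 3 * (d.choose 2 * m.choose 3) + d ^ 2 * m.choose 4 := by
  classical
  set Ω := (range m ×ˢ range m ×ˢ range m ×ˢ range m) ×ˢ (range d ×ˢ range d) with hΩ
  set P : (ℕ × ℕ × ℕ × ℕ) × (ℕ × ℕ) → Prop := fun w =>
        (w.1.1 < w.1.2.1 ∨ (w.1.1 = w.1.2.1 ∧ w.2.1 < w.2.2)) ∧
        (w.1.2.1 < w.1.2.2.1 ∨ (w.1.2.1 = w.1.2.2.1 ∧ w.2.2 < w.2.1)) ∧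
        (w.1.2.2.1 < w.1.2.2.2 ∨ (w.1.2.2.1 = w.1.2.2.2 ∧ w.2.1 < w.2.2)) with hP
  -- split helper
  have split : ∀ (p q : (ℕ × ℕ × ℕ × ℕ) × (ℕ × ℕ) → Prop) (_ : DecidablePred p)
      (_ : DecidablePred q),
      (Ω.filter p).card = (Ω.filter (fun w => p w ∧ q w)).card
        + (Ω.filter (fun w => p w ∧ ¬ q w)).card := by
    intro p q _ _
    rw [← Finset.card_filter_add_card_filter_not (s := Ω.filter p) (p := q),
      Finset.filter_filter, Finset.filter_filter]
  rw [split P (fun w => w.1.1 < w.1.2.1) inferInstance inferInstance]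
  rw [split (fun w => P w ∧ w.1.1 < w.1.2.1) (fun w => w.1.2.1 < w.1.2.2.1)
    inferInstance inferInstance]
  rw [split (fun w => P w ∧ ¬ w.1.1 < w.1.2.1) (fun w => w.1.2.1 < w.1.2.2.1)
    inferInstance inferInstance]
  rw [split (fun w => (P w ∧ w.1.1 < w.1.2.1) ∧ w.1.2.1 < w.1.2.2.1)
    (fun w => w.1.2.2.1 < w.1.2.2.2) inferInstance inferInstance]
  rw [split (fun w => (P w ∧ w.1.1 < w.1.2.1) ∧ ¬ w.1.2.1 < w.1.2.2.1)
    (fun w => w.1.2.2.1 < w.1.2.2.2) inferInstance inferInstance]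
  rw [split (fun w => (P w ∧ ¬ w.1.1 < w.1.2.1) ∧ w.1.2.1 < w.1.2.2.1)
    (fun w => w.1.2.2.1 < w.1.2.2.2) inferInstance inferInstance]
  -- now 8 leaves; identify each
  have L1 : (Ω.filter (fun w => ((P w ∧ w.1.1 < w.1.2.1) ∧ w.1.2.1 < w.1.2.2.1)
      ∧ w.1.2.2.1 < w.1.2.2.2)).card = m.choose 4 * d ^ 2 := by
    rw [Finset.filter_congr (q := fun w =>
        (w.1.1 < w.1.2.1 ∧ w.1.2.1 < w.1.2.2.1 ∧ w.1.2.2.1 < w.1.2.2.2) ∧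
        (fun _ : ℕ × ℕ => True) w.2) (fun w _ => by simp only [hP, and_true]; omega)]
    rw [hΩ, Finset.filter_product
        (fun q : ℕ × ℕ × ℕ × ℕ => q.1 < q.2.1 ∧ q.2.1 < q.2.2.1 ∧ q.2.2.1 < q.2.2.2)
        (fun _ : ℕ × ℕ => True),
      Finset.card_product, card_quads, Finset.filter_true, Finset.card_product,
      Finset.card_range]
    ring
  have L2 : (Ω.filter (fun w => ((P w ∧ w.1.1 < w.1.2.1) ∧ w.1.2.1 < w.1.2.2.1)
      ∧ ¬ w.1.2.2.1 < w.1.2.2.2)).card = m.choose 3 * d.choose 2 := by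
    rw [Finset.filter_congr (q := fun w =>
        (w.1.1 < w.1.2.1 ∧ w.1.2.1 < w.1.2.2.1 ∧ w.1.2.2.1 = w.1.2.2.2) ∧
        w.2.1 < w.2.2) (fun w _ => by simp only [hP, and_true]; omega)]
    rw [hΩ, Finset.filter_product
        (fun q : ℕ × ℕ × ℕ × ℕ => q.1 < q.2.1 ∧ q.2.1 < q.2.2.1 ∧ q.2.2.1 = q.2.2.2)
        (fun r : ℕ × ℕ => r.1 < r.2),
      Finset.card_product, card_lt_lt_eq, card_pairs]
  have L3 : (Ω.filter (fun w => ((P w ∧ w.1.1 < w.1.2.1) ∧ ¬ w.1.2.1 < w.1.2.2.1)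
      ∧ w.1.2.2.1 < w.1.2.2.2)).card = m.choose 3 * d.choose 2 := by
    rw [Finset.filter_congr (q := fun w =>
        (w.1.1 < w.1.2.1 ∧ w.1.2.1 = w.1.2.2.1 ∧ w.1.2.2.1 < w.1.2.2.2) ∧
        w.2.2 < w.2.1) (fun w _ => by simp only [hP, and_true]; omega)]
    rw [hΩ, Finset.filter_product
        (fun q : ℕ × ℕ × ℕ × ℕ => q.1 < q.2.1 ∧ q.2.1 = q.2.2.1 ∧ q.2.2.1 < q.2.2.2)
        (fun r : ℕ × ℕ => r.2 < r.1),
      Finset.card_product, card_lt_eq_lt, card_pairs']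
  have L4 : (Ω.filter (fun w => ((P w ∧ w.1.1 < w.1.2.1) ∧ ¬ w.1.2.1 < w.1.2.2.1)
      ∧ ¬ w.1.2.2.1 < w.1.2.2.2)).card = 0 := by
    rw [Finset.card_eq_zero, Finset.filter_eq_empty_iff]
    intro w _
    simp only [hP]; omega
  have L5 : (Ω.filter (fun w => ((P w ∧ ¬ w.1.1 < w.1.2.1) ∧ w.1.2.1 < w.1.2.2.1)
      ∧ w.1.2.2.1 < w.1.2.2.2)).card = m.choose 3 * d.choose 2 := by
    rw [Finset.filter_congr (q := fun w =>
        (w.1.1 = w.1.2.1 ∧ w.1.2.1 < w.1.2.2.1 ∧ w.1.2.2.1 < w.1.2.2.2) ∧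
        w.2.1 < w.2.2) (fun w _ => by simp only [hP, and_true]; omega)]
    rw [hΩ, Finset.filter_product
        (fun q : ℕ × ℕ × ℕ × ℕ => q.1 = q.2.1 ∧ q.2.1 < q.2.2.1 ∧ q.2.2.1 < q.2.2.2)
        (fun r : ℕ × ℕ => r.1 < r.2),
      Finset.card_product, card_eq_lt_lt, card_pairs]
  have L6 : (Ω.filter (fun w => ((P w ∧ ¬ w.1.1 < w.1.2.1) ∧ w.1.2.1 < w.1.2.2.1)
      ∧ ¬ w.1.2.2.1 < w.1.2.2.2)).card = m.choose 2 * d.choose 2 := by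
    rw [Finset.filter_congr (q := fun w =>
        (w.1.1 = w.1.2.1 ∧ w.1.2.1 < w.1.2.2.1 ∧ w.1.2.2.1 = w.1.2.2.2) ∧
        w.2.1 < w.2.2) (fun w _ => by simp only [hP, and_true]; omega)]
    rw [hΩ, Finset.filter_product
        (fun q : ℕ × ℕ × ℕ × ℕ => q.1 = q.2.1 ∧ q.2.1 < q.2.2.1 ∧ q.2.2.1 = q.2.2.2)
        (fun r : ℕ × ℕ => r.1 < r.2),
      Finset.card_product, card_eq_lt_eq, card_pairs]
  have L7 : (Ω.filter (fun w => (P w ∧ ¬ w.1.1 < w.1.2.1) ∧ ¬ w.1.2.1 < w.1.2.2.1)).card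
      = 0 := by
    rw [Finset.card_eq_zero, Finset.filter_eq_empty_iff]
    intro w _
    simp only [hP]; omega
  rw [L1, L2, L3, L4, L5, L6, L7]
  ring

theorem quadruple_count_with_divisibility (n d : ℕ) (hn : 0 < n) (hd : 0 < d) (hdvd : d ∣ n) :
    ((Finset.Icc (1 : ℤ) n ×ˢ Finset.Icc (1 : ℤ) n ×ˢ Finset.Icc (1 : ℤ) n ×ˢ
        Finset.Icc (1 : ℤ) n).filter
      (fun v => v.1 < v.2.1 ∧ v.2.1 < v.2.2.1 ∧ v.2.2.1 < v.2.2.2 ∧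
        (d : ℤ) ∣ (v.2.2.1 - v.1) ∧ (d : ℤ) ∣ (v.2.2.2 - v.2.1))).card
    = d.choose 2 * (n / d).choose 2 + 3 * (d.choose 2 * (n / d).choose 3) +
      d ^ 2 * (n / d).choose 4 := by
  classical
  set m := n / d with hm
  have hnm : n = d * m := (Nat.mul_div_cancel' hdvd).symm
  have hd' : (0 : ℤ) < d := by exact_mod_cast hd
  have hnZ : (n : ℤ) = (d : ℤ) * m := by exact_mod_cast hnm
  have hm0 : 0 < m := by
    rcases Nat.eq_zero_or_pos m with h | h
    · rw [h, Nat.mul_zero] at hnm; omega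
    · exact h
  -- decomposition of elements of [1, n]
  have key : ∀ a : ℤ, 1 ≤ a → a ≤ (n : ℤ) →
      ∃ q r : ℕ, q < m ∧ r < d ∧ a = (d : ℤ) * q + r + 1 ∧
        ((a - 1) / d).toNat = q ∧ ((a - 1) % d).toNat = r := by
    intro a h1 h2
    have hmod0 : 0 ≤ (a - 1) % d := Int.emod_nonneg _ (by omega)
    have hmod1 : (a - 1) % d < d := Int.emod_lt_of_pos _ hd'
    have hdiv0 : 0 ≤ (a - 1) / d := Int.ediv_nonneg (by omega) hd'.le
    have hdm : (d : ℤ) * ((a - 1) / d) + (a - 1) % d = a - 1 := Int.mul_ediv_add_emod _ _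
    have hdivm : (a - 1) / d < (m : ℤ) := by
      by_contra hcon
      push_neg at hcon
      have h3 := mul_le_mul_of_nonneg_left hcon hd'.le
      have h4 : (d : ℤ) * ((a - 1) / d) ≤ a - 1 := by linarith
      linarith [hnZ ▸ h2]
    refine ⟨((a - 1) / d).toNat, ((a - 1) % d).toNat, ?_, ?_, ?_, rfl, rfl⟩
    · have := (Int.toNat_lt_toNat (m := (m : ℤ)) (by exact_mod_cast hm0)).mpr hdivm
      simpa using this
    · have := (Int.toNat_lt_toNat (m := (d : ℤ)) hd').mpr hmod1
      simpa using this
    · rw [Int.toNat_of_nonneg hdiv0, Int.toNat_of_nonneg hmod0]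
      linarith
  have hcard : ((Finset.Icc (1 : ℤ) n ×ˢ Finset.Icc (1 : ℤ) n ×ˢ Finset.Icc (1 : ℤ) n ×ˢ
        Finset.Icc (1 : ℤ) n).filter
      (fun v => v.1 < v.2.1 ∧ v.2.1 < v.2.2.1 ∧ v.2.2.1 < v.2.2.2 ∧
        (d : ℤ) ∣ (v.2.2.1 - v.1) ∧ (d : ℤ) ∣ (v.2.2.2 - v.2.1))).card
      = (((range m ×ˢ range m ×ˢ range m ×ˢ range m) ×ˢ (range d ×ˢ range d)).filter
      (fun w : (ℕ × ℕ × ℕ × ℕ) × (ℕ × ℕ) =>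
        (w.1.1 < w.1.2.1 ∨ (w.1.1 = w.1.2.1 ∧ w.2.1 < w.2.2)) ∧
        (w.1.2.1 < w.1.2.2.1 ∨ (w.1.2.1 = w.1.2.2.1 ∧ w.2.2 < w.2.1)) ∧
        (w.1.2.2.1 < w.1.2.2.2 ∨ (w.1.2.2.1 = w.1.2.2.2 ∧ w.2.1 < w.2.2)))).card := by
    refine Finset.card_nbij'
      (i := fun v => (((((v.1 - 1) / d).toNat, ((v.2.1 - 1) / d).toNat,
          ((v.2.2.1 - 1) / d).toNat, ((v.2.2.2 - 1) / d).toNat),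
          (((v.1 - 1) % d).toNat, ((v.2.1 - 1) % d).toNat))))
      (j := fun w => ((d : ℤ) * w.1.1 + w.2.1 + 1, (d : ℤ) * w.1.2.1 + w.2.2 + 1,
          (d : ℤ) * w.1.2.2.1 + w.2.1 + 1, (d : ℤ) * w.1.2.2.2 + w.2.2 + 1))
      ?_ ?_ ?_ ?_
    · rintro ⟨x, y, z, t⟩ hv
      simp only [Finset.mem_coe, Finset.mem_filter, Finset.mem_product, Finset.mem_Icc] at hv
      obtain ⟨⟨⟨hx1, hx2⟩, ⟨hy1, hy2⟩, ⟨hz1, hz2⟩, ht1, ht2⟩, hxy, hyz, hzt, hdxz, hdyt⟩ := hv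
      obtain ⟨qx, rx, hqx, hrx, hex, hdx, hmx⟩ := key x hx1 hx2
      obtain ⟨qy, ry, hqy, hry, hey, hdy, hmy⟩ := key y hy1 hy2
      obtain ⟨qz, rz, hqz, hrz, hez, hdz, hmz⟩ := key z hz1 hz2
      obtain ⟨qt, rt, hqt, hrt, het, hdt, hmt⟩ := key t ht1 ht2
      -- residues equalities from divisibility
      have hrxz : rx = rz := by
        rw [hex, hez] at hdxz
        exact_mod_cast (dvd_iff' d qx qz rx rz hd' (by positivity) (by exact_mod_cast hrx)
          (by positivity) (by exact_mod_cast hrz)).mp hdxz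
      have hryt : ry = rt := by
        rw [hey, het] at hdyt
        exact_mod_cast (dvd_iff' d qy qt ry rt hd' (by positivity) (by exact_mod_cast hry)
          (by positivity) (by exact_mod_cast hrt)).mp hdyt
      -- lex facts
      have lxy : (qx : ℤ) < qy ∨ ((qx : ℤ) = qy ∧ (rx : ℤ) < ry) := by
        refine (lex_iff (d : ℤ) qx qy rx ry hd' (by positivity) (by exact_mod_cast hrx)
          (by positivity) (by exact_mod_cast hry)).mp ?_
        rw [hex, hey] at hxy
        linarith
      have lyz : (qy : ℤ) < qz ∨ ((qy : ℤ) = qz ∧ (ry : ℤ) < rz) := by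
        refine (lex_iff (d : ℤ) qy qz ry rz hd' (by positivity) (by exact_mod_cast hry)
          (by positivity) (by exact_mod_cast hrz)).mp ?_
        rw [hey, hez] at hyz
        linarith
      have lzt : (qz : ℤ) < qt ∨ ((qz : ℤ) = qt ∧ (rz : ℤ) < rt) := by
        refine (lex_iff (d : ℤ) qz qt rz rt hd' (by positivity) (by exact_mod_cast hrz)
          (by positivity) (by exact_mod_cast hrt)).mp ?_
        rw [hez, het] at hzt
        linarith
      simp only [Finset.mem_coe, Finset.mem_filter, Finset.mem_product, Finset.mem_range]
      rw [hdx, hmx, hdy, hmy, hdz, hdt]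
      refine ⟨⟨⟨hqx, hqy, hqz, hqt⟩, hrx, hry⟩, ?_, ?_, ?_⟩
      · exact_mod_cast lxy
      · rcases lyz with h | ⟨h1, h2⟩
        · exact Or.inl (by exact_mod_cast h)
        · exact Or.inr ⟨by exact_mod_cast h1, by rw [hrxz]; exact_mod_cast h2⟩
      · rcases lzt with h | ⟨h1, h2⟩
        · exact Or.inl (by exact_mod_cast h)
        · exact Or.inr ⟨by exact_mod_cast h1, by rw [hrxz, hryt]; exact_mod_cast h2⟩
    · rintro ⟨⟨q1, q2, q3, q4⟩, r1, r2⟩ hw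
      simp only [Finset.mem_coe, Finset.mem_filter, Finset.mem_product, Finset.mem_range] at hw
      obtain ⟨⟨⟨hq1, hq2, hq3, hq4⟩, hr1, hr2⟩, c1, c2, c3⟩ := hw
      have bound : ∀ q r : ℕ, q < m → r < d →
          1 ≤ (d : ℤ) * q + r + 1 ∧ (d : ℤ) * q + r + 1 ≤ (n : ℤ) := by
        intro q r hq hr
        constructor
        · have : (0 : ℤ) ≤ (d : ℤ) * q := by positivity
          linarith [Int.natCast_nonneg r]
        · have h5 : ((q : ℤ) + 1) ≤ (m : ℤ) := by exact_mod_cast hq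
          have h6 := mul_le_mul_of_nonneg_left h5 hd'.le
          have h7 : (r : ℤ) + 1 ≤ d := by exact_mod_cast hr
          linarith [hnZ]
      have lex : ∀ qa ra qb rb : ℕ, ra < d → rb < d →
          (qa < qb ∨ (qa = qb ∧ ra < rb)) →
          (d : ℤ) * qa + ra + 1 < (d : ℤ) * qb + rb + 1 := by
        intro qa ra qb rb hra hrb h
        have := (lex_iff (d : ℤ) qa qb ra rb hd' (by positivity) (by exact_mod_cast hra)
          (by positivity) (by exact_mod_cast hrb)).mpr (by exact_mod_cast h)
        linarith
      simp only [Finset.mem_coe, Finset.mem_filter, Finset.mem_product, Finset.mem_Icc]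
      refine ⟨⟨bound q1 r1 hq1 hr1, bound q2 r2 hq2 hr2, bound q3 r1 hq3 hr1,
        bound q4 r2 hq4 hr2⟩, lex q1 r1 q2 r2 hr1 hr2 c1, lex q2 r2 q3 r1 hr2 hr1 ?_,
        lex q3 r1 q4 r2 hr1 hr2 c3, ⟨(q3 : ℤ) - q1, by ring⟩, ⟨(q4 : ℤ) - q2, by ring⟩⟩
      · exact c2
    · rintro ⟨x, y, z, t⟩ hv
      simp only [Finset.mem_coe, Finset.mem_filter, Finset.mem_product, Finset.mem_Icc] at hv
      obtain ⟨⟨⟨hx1, hx2⟩, ⟨hy1, hy2⟩, ⟨hz1, hz2⟩, ht1, ht2⟩, hxy, hyz, hzt, hdxz, hdyt⟩ := hv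
      obtain ⟨qx, rx, hqx, hrx, hex, hdx, hmx⟩ := key x hx1 hx2
      obtain ⟨qy, ry, hqy, hry, hey, hdy, hmy⟩ := key y hy1 hy2
      obtain ⟨qz, rz, hqz, hrz, hez, hdz, hmz⟩ := key z hz1 hz2
      obtain ⟨qt, rt, hqt, hrt, het, hdt, hmt⟩ := key t ht1 ht2
      have hrxz : rx = rz := by
        rw [hex, hez] at hdxz
        exact_mod_cast (dvd_iff' d qx qz rx rz hd' (by positivity) (by exact_mod_cast hrx)
          (by positivity) (by exact_mod_cast hrz)).mp hdxz
      have hryt : ry = rt := by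
        rw [hey, het] at hdyt
        exact_mod_cast (dvd_iff' d qy qt ry rt hd' (by positivity) (by exact_mod_cast hry)
          (by positivity) (by exact_mod_cast hrt)).mp hdyt
      simp only [Prod.mk.injEq]
      rw [hdx, hmx, hdy, hmy, hdz, hdt]
      exact ⟨hex.symm, hey.symm, by rw [hez, hrxz], by rw [het, hryt]⟩
    · rintro ⟨⟨q1, q2, q3, q4⟩, r1, r2⟩ hw
      simp only [Finset.mem_coe, Finset.mem_filter, Finset.mem_product, Finset.mem_range] at hw
      obtain ⟨⟨⟨hq1, hq2, hq3, hq4⟩, hr1, hr2⟩, -⟩ := hw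
      simp only [Prod.mk.injEq]
      exact ⟨⟨(decomp_div d q1 r1 hd hr1).1, (decomp_div d q2 r2 hd hr2).1,
        (decomp_div d q3 r1 hd hr1).1, (decomp_div d q4 r2 hd hr2).1⟩,
        (decomp_div d q1 r1 hd hr1).2, (decomp_div d q2 r2 hd hr2).2⟩
  rw [hcard, count_E]
end

section
/- Let p, q, k, l be positive integers with gcd(p, q) = 1 and let β₁, β₂ be integers. Then the number of pairs (α, γ) ∈ ℤ² with β₁ ≤ α < β₁ + k, β₂ ≤ γ < β₂ + l, and gcd(k, l, p·γ − q·α) = 1 equals k·l·φ(gcd(k, l))/gcd(k, l) (an integer, since gcd(k, l) divides k·l). -/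
open Finset

private lemma count_interval_cast (d k : ℕ) (hd : 0 < d) (hdk : d ∣ k) (β : ℤ) (a : ZMod d) :
    ((Finset.Ico β (β + k)).filter (fun x : ℤ => (x : ZMod d) = a)).card = k / d := by
  haveI : NeZero d := ⟨hd.ne'⟩
  have hr : 0 < (d : ℤ) := by exact_mod_cast hd
  obtain ⟨v, rfl⟩ : ∃ v : ℤ, (v : ZMod d) = a :=
    ⟨(a.val : ℤ), by rw [Int.cast_natCast]; exact ZMod.natCast_rightInverse a⟩
  have h1 : ((Finset.Ico β (β + k)).filter (fun x : ℤ => (x : ZMod d) = (v : ZMod d)))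
      = ((Finset.Ico β (β + k)).filter (fun x => x ≡ v [ZMOD (d : ℤ)])) := by
    apply Finset.filter_congr; intro x _
    simp [ZMod.intCast_eq_intCast_iff]
  rw [h1]
  have h2 := Int.Ico_filter_modEq_card β (β + k) hr v
  have hd0 : (((d : ℤ) : ℚ)) ≠ 0 := by exact_mod_cast hr.ne'
  have h3 : ((β + (k : ℤ) : ℤ) : ℚ) - (v : ℚ)
      = ((β : ℚ) - (v : ℚ)) + (((k / d : ℕ) : ℤ) : ℚ) * ((d : ℤ) : ℚ) := by
    have hkq : (((k / d : ℕ) : ℤ) : ℚ) * ((d : ℤ) : ℚ) = ((k : ℤ) : ℚ) := by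
      exact_mod_cast congrArg (Nat.cast (R := ℚ)) (Nat.div_mul_cancel hdk)
    rw [hkq]; push_cast; ring
  rw [h3, add_div, mul_div_cancel_right₀ _ hd0, Int.ceil_add_intCast] at h2
  rw [add_sub_cancel_left] at h2
  rw [sup_eq_left.mpr (Int.natCast_nonneg _)] at h2
  exact_mod_cast h2

private lemma isUnit_int_zmod (d : ℕ) [NeZero d] (x : ℤ) :
    IsUnit ((x : ZMod d)) ↔ Int.gcd (d : ℤ) x = 1 := by
  have h1 : Int.gcd (d : ℤ) x = Nat.gcd x.natAbs d := by
    rw [Int.gcd]; simp [Nat.gcd_comm]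
  have h2 : IsUnit ((x : ZMod d)) ↔ IsUnit ((x.natAbs : ZMod d)) := by
    rcases Int.natAbs_eq x with h | h
    · conv_lhs => rw [h, Int.cast_natCast]
    · conv_lhs => rw [h, Int.cast_neg, Int.cast_natCast]
      exact IsUnit.neg_iff _
  rw [h1, h2, ZMod.isUnit_iff_coprime]

private lemma card_units_filter (d : ℕ) [NeZero d] :
    (Finset.univ.filter (fun u : ZMod d => IsUnit u)).card = Nat.totient d := by
  rw [Nat.totient_eq_card_coprime]
  refine Finset.card_nbij' (fun u => u.val) (fun a => (a : ZMod d)) ?_ ?_ ?_ ?_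
  · intro u hu
    simp only [Finset.mem_coe, Finset.mem_filter, Finset.mem_univ, true_and] at hu ⊢
    refine ⟨Finset.mem_range.mpr (ZMod.val_lt u), ?_⟩
    have : IsUnit ((u.val : ZMod d)) := by
      rwa [ZMod.natCast_rightInverse u]
    exact ((ZMod.isUnit_iff_coprime _ _).mp this).symm
  · intro a ha
    simp only [Finset.mem_coe, Finset.mem_filter, Finset.mem_range] at ha
    simp only [Finset.mem_coe, Finset.mem_filter, Finset.mem_univ, true_and]
    exact (ZMod.isUnit_iff_coprime _ _).mpr ha.2.symm
  · intro u _; exact ZMod.natCast_rightInverse u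
  · intro a ha
    simp only [Finset.mem_coe, Finset.mem_filter, Finset.mem_range] at ha
    exact ZMod.val_cast_of_lt ha.1

theorem count_shear_pairs (p q k l : ℕ) (hp : 0 < p) (hq : 0 < q) (hk : 0 < k) (hl : 0 < l)
    (hpq : Nat.gcd p q = 1) (β₁ β₂ : ℤ) :
    (((Finset.Ico β₁ (β₁ + k) ×ˢ Finset.Ico β₂ (β₂ + l)).filter
      (fun v => Int.gcd (Nat.gcd k l : ℤ) ((p : ℤ) * v.2 - (q : ℤ) * v.1) = 1)).card : ℚ)
    = (k * l * Nat.totient (Nat.gcd k l) : ℚ) / (Nat.gcd k l : ℚ) := by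
  set d := Nat.gcd k l with hdkl
  have hd : 0 < d := Nat.gcd_pos_of_pos_left l hk
  haveI : NeZero d := ⟨hd.ne'⟩
  have hdk : d ∣ k := Nat.gcd_dvd_left k l
  have hdl : d ∣ l := Nat.gcd_dvd_right k l
  set P : ZMod d := ((p : ℤ) : ZMod d) with hP
  set Q : ZMod d := ((q : ℤ) : ZMod d) with hQ
  set A : ZMod d := ((Nat.gcdA p q : ℤ) : ZMod d) with hA
  set B : ZMod d := ((Nat.gcdB p q : ℤ) : ZMod d) with hB
  have hPQ : P * A + Q * B = 1 := by
    have hz : ((p : ℤ)) * Nat.gcdA p q + (q : ℤ) * Nat.gcdB p q = 1 := by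
      rw [← Nat.gcd_eq_gcd_ab]; exact_mod_cast hpq
    have := congrArg (fun x : ℤ => ((x : ZMod d))) hz
    push_cast at this
    rw [hP, hQ, hA, hB]; push_cast; exact this
  set φm : ZMod d × ZMod d → ZMod d := fun z => P * z.2 - Q * z.1 with hφ
  set f : ℤ × ℤ → ZMod d × ZMod d := fun v => ((v.1 : ZMod d), (v.2 : ZMod d)) with hf
  set box := Finset.Ico β₁ (β₁ + (k : ℤ)) ×ˢ Finset.Ico β₂ (β₂ + (l : ℤ)) with hbox
  set T : Finset (ZMod d × ZMod d) := Finset.univ.filter (fun z => IsUnit (φm z)) with hT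
  have hcond : ∀ v : ℤ × ℤ,
      (Int.gcd (d : ℤ) ((p : ℤ) * v.2 - (q : ℤ) * v.1) = 1) ↔ IsUnit (φm (f v)) := by
    intro v
    have hcast : (((p : ℤ) * v.2 - (q : ℤ) * v.1 : ℤ) : ZMod d) = φm (f v) := by
      simp only [hφ, hf, hP, hQ]; push_cast; ring
    rw [← isUnit_int_zmod, hcast]
  have step1 : (box.filter
      (fun v => Int.gcd (d : ℤ) ((p : ℤ) * v.2 - (q : ℤ) * v.1) = 1)).card
      = T.card * ((k / d) * (l / d)) := by
    set S := box.filter (fun v => Int.gcd (d : ℤ) ((p : ℤ) * v.2 - (q : ℤ) * v.1) = 1) with hS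
    have hmap : ∀ v ∈ S, f v ∈ T := by
      intro v hv
      rw [hS, Finset.mem_filter] at hv
      rw [hT, Finset.mem_filter]
      exact ⟨Finset.mem_univ _, (hcond v).mp hv.2⟩
    rw [Finset.card_eq_sum_card_fiberwise hmap]
    have hfib : ∀ z ∈ T, (S.filter (fun v => f v = z)).card = (k / d) * (l / d) := by
      intro z hz
      rw [hT, Finset.mem_filter] at hz
      have : S.filter (fun v => f v = z) = box.filter (fun v => f v = z) := by
        rw [hS, Finset.filter_filter]
        apply Finset.filter_congr
        intro v _
        constructor
        · rintro ⟨_, h⟩; exact h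
        · intro h; exact ⟨(hcond v).mpr (h ▸ hz.2), h⟩
      rw [this]
      have heq : box.filter (fun v => f v = z)
          = (Finset.Ico β₁ (β₁ + (k : ℤ))).filter (fun x : ℤ => (x : ZMod d) = z.1)
            ×ˢ (Finset.Ico β₂ (β₂ + (l : ℤ))).filter (fun x : ℤ => (x : ZMod d) = z.2) := by
        rw [hbox, ← Finset.filter_product]
        apply Finset.filter_congr
        intro v _
        simp [hf, Prod.ext_iff]
      rw [heq, Finset.card_product, count_interval_cast d k hd hdk,
        count_interval_cast d l hd hdl]
    rw [Finset.sum_congr rfl hfib, Finset.sum_const, smul_eq_mul]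
  have step2 : T.card = Nat.totient d * d := by
    have : T.card = ((Finset.univ.filter (fun u : ZMod d => IsUnit u))
        ×ˢ (Finset.univ : Finset (ZMod d))).card := by
      apply Finset.card_nbij' (fun z => (φm z, A * z.1 + B * z.2))
        (fun w => (- B * w.1 + P * w.2, A * w.1 + Q * w.2))
      · intro z hz
        rw [hT, Finset.mem_coe, Finset.mem_filter] at hz
        simp only [Finset.mem_coe, Finset.mem_product, Finset.mem_filter, Finset.mem_univ, true_and, and_true]
        exact hz.2
      · intro w hw
        simp only [Finset.mem_coe, Finset.mem_product, Finset.mem_filter, Finset.mem_univ, true_and,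
          and_true] at hw
        rw [hT, Finset.mem_coe, Finset.mem_filter]
        refine ⟨Finset.mem_univ _, ?_⟩
        have : φm (- B * w.1 + P * w.2, A * w.1 + Q * w.2) = w.1 := by
          simp only [hφ]
          linear_combination w.1 * hPQ
        rw [this]; exact hw
      · intro z _
        ext
        · simp only [hφ]; linear_combination z.1 * hPQ
        · simp only [hφ]; linear_combination z.2 * hPQ
      · intro w _
        ext
        · simp only [hφ]; linear_combination w.1 * hPQ
        · simp only [hφ]; linear_combination w.2 * hPQ
    rw [this, Finset.card_product, card_units_filter, Finset.card_univ, ZMod.card]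
  rw [step1, step2]
  obtain ⟨k', hk'⟩ := hdk
  obtain ⟨l', hl'⟩ := hdl
  have hd0 : (d : ℚ) ≠ 0 := by positivity
  rw [hk', hl', Nat.mul_div_cancel_left _ hd, Nat.mul_div_cancel_left _ hd]
  push_cast
  field_simp
end

section
/- For integers k, l, α, β, p, q, the ℤ-submodule of ℤ² spanned by the four vectors (k, 0), (l, 0), (α, p), (β, q) is all of ℤ² if and only if gcd(p, q) = 1 and gcd(k, l, p·β − q·α) = 1. -/
private lemma mem_span_quad {v1 v2 v3 v4 x : ℤ × ℤ}
    (h : x ∈ Submodule.span ℤ ({v1, v2, v3, v4} : Set (ℤ × ℤ))) :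
    ∃ a b c d : ℤ, x = a • v1 + b • v2 + c • v3 + d • v4 := by
  obtain ⟨a, y, hy, rfl⟩ := Submodule.mem_span_insert.mp h
  obtain ⟨b, z, hz, rfl⟩ := Submodule.mem_span_insert.mp hy
  obtain ⟨c, w, hw, rfl⟩ := Submodule.mem_span_insert.mp hz
  obtain ⟨d, rfl⟩ := Submodule.mem_span_singleton.mp hw
  exact ⟨a, b, c, d, by abel⟩

theorem lattice_generation_iff (k l α β p q : ℤ) :
    Submodule.span ℤ ({(k, 0), (l, 0), (α, p), (β, q)} : Set (ℤ × ℤ)) = ⊤ ↔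
      Int.gcd p q = 1 ∧ Int.gcd (Int.gcd k l : ℤ) (p * β - q * α) = 1 := by
  constructor
  · intro h
    have h01 : ((0 : ℤ), (1 : ℤ)) ∈ Submodule.span ℤ
        ({(k, 0), (l, 0), (α, p), (β, q)} : Set (ℤ × ℤ)) := h ▸ Submodule.mem_top
    have h10 : ((1 : ℤ), (0 : ℤ)) ∈ Submodule.span ℤ
        ({(k, 0), (l, 0), (α, p), (β, q)} : Set (ℤ × ℤ)) := h ▸ Submodule.mem_top
    obtain ⟨a, b, c, d, hcd⟩ := mem_span_quad h01
    simp only [Prod.smul_mk, smul_eq_mul, Prod.mk_add_mk, Prod.mk.injEq, mul_zero] at hcd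
    obtain ⟨hc1, hc2⟩ := hcd
    have hpq : Int.gcd p q = 1 := by
      have hdvd : (Int.gcd p q : ℤ) ∣ 1 := by
        rw [hc2]
        exact dvd_add (dvd_add (dvd_add (dvd_zero _) (dvd_zero _))
          ((Int.gcd_dvd_left p q).mul_left c)) ((Int.gcd_dvd_right p q).mul_left d)
      exact_mod_cast Int.eq_one_of_dvd_one (by positivity) hdvd
    refine ⟨hpq, ?_⟩
    obtain ⟨a, b, c, d, hcd⟩ := mem_span_quad h10
    simp only [Prod.smul_mk, smul_eq_mul, Prod.mk_add_mk, Prod.mk.injEq, mul_zero] at hcd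
    obtain ⟨hd1, hd2⟩ := hcd
    obtain ⟨u, v, huv⟩ := Int.isCoprime_iff_gcd_eq_one.mpr hpq
    have hcpdq : c * p + d * q = 0 := by linarith
    have hc : c = (c * v - d * u) * q := by linear_combination u * hcpdq - c * huv
    have hd : d = -((c * v - d * u) * p) := by linear_combination v * hcpdq - d * huv
    have key : a * k + b * l + (-(c * v - d * u)) * (p * β - q * α) = 1 := by
      linear_combination -hd1 - α * hc - β * hd
    have hdvd : (Int.gcd (Int.gcd k l : ℤ) (p * β - q * α) : ℤ) ∣ 1 := by
      rw [← key]
      have g1 : (Int.gcd (Int.gcd k l : ℤ) (p * β - q * α) : ℤ) ∣ k :=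
        (Int.gcd_dvd_left _ _).trans (Int.gcd_dvd_left _ _)
      have g2 : (Int.gcd (Int.gcd k l : ℤ) (p * β - q * α) : ℤ) ∣ l :=
        (Int.gcd_dvd_left _ _).trans (Int.gcd_dvd_right _ _)
      have g3 : (Int.gcd (Int.gcd k l : ℤ) (p * β - q * α) : ℤ) ∣ (p * β - q * α) :=
        Int.gcd_dvd_right _ _
      exact dvd_add (dvd_add (g1.mul_left a) (g2.mul_left b)) (g3.mul_left _)
    exact_mod_cast Int.eq_one_of_dvd_one (by positivity) hdvd
  · rintro ⟨hpq, hkl⟩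
    set S := Submodule.span ℤ ({(k, 0), (l, 0), (α, p), (β, q)} : Set (ℤ × ℤ)) with hS
    have h1 : ((k : ℤ), (0 : ℤ)) ∈ S := Submodule.subset_span (by simp)
    have h2 : ((l : ℤ), (0 : ℤ)) ∈ S := Submodule.subset_span (by simp)
    have h3 : (α, p) ∈ S := Submodule.subset_span (by simp)
    have h4 : (β, q) ∈ S := Submodule.subset_span (by simp)
    obtain ⟨u, v, huv⟩ := Int.isCoprime_iff_gcd_eq_one.mpr hpq
    obtain ⟨s, t, hst⟩ := Int.isCoprime_iff_gcd_eq_one.mpr hkl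
    have hg : (Int.gcd k l : ℤ) = k * Int.gcdA k l + l * Int.gcdB k l := Int.gcd_eq_gcd_ab k l
    have h10 : ((1 : ℤ), (0 : ℤ)) ∈ S := by
      have heq : ((1 : ℤ), (0 : ℤ)) =
          (s * Int.gcdA k l) • ((k : ℤ), (0 : ℤ)) + (s * Int.gcdB k l) • ((l : ℤ), (0 : ℤ)) +
          (-(t * q)) • (α, p) + (t * p) • (β, q) := by
        simp only [Prod.smul_mk, smul_eq_mul, Prod.mk_add_mk, Prod.mk.injEq, mul_zero]
        constructor
        · linear_combination (-1 : ℤ) * hst + s * hg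
        · ring
      rw [heq]
      exact S.add_mem (S.add_mem (S.add_mem (S.smul_mem _ h1) (S.smul_mem _ h2))
        (S.smul_mem _ h3)) (S.smul_mem _ h4)
    have h01 : ((0 : ℤ), (1 : ℤ)) ∈ S := by
      have heq : ((0 : ℤ), (1 : ℤ)) =
          u • (α, p) + v • (β, q) + (-(u * α + v * β)) • ((1 : ℤ), (0 : ℤ)) := by
        simp only [Prod.smul_mk, smul_eq_mul, Prod.mk_add_mk, Prod.mk.injEq]
        constructor
        · ring
        · linarith [huv]
      rw [heq]
      exact S.add_mem (S.add_mem (S.smul_mem _ h3) (S.smul_mem _ h4)) (S.smul_mem _ h10)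
    rw [eq_top_iff]
    rintro ⟨x, y⟩ -
    have : ((x : ℤ), (y : ℤ)) = x • ((1 : ℤ), (0 : ℤ)) + y • ((0 : ℤ), (1 : ℤ)) := by
      simp [Prod.smul_mk]
    rw [this]
    exact S.add_mem (S.smul_mem _ h10) (S.smul_mem _ h01)
end

section
/- Let p, q, k, l, m be positive integers with gcd(p, q) = 1. Then the number of pairs (α, β) ∈ ℤ² with 0 ≤ α < k + l + m, 0 ≤ β < m, and gcd(k + l + m, m, p·β − q·α + (p + q)·l) = 1 equals (k + l + m)·m·φ(g)/g, where g = gcd(k + l + m, m). -/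
open Finset

-- IsUnit of an integer cast in ZMod n iff gcd with n is 1
lemma aux_isUnit {n : ℕ} [NeZero n] (x : ℤ) :
    IsUnit ((x : ZMod n)) ↔ Int.gcd (n : ℤ) x = 1 := by
  have h2 : IsUnit ((x : ZMod n)) ↔ IsUnit ((x.natAbs : ℕ) : ZMod n) := by
    have h1 : ((x.natAbs : ℕ) : ZMod n) = (((x.natAbs : ℤ) : ZMod n)) := (Int.cast_natCast _).symm
    rcases Int.natAbs_eq x with h | h
    · rw [h1, ← h]
    · have h3 : (x.natAbs : ℤ) = -x := by omega
      rw [h1, h3, Int.cast_neg, IsUnit.neg_iff]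
  rw [h2, ZMod.isUnit_iff_coprime]
  unfold Nat.Coprime Int.gcd
  simp [Nat.gcd_comm]

-- all fibers of the affine map have the same cardinality
lemma aux_fiber_eq (g : ℕ) [NeZero g] (P Q K : ZMod g)
    (hPQ : ∃ A B : ZMod g, P * A + Q * B = 1) (c d : ZMod g) :
    (univ.filter fun v : ZMod g × ZMod g => P * v.2 - Q * v.1 + K = c).card
      = (univ.filter fun v : ZMod g × ZMod g => P * v.2 - Q * v.1 + K = d).card := by
  obtain ⟨A, B, hAB⟩ := hPQ
  set w : ZMod g × ZMod g := (-((d - c) * B), (d - c) * A) with hw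
  have key : ∀ v : ZMod g × ZMod g,
      P * (v + w).2 - Q * (v + w).1 + K = (P * v.2 - Q * v.1 + K) + (d - c) := by
    intro v
    simp only [hw, Prod.snd_add, Prod.fst_add]
    have : P * (v.2 + (d - c) * A) - Q * (v.1 + -((d - c) * B)) + K
        = (P * v.2 - Q * v.1 + K) + (d - c) * (P * A + Q * B) := by ring
    rw [this, hAB, mul_one]
  refine Finset.card_nbij' (fun v => v + w) (fun v => v - w) ?_ ?_ ?_ ?_
  · intro v hv
    simp only [mem_coe, mem_filter, mem_univ, true_and] at hv ⊢
    rw [key v, hv]; ring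
  · intro v hv
    simp only [mem_coe, mem_filter, mem_univ, true_and] at hv ⊢
    have := key (v - w)
    rw [sub_add_cancel] at this
    rw [hv] at this
    linear_combination -this
  · intro v _
    simp only []
    rw [add_sub_cancel_right]
  · intro v _
    simp only []
    rw [sub_add_cancel]

lemma aux_fiber_card (g : ℕ) [NeZero g] (P Q K : ZMod g)
    (hPQ : ∃ A B : ZMod g, P * A + Q * B = 1) (c : ZMod g) :
    (univ.filter fun v : ZMod g × ZMod g => P * v.2 - Q * v.1 + K = c).card = g := by
  have htot : (univ : Finset (ZMod g × ZMod g)).card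
      = ∑ d : ZMod g, (univ.filter fun v : ZMod g × ZMod g => P * v.2 - Q * v.1 + K = d).card :=
    Finset.card_eq_sum_card_fiberwise (fun v _ => mem_univ _)
  have h2 : ∑ d : ZMod g, (univ.filter fun v : ZMod g × ZMod g => P * v.2 - Q * v.1 + K = d).card
      = g * (univ.filter fun v : ZMod g × ZMod g => P * v.2 - Q * v.1 + K = c).card := by
    rw [Finset.sum_congr rfl (fun d _ => aux_fiber_eq g P Q K hPQ d c), Finset.sum_const,
      Finset.card_univ, ZMod.card, smul_eq_mul]
  have h3 : (univ : Finset (ZMod g × ZMod g)).card = g * g := by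
    rw [Finset.card_univ, Fintype.card_prod, ZMod.card]
  rw [h2, h3] at htot
  exact (Nat.eq_of_mul_eq_mul_left (Nat.pos_of_ne_zero (NeZero.ne g)) htot.symm)

lemma aux_unit_count (g : ℕ) [NeZero g] (P Q K : ZMod g)
    (hPQ : ∃ A B : ZMod g, P * A + Q * B = 1) :
    (univ.filter fun v : ZMod g × ZMod g => IsUnit (P * v.2 - Q * v.1 + K)).card
      = Nat.totient g * g := by
  have hunits : (univ.filter fun c : ZMod g => IsUnit c).card = Nat.totient g := by
    rw [← ZMod.card_units_eq_totient g, ← Finset.card_univ]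
    refine (Finset.card_nbij (fun u : (ZMod g)ˣ => (u : ZMod g)) ?_ ?_ ?_).symm
    · intro u _
      simp [Units.isUnit]
    · intro a _ b _ h
      exact Units.ext h
    · intro a ha
      simp only [coe_filter, Set.mem_setOf_eq] at ha
      obtain ⟨u, hu⟩ := ha.2
      exact ⟨u, by simp, hu⟩
  rw [Finset.card_eq_sum_card_fiberwise
      (f := fun v : ZMod g × ZMod g => P * v.2 - Q * v.1 + K)
      (t := univ.filter fun c => IsUnit c)
      (fun v hv => by
        simp only [mem_coe, mem_filter, mem_univ, true_and] at hv ⊢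
        exact hv)]
  rw [Finset.sum_congr rfl (fun c hc => ?_), Finset.sum_const, hunits, smul_eq_mul]
  have hc' : IsUnit c := (mem_filter.1 hc).2
  rw [Finset.filter_filter,
    Finset.filter_congr (fun v (_ : v ∈ univ) =>
      show (IsUnit (P * v.2 - Q * v.1 + K) ∧ P * v.2 - Q * v.1 + K = c) ↔
          (P * v.2 - Q * v.1 + K = c) from ⟨fun h => h.2, fun h => ⟨h ▸ hc', h⟩⟩)]
  exact aux_fiber_card g P Q K hPQ c


theorem count_shear_pairs_diagram_B (p q k l m : ℕ) (hp : 0 < p) (hq : 0 < q) (hk : 0 < k)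
    (hl : 0 < l) (hm : 0 < m) (hpq : Nat.gcd p q = 1) :
    (((Finset.Ico (0 : ℤ) ((k : ℤ) + l + m) ×ˢ Finset.Ico (0 : ℤ) (m : ℤ)).filter
      (fun v => Int.gcd (Nat.gcd (k + l + m) m : ℤ)
        ((p : ℤ) * v.2 - (q : ℤ) * v.1 + ((p : ℤ) + q) * l) = 1)).card : ℚ)
    = ((k + l + m) * m * Nat.totient (Nat.gcd (k + l + m) m) : ℚ) /
        (Nat.gcd (k + l + m) m : ℚ) := by
  set N : ℕ := k + l + m with hN
  set g : ℕ := Nat.gcd N m with hgdef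
  have hg : 0 < g := Nat.gcd_pos_of_pos_right _ hm
  haveI : NeZero g := ⟨hg.ne'⟩
  have hgZ : ((g : ℤ)) ≠ 0 := by exact_mod_cast hg.ne'
  have hgN : g ∣ N := Nat.gcd_dvd_left _ _
  have hgm : g ∣ m := Nat.gcd_dvd_right _ _
  have hNg : g * (N / g) = N := Nat.mul_div_cancel' hgN
  have hmg : g * (m / g) = m := Nat.mul_div_cancel' hgm
  have hNgZ : (g : ℤ) * ((N / g : ℕ) : ℤ) = (N : ℤ) := by exact_mod_cast congrArg (Nat.cast (R := ℤ)) hNg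
  have hmgZ : (g : ℤ) * ((m / g : ℕ) : ℤ) = (m : ℤ) := by exact_mod_cast congrArg (Nat.cast (R := ℤ)) hmg
  have hbound : ((k : ℤ) + l + m) = (N : ℤ) := by rw [hN]; push_cast; ring
  rw [hbound]
  have hPQ : ∃ A B : ZMod g, (p : ZMod g) * A + (q : ZMod g) * B = 1 := by
    refine ⟨((Nat.gcdA p q : ℤ) : ZMod g), ((Nat.gcdB p q : ℤ) : ZMod g), ?_⟩
    have hbez : (p : ℤ) * Nat.gcdA p q + (q : ℤ) * Nat.gcdB p q = 1 := by
      have h := Nat.gcd_eq_gcd_ab p q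
      rw [hpq] at h
      push_cast at h
      linarith
    calc (p : ZMod g) * ((Nat.gcdA p q : ℤ) : ZMod g) + (q : ZMod g) * ((Nat.gcdB p q : ℤ) : ZMod g)
        = (((p : ℤ) * Nat.gcdA p q + (q : ℤ) * Nat.gcdB p q : ℤ) : ZMod g) := by push_cast; ring
      _ = 1 := by rw [hbez]; simp
  have hcard : ((Finset.Ico (0 : ℤ) (N : ℤ) ×ˢ Finset.Ico (0 : ℤ) (m : ℤ)).filter
      (fun v => Int.gcd (g : ℤ) ((p : ℤ) * v.2 - (q : ℤ) * v.1 + ((p : ℤ) + q) * l) = 1)).card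
      = (Nat.totient g * g) * ((N / g) * (m / g)) := by
    have hb : ((Finset.Ico (0 : ℤ) (N : ℤ) ×ˢ Finset.Ico (0 : ℤ) (m : ℤ)).filter
        (fun v => Int.gcd (g : ℤ) ((p : ℤ) * v.2 - (q : ℤ) * v.1 + ((p : ℤ) + q) * l) = 1)).card
        = ((univ.filter fun w : ZMod g × ZMod g =>
              IsUnit ((p : ZMod g) * w.2 - (q : ZMod g) * w.1 + ((p : ZMod g) + q) * l))
            ×ˢ (Finset.Ico (0 : ℤ) ((N / g : ℕ) : ℤ) ×ˢ Finset.Ico (0 : ℤ) ((m / g : ℕ) : ℤ))).card := by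
      refine Finset.card_nbij'
        (fun v => (((v.1 : ZMod g), (v.2 : ZMod g)), (v.1 / (g : ℤ), v.2 / (g : ℤ))))
        (fun w => (((w.1.1.val : ℤ) + (g : ℤ) * w.2.1, (w.1.2.val : ℤ) + (g : ℤ) * w.2.2)))
        ?_ ?_ ?_ ?_
      · intro v hv
        simp only [mem_coe, mem_filter, mem_product, mem_Ico] at hv
        obtain ⟨⟨⟨h1, h2⟩, h3, h4⟩, hgcd⟩ := hv
        have hu : IsUnit (((p : ℤ) * v.2 - (q : ℤ) * v.1 + ((p : ℤ) + q) * l : ℤ) : ZMod g) :=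
          (aux_isUnit _).mpr hgcd
        push_cast at hu
        simp only [mem_coe, mem_product, mem_filter, mem_univ, true_and, mem_Ico]
        refine ⟨hu, ⟨Int.ediv_nonneg h1 (by positivity), ?_⟩, Int.ediv_nonneg h3 (by positivity), ?_⟩
        · rw [Int.ediv_lt_iff_lt_mul (by exact_mod_cast hg)]
          calc v.1 < (N : ℤ) := h2
            _ = ((N / g : ℕ) : ℤ) * g := by rw [mul_comm] at hNgZ; omega
        · rw [Int.ediv_lt_iff_lt_mul (by exact_mod_cast hg)]
          calc v.2 < (m : ℤ) := h4
            _ = ((m / g : ℕ) : ℤ) * g := by rw [mul_comm] at hmgZ; omega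
      · intro w hw
        simp only [mem_coe, mem_product, mem_filter, mem_univ, true_and, mem_Ico] at hw
        obtain ⟨hu, ⟨h1, h2⟩, h3, h4⟩ := hw
        have hv1 : (w.1.1.val : ℤ) < g := by exact_mod_cast ZMod.val_lt w.1.1
        have hv2 : (w.1.2.val : ℤ) < g := by exact_mod_cast ZMod.val_lt w.1.2
        have hv1' : (0 : ℤ) ≤ (w.1.1.val : ℤ) := Int.natCast_nonneg _
        have hv2' : (0 : ℤ) ≤ (w.1.2.val : ℤ) := Int.natCast_nonneg _
        have hm1 : (g : ℤ) * (w.2.1 + 1) ≤ (g : ℤ) * ((N / g : ℕ) : ℤ) :=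
          mul_le_mul_of_nonneg_left (Int.add_one_le_iff.mpr h2) (by positivity)
        have hm2 : (g : ℤ) * (w.2.2 + 1) ≤ (g : ℤ) * ((m / g : ℕ) : ℤ) :=
          mul_le_mul_of_nonneg_left (Int.add_one_le_iff.mpr h4) (by positivity)
        simp only [mem_coe, mem_filter, mem_product, mem_Ico]
        have hgz1 : (0 : ℤ) ≤ (g : ℤ) * w.2.1 := mul_nonneg (by positivity) h1
        have hgz2 : (0 : ℤ) ≤ (g : ℤ) * w.2.2 := mul_nonneg (by positivity) h3
        refine ⟨⟨⟨by linarith, by nlinarith⟩, by linarith, by nlinarith⟩, ?_⟩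
        refine (aux_isUnit _).mp ?_
        have hc1 : ((w.1.1.val : ℕ) : ZMod g) = w.1.1 := by
          rw [ZMod.natCast_val, ZMod.cast_id]
        have hc2 : ((w.1.2.val : ℕ) : ZMod g) = w.1.2 := by
          rw [ZMod.natCast_val, ZMod.cast_id]
        push_cast
        rw [hc1, hc2]
        simpa [ZMod.natCast_self] using hu
      · intro v hv
        simp only [mem_coe, mem_filter, mem_product, mem_Ico] at hv
        obtain ⟨⟨⟨h1, h2⟩, h3, h4⟩, _⟩ := hv
        have e1 : ((((v.1 : ZMod g)).val : ℤ)) = v.1 % (g : ℤ) := ZMod.val_intCast v.1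
        have e2 : ((((v.2 : ZMod g)).val : ℤ)) = v.2 % (g : ℤ) := ZMod.val_intCast v.2
        refine Prod.ext ?_ ?_
        · show (((v.1 : ZMod g)).val : ℤ) + (g : ℤ) * (v.1 / (g : ℤ)) = v.1
          rw [e1]
          exact Int.emod_add_mul_ediv v.1 (g : ℤ)
        · show (((v.2 : ZMod g)).val : ℤ) + (g : ℤ) * (v.2 / (g : ℤ)) = v.2
          rw [e2]
          exact Int.emod_add_mul_ediv v.2 (g : ℤ)
      · intro w hw
        simp only [mem_coe, mem_product, mem_filter, mem_univ, true_and, mem_Ico] at hw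
        obtain ⟨hu, ⟨h1, h2⟩, h3, h4⟩ := hw
        have hc1 : ((w.1.1.val : ℕ) : ZMod g) = w.1.1 := by
          rw [ZMod.natCast_val, ZMod.cast_id]
        have hc2 : ((w.1.2.val : ℕ) : ZMod g) = w.1.2 := by
          rw [ZMod.natCast_val, ZMod.cast_id]
        have hd1 : ((w.1.1.val : ℤ) + (g : ℤ) * w.2.1) / (g : ℤ) = w.2.1 := by
          rw [Int.add_mul_ediv_left _ _ hgZ,
            Int.ediv_eq_zero_of_lt (Int.natCast_nonneg _) (by exact_mod_cast ZMod.val_lt w.1.1),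
            zero_add]
        have hd2 : ((w.1.2.val : ℤ) + (g : ℤ) * w.2.2) / (g : ℤ) = w.2.2 := by
          rw [Int.add_mul_ediv_left _ _ hgZ,
            Int.ediv_eq_zero_of_lt (Int.natCast_nonneg _) (by exact_mod_cast ZMod.val_lt w.1.2),
            zero_add]
        refine Prod.ext (Prod.ext ?_ ?_) (Prod.ext ?_ ?_)
        · show (((w.1.1.val : ℤ) + (g : ℤ) * w.2.1 : ℤ) : ZMod g) = w.1.1
          push_cast
          rw [hc1]
          simp [ZMod.natCast_self]
          
        · show (((w.1.2.val : ℤ) + (g : ℤ) * w.2.2 : ℤ) : ZMod g) = w.1.2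
          push_cast
          rw [hc2]
          simp [ZMod.natCast_self]
        · exact hd1
        · exact hd2
    rw [hb, Finset.card_product, Finset.card_product,
      aux_unit_count g ((p : ZMod g)) ((q : ZMod g)) (((p : ZMod g) + q) * l) hPQ]
    rw [Int.card_Ico, Int.card_Ico]
    simp only [sub_zero, Int.toNat_natCast]
  rw [hcard]
  have hk' : ((k : ℚ) + l + m) = (N : ℚ) := by rw [hN]; push_cast; ring
  rw [hk', eq_div_iff (by exact_mod_cast hg.ne' : (g : ℚ) ≠ 0)]
  have h1 : (g : ℚ) * ((N / g : ℕ) : ℚ) = (N : ℚ) := by exact_mod_cast congrArg (Nat.cast (R := ℚ)) hNg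
  have h2 : (g : ℚ) * ((m / g : ℕ) : ℚ) = (m : ℚ) := by exact_mod_cast congrArg (Nat.cast (R := ℚ)) hmg
  push_cast
  rw [← h1, ← h2]
  ring
end

section
/- Let p, q, k, l, m be positive integers with gcd(p, q) = 1. Then the number of pairs (α, β) ∈ ℤ² with 0 ≤ α < k + l, 0 ≤ β < l + m, and gcd(k + l, l + m, p·β − q·α) = 1 equals (k + l)·(l + m)·φ(g)/g, where g = gcd(k + l, l + m). -/
private lemma gcd_emod' (g x : ℤ) : Int.gcd g (x % g) = Int.gcd g x := by
  apply Nat.dvd_antisymm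
  · rw [← Int.natCast_dvd_natCast]
    refine Int.dvd_coe_gcd (Int.gcd_dvd_left _ _) ?_
    have h2 : (↑(Int.gcd g (x % g)) : ℤ) ∣ g * (x / g) + x % g :=
      dvd_add (Dvd.dvd.mul_right (Int.gcd_dvd_left _ _) _) (Int.gcd_dvd_right _ _)
    rwa [Int.mul_ediv_add_emod] at h2
  · rw [← Int.natCast_dvd_natCast]
    refine Int.dvd_coe_gcd (Int.gcd_dvd_left _ _) ?_
    rw [Int.emod_def]
    exact dvd_sub (Int.gcd_dvd_right _ _) (Dvd.dvd.mul_right (Int.gcd_dvd_left _ _) _)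

private lemma emod_eq_of_dvd_sub {g a b : ℤ} (h : g ∣ a - b) : a % g = b % g :=
  Int.emod_eq_emod_iff_emod_sub_eq_zero.mpr (Int.emod_eq_zero_of_dvd h)

private lemma tot_count (g : ℕ) (hg : 0 < g) :
    ((Finset.Ico (0:ℤ) (g:ℤ)).filter (fun x => Int.gcd (g:ℤ) x = 1)).card = Nat.totient g := by
  rw [Nat.totient]
  apply Finset.card_bij (fun x _ => x.toNat)
  · intro a ha
    simp only [Finset.mem_filter, Finset.mem_Ico] at ha ⊢
    simp only [Finset.mem_range]
    constructor
    · omega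
    · have : (a.toNat : ℤ) = a := Int.toNat_of_nonneg ha.1.1
      rw [Nat.Coprime]
      have h2 : Int.gcd (g:ℤ) ((a.toNat : ℤ)) = 1 := by rw [this]; exact ha.2
      rwa [Int.gcd_natCast_natCast] at h2
  · intro a ha b hb h
    simp only [Finset.mem_filter, Finset.mem_Ico] at ha hb
    omega
  · intro n hn
    simp only [Finset.mem_filter, Finset.mem_range] at hn
    refine ⟨(n : ℤ), ?_, by simp⟩
    simp only [Finset.mem_filter, Finset.mem_Ico, Int.gcd_natCast_natCast]
    exact ⟨⟨by positivity, by exact_mod_cast hn.1⟩, hn.2⟩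

private lemma main_bij (A B g p q u v : ℤ) (hg : 0 < g) (hA : g ∣ A) (hB : g ∣ B)
    (hbez : p * u + q * v = 1) :
    ((Finset.Ico (0:ℤ) A ×ˢ Finset.Ico (0:ℤ) B).filter
      (fun ab => Int.gcd g (p * ab.2 - q * ab.1) = 1)).card
    = ((Finset.Ico (0:ℤ) (A/g) ×ˢ Finset.Ico (0:ℤ) (B/g)) ×ˢ
        (((Finset.Ico (0:ℤ) g).filter (fun x => Int.gcd g x = 1)) ×ˢ Finset.Ico (0:ℤ) g)).card := by
  apply Finset.card_bij (fun ab _ =>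
    ((ab.1 / g, ab.2 / g), ((p * ab.2 - q * ab.1) % g, (u * ab.1 + v * ab.2) % g)))
  · rintro ⟨α, β⟩ hab
    simp only [Finset.mem_filter, Finset.mem_product, Finset.mem_Ico] at hab ⊢
    obtain ⟨⟨⟨hα0, hαA⟩, hβ0, hβB⟩, hgcd⟩ := hab
    refine ⟨⟨⟨Int.ediv_nonneg hα0 hg.le, ?_⟩, Int.ediv_nonneg hβ0 hg.le, ?_⟩,
      ⟨⟨Int.emod_nonneg _ hg.ne', Int.emod_lt_of_pos _ hg⟩, ?_⟩,
      Int.emod_nonneg _ hg.ne', Int.emod_lt_of_pos _ hg⟩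
    · rw [Int.ediv_lt_iff_lt_mul hg, Int.ediv_mul_cancel hA]; exact hαA
    · rw [Int.ediv_lt_iff_lt_mul hg, Int.ediv_mul_cancel hB]; exact hβB
    · rw [gcd_emod']; exact hgcd
  · rintro ⟨α, β⟩ ha ⟨α', β'⟩ hb h
    simp only [Finset.mem_filter, Finset.mem_product, Finset.mem_Ico] at ha hb
    simp only [Prod.mk.injEq] at h
    obtain ⟨⟨hq1, hq2⟩, hr1, hr2⟩ := h
    have d1 : g ∣ (p * β - q * α) - (p * β' - q * α') :=
      Int.dvd_of_emod_eq_zero (Int.emod_eq_emod_iff_emod_sub_eq_zero.mp hr1)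
    have d2 : g ∣ (u * α + v * β) - (u * α' + v * β') :=
      Int.dvd_of_emod_eq_zero (Int.emod_eq_emod_iff_emod_sub_eq_zero.mp hr2)
    obtain ⟨c1, hc1⟩ := d1
    obtain ⟨c2, hc2⟩ := d2
    have hαe : α % g = α' % g := by
      apply emod_eq_of_dvd_sub
      exact ⟨p * c2 - v * c1, by linear_combination p * hc2 - v * hc1 - (α - α') * hbez⟩
    have hβe : β % g = β' % g := by
      apply emod_eq_of_dvd_sub
      exact ⟨u * c1 + q * c2, by linear_combination u * hc1 + q * hc2 - (β - β') * hbez⟩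
    have eα : α = α' := by
      conv_lhs => rw [← Int.mul_ediv_add_emod α g]
      conv_rhs => rw [← Int.mul_ediv_add_emod α' g]
      rw [hq1, hαe]
    have eβ : β = β' := by
      conv_lhs => rw [← Int.mul_ediv_add_emod β g]
      conv_rhs => rw [← Int.mul_ediv_add_emod β' g]
      rw [hq2, hβe]
    simp [eα, eβ]
  · rintro ⟨⟨i, j⟩, x, y⟩ hmem
    simp only [Finset.mem_filter, Finset.mem_product, Finset.mem_Ico] at hmem
    obtain ⟨⟨⟨hi0, hiA⟩, hj0, hjB⟩, ⟨⟨hx0, hxg⟩, hxgcd⟩, hy0, hyg⟩ := hmem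
    set r : ℤ := (p * y - v * x) % g with hrdef
    set s : ℤ := (u * x + q * y) % g with hsdef
    have hr0 : 0 ≤ r := Int.emod_nonneg _ hg.ne'
    have hrg : r < g := Int.emod_lt_of_pos _ hg
    have hs0 : 0 ≤ s := Int.emod_nonneg _ hg.ne'
    have hsg : s < g := Int.emod_lt_of_pos _ hg
    have hc1 : r = (p * y - v * x) - g * ((p * y - v * x) / g) := by
      rw [hrdef, Int.emod_def]
    have hc2 : s = (u * x + q * y) - g * ((u * x + q * y) / g) := by
      rw [hsdef, Int.emod_def]
    set c1 : ℤ := (p * y - v * x) / g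
    set c2 : ℤ := (u * x + q * y) / g
    refine ⟨(g * i + r, g * j + s), ?_, ?_⟩
    · simp only [Finset.mem_filter, Finset.mem_product, Finset.mem_Ico]
      have hiA' : g * (i + 1) ≤ g * (A / g) := by
        apply mul_le_mul_of_nonneg_left (by omega) hg.le
      have hjB' : g * (j + 1) ≤ g * (B / g) := by
        apply mul_le_mul_of_nonneg_left (by omega) hg.le
      rw [Int.mul_ediv_cancel' hA] at hiA'
      rw [Int.mul_ediv_cancel' hB] at hjB'
      have hdvd : g ∣ (p * (g * j + s) - q * (g * i + r)) - x :=
        ⟨p * j - q * i - p * c2 + q * c1 - x * 0 + 0, by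
          linear_combination p * hc2 - q * hc1 + x * hbez⟩
      refine ⟨⟨⟨by positivity, by nlinarith⟩, by positivity, by nlinarith⟩, ?_⟩
      have : (p * (g * j + s) - q * (g * i + r)) % g = x % g := emod_eq_of_dvd_sub hdvd
      rw [← gcd_emod', this, Int.emod_eq_of_lt hx0 hxg]
      exact hxgcd
    · have hdiv1 : (g * i + r) / g = i := by
        rw [add_comm, Int.add_mul_ediv_left _ _ hg.ne', Int.ediv_eq_zero_of_lt hr0 hrg,
          zero_add]
      have hdiv2 : (g * j + s) / g = j := by
        rw [add_comm, Int.add_mul_ediv_left _ _ hg.ne', Int.ediv_eq_zero_of_lt hs0 hsg,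
          zero_add]
      have hx' : (p * (g * j + s) - q * (g * i + r)) % g = x := by
        have hdvd : g ∣ (p * (g * j + s) - q * (g * i + r)) - x :=
          ⟨p * j - q * i - p * c2 + q * c1, by
            linear_combination p * hc2 - q * hc1 + x * hbez⟩
        rw [emod_eq_of_dvd_sub hdvd, Int.emod_eq_of_lt hx0 hxg]
      have hy' : (u * (g * i + r) + v * (g * j + s)) % g = y := by
        have hdvd : g ∣ (u * (g * i + r) + v * (g * j + s)) - y :=
          ⟨u * i + v * j - u * c1 - v * c2, by
            linear_combination u * hc1 + v * hc2 + y * hbez⟩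
        rw [emod_eq_of_dvd_sub hdvd, Int.emod_eq_of_lt hy0 hyg]
      simp [hdiv1, hdiv2, hx', hy']

theorem count_shear_pairs_diagram_C (p q k l m : ℕ) (hp : 0 < p) (hq : 0 < q) (hk : 0 < k)
    (hl : 0 < l) (hm : 0 < m) (hpq : Nat.gcd p q = 1) :
    (((Finset.Ico (0 : ℤ) ((k : ℤ) + l) ×ˢ Finset.Ico (0 : ℤ) ((l : ℤ) + m)).filter
      (fun v => Int.gcd (Nat.gcd (k + l) (l + m) : ℤ)
        ((p : ℤ) * v.2 - (q : ℤ) * v.1) = 1)).card : ℚ)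
    = ((k + l) * (l + m) * Nat.totient (Nat.gcd (k + l) (l + m)) : ℚ) /
        (Nat.gcd (k + l) (l + m) : ℚ) := by
  set gN : ℕ := Nat.gcd (k + l) (l + m) with hgN
  have hgpos : 0 < gN := Nat.gcd_pos_of_pos_left _ (by omega)
  set A : ℤ := (k : ℤ) + l with hAdef
  set B : ℤ := (l : ℤ) + m with hBdef
  have hAeq : A = ((k + l : ℕ) : ℤ) := by push_cast; ring
  have hBeq : B = ((l + m : ℕ) : ℤ) := by push_cast; ring
  have hg : (0 : ℤ) < (gN : ℤ) := by exact_mod_cast hgpos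
  have hA : (gN : ℤ) ∣ A := by rw [hAeq]; exact_mod_cast Nat.gcd_dvd_left _ _
  have hB : (gN : ℤ) ∣ B := by rw [hBeq]; exact_mod_cast Nat.gcd_dvd_right _ _
  have hbez : (p : ℤ) * Nat.gcdA p q + (q : ℤ) * Nat.gcdB p q = 1 := by
    have := Nat.gcd_eq_gcd_ab p q
    rw [hpq] at this
    push_cast at this ⊢
    linarith
  rw [main_bij A B (gN : ℤ) (p : ℤ) (q : ℤ) (Nat.gcdA p q) (Nat.gcdB p q) hg hA hB hbez]
  rw [Finset.card_product, Finset.card_product, Finset.card_product, tot_count gN hgpos]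
  rw [Int.card_Ico, Int.card_Ico, Int.card_Ico]
  have hA2 : (0:ℤ) ≤ A / gN := Int.ediv_nonneg (by positivity) hg.le
  have hB2 : (0:ℤ) ≤ B / gN := Int.ediv_nonneg (by positivity) hg.le
  have e1 : ((A / (gN:ℤ) - 0).toNat : ℚ) * (gN : ℚ) = ((k:ℚ) + l) := by
    have h1 : ((A / (gN:ℤ) - 0).toNat : ℤ) = A / gN := by
      rw [Int.toNat_of_nonneg (by omega)]; ring
    have h2 : (A / (gN:ℤ)) * gN = A := Int.ediv_mul_cancel hA
    have h3 : ((A / (gN:ℤ) - 0).toNat : ℤ) * (gN:ℤ) = (k:ℤ) + l := by rw [h1, ← hAdef]; exact h2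
    have := congrArg (fun z : ℤ => (z : ℚ)) h3
    push_cast at this ⊢
    linarith
  have e2 : ((B / (gN:ℤ) - 0).toNat : ℚ) * (gN : ℚ) = ((l:ℚ) + m) := by
    have h1 : ((B / (gN:ℤ) - 0).toNat : ℤ) = B / gN := by
      rw [Int.toNat_of_nonneg (by omega)]; ring
    have h2 : (B / (gN:ℤ)) * gN = B := Int.ediv_mul_cancel hB
    have h3 : ((B / (gN:ℤ) - 0).toNat : ℤ) * (gN:ℤ) = (l:ℤ) + m := by rw [h1, ← hBdef]; exact h2
    have := congrArg (fun z : ℤ => (z : ℚ)) h3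
    push_cast at this ⊢
    linarith
  have e3 : (((gN : ℤ) - 0).toNat : ℚ) = (gN : ℚ) := by
    norm_num
  have hgq : (gN : ℚ) ≠ 0 := by positivity
  rw [eq_div_iff hgq]
  push_cast
  rw [e3]
  linear_combination ((B / (gN:ℤ) - 0).toNat : ℚ) * (gN:ℚ) * (gN.totient : ℚ) * e1 +
    ((k:ℚ) + l) * (gN.totient : ℚ) * e2
end

section
/- For every positive integer n, the sum of k·l²·φ(gcd(k, l))/gcd(k, l) over all quadruples (p, q, k, l) of positive integers with k > l and p·k + q·l = n equals ∑_{d ∣ n} μ(d)·d²·F(n/d), where F(m) = (1/24)·σ₄(m) + (1/2)·σ₃(m) − ((12·m + 1)/24)·σ₂(m). -/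
/-- Divisor function `σ_k(n) = ∑_{d ∣ n} d^k`. -/
def sigmaFn (k n : ℕ) : ℕ := ∑ d ∈ n.divisors, d ^ k

/-- `F(m) = (1/24)σ₄(m) + (1/2)σ₃(m) − ((12m+1)/24)σ₂(m)`. -/
def Ffn (m : ℕ) : ℚ :=
  (1 / 24) * sigmaFn 4 m + (1 / 2) * sigmaFn 3 m - ((12 * (m : ℚ) + 1) / 24) * sigmaFn 2 m

namespace LiouvilleAux

/-- solutions of a*x + b*y = n with all coordinates positive -/
def Sol (n : ℕ) : Finset (ℕ × ℕ × ℕ × ℕ) :=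
  (Finset.Icc 1 n ×ˢ Finset.Icc 1 n ×ˢ Finset.Icc 1 n ×ˢ Finset.Icc 1 n).filter
    (fun v => v.1 * v.2.2.1 + v.2.1 * v.2.2.2 = n)

lemma mem_Sol {n : ℕ} {v : ℕ × ℕ × ℕ × ℕ} :
    v ∈ Sol n ↔ 0 < v.1 ∧ 0 < v.2.1 ∧ 0 < v.2.2.1 ∧ 0 < v.2.2.2 ∧
      v.1 * v.2.2.1 + v.2.1 * v.2.2.2 = n := by
  obtain ⟨a, b, x, y⟩ := v
  simp only [Sol, Finset.mem_filter, Finset.mem_product, Finset.mem_Icc]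
  constructor
  · rintro ⟨⟨⟨ha, -⟩, ⟨hb, -⟩, ⟨hx, -⟩, ⟨hy, -⟩⟩, he⟩
    exact ⟨ha, hb, hx, hy, he⟩
  · rintro ⟨ha, hb, hx, hy, he⟩
    have h1 : a ≤ a * x := Nat.le_mul_of_pos_right a hx
    have h2 : b ≤ b * y := Nat.le_mul_of_pos_right b hy
    have h3 : x ≤ a * x := Nat.le_mul_of_pos_left x ha
    have h4 : y ≤ b * y := Nat.le_mul_of_pos_left y hb
    refine ⟨⟨⟨ha, ?_⟩, ⟨hb, ?_⟩, ⟨hx, ?_⟩, ⟨hy, ?_⟩⟩, he⟩ <;> omega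

lemma sum_Icc_id (k : ℕ) : ∑ x ∈ Finset.Icc 1 k, (x : ℚ) = k * (k + 1) / 2 := by
  induction k with
  | zero => simp
  | succ k ih =>
    rw [Finset.sum_Icc_succ_top (by omega), ih]
    push_cast; ring

lemma sum_Icc_sq (k : ℕ) : ∑ x ∈ Finset.Icc 1 k, (x : ℚ) ^ 2 = k * (k + 1) * (2 * k + 1) / 6 := by
  induction k with
  | zero => simp
  | succ k ih =>
    rw [Finset.sum_Icc_succ_top (by omega), ih]
    push_cast; ring

/-- totient via moebius -/
lemma totient_div (g : ℕ) (hg : 0 < g) :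
    (Nat.totient g : ℚ) / g = ∑ d ∈ g.divisors, (ArithmeticFunction.moebius d : ℚ) / d := by
  have key : ∀ n > 0, ∑ x ∈ n.divisorsAntidiagonal,
      (ArithmeticFunction.moebius x.fst) • ((x.snd : ℚ)) = (Nat.totient n : ℚ) := by
    rw [← ArithmeticFunction.sum_eq_iff_sum_smul_moebius_eq (f := fun i => (Nat.totient i : ℚ))]
    intro n hn
    rw [← Nat.cast_sum]
    exact_mod_cast congrArg (Nat.cast (R := ℚ)) (Nat.sum_totient n)
  have h := key g hg
  rw [← h, Nat.sum_divisorsAntidiagonal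
    (f := fun d e => (ArithmeticFunction.moebius d) • ((e : ℚ)))]
  rw [Finset.sum_div]
  refine Finset.sum_congr rfl fun d hd => ?_
  obtain ⟨hdvd, hne⟩ := Nat.mem_divisors.mp hd
  have hd0 : (d : ℚ) ≠ 0 := by
    have := Nat.pos_of_mem_divisors hd; positivity
  have hg0 : (g : ℚ) ≠ 0 := by positivity
  have hmul : (d : ℚ) * ((g / d : ℕ) : ℚ) = g := by
    exact_mod_cast congrArg (Nat.cast (R := ℚ)) (Nat.mul_div_cancel' hdvd)
  rw [zsmul_eq_mul]
  field_simp
  rw [← hmul]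
  ring

end LiouvilleAux

namespace LiouvilleAux

/-- Liouville weight -/
def Wq (v : ℕ × ℕ × ℕ × ℕ) : ℚ :=
  -((v.2.2.1 : ℚ) * v.2.2.2 * ((v.2.2.1 : ℚ) + v.2.2.2)) / 2

/-- Liouville's substitution -/
def psi (v : ℕ × ℕ × ℕ × ℕ) : ℕ × ℕ × ℕ × ℕ :=
  if v.2.2.2 < v.2.2.1 then (v.1, v.1 + v.2.1, v.2.2.1 - v.2.2.2, v.2.2.2)
  else (v.1 + v.2.1, v.2.1, v.2.2.1, v.2.2.2 - v.2.2.1)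

lemma sum_psi (m : ℕ) :
    ∑ v ∈ (Sol m).filter (fun v => v.2.2.1 ≠ v.2.2.2), Wq (psi v)
      = ∑ v ∈ (Sol m).filter (fun v => v.1 ≠ v.2.1), Wq v := by
  apply Finset.sum_nbij' psi
    (fun v => if v.1 < v.2.1 then (v.1, v.2.1 - v.1, v.2.2.1 + v.2.2.2, v.2.2.2)
      else (v.1 - v.2.1, v.2.1, v.2.2.1, v.2.2.1 + v.2.2.2))
  · rintro ⟨a, b, x, y⟩ hv
    simp only [Finset.mem_filter, mem_Sol] at hv ⊢
    obtain ⟨⟨ha, hb, hx, hy, he⟩, hne⟩ := hv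
    by_cases hlt : y < x
    · rw [psi, if_pos hlt]
      try dsimp only
      have e1 : a * (x - y) + (a + b) * y = m := by
        rw [Nat.add_mul, ← Nat.add_assoc, ← Nat.mul_add, Nat.sub_add_cancel (le_of_lt hlt)]
        exact he
      exact ⟨⟨ha, by omega, by omega, hy, e1⟩, by omega⟩
    · rw [psi, if_neg hlt]
      try dsimp only
      have hxy : x < y := by omega
      have e1 : (a + b) * x + b * (y - x) = m := by
        rw [Nat.add_mul, Nat.add_assoc, ← Nat.mul_add, Nat.add_sub_cancel' (le_of_lt hxy)]
        exact he
      exact ⟨⟨by omega, hb, hx, by omega, e1⟩, by omega⟩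
  · rintro ⟨a, b, x, y⟩ hv
    simp only [Finset.mem_filter, mem_Sol] at hv ⊢
    obtain ⟨⟨ha, hb, hx, hy, he⟩, hne⟩ := hv
    by_cases hlt : a < b
    · rw [if_pos hlt]
      try dsimp only
      have e1 : a * (x + y) + (b - a) * y = m := by
        rw [Nat.mul_add, Nat.add_assoc, ← Nat.add_mul, Nat.add_sub_cancel' (le_of_lt hlt)]
        exact he
      exact ⟨⟨ha, by omega, by omega, hy, e1⟩, by omega⟩
    · rw [if_neg hlt]
      try dsimp only
      have hba : b < a := by omega
      have e1 : (a - b) * x + b * (x + y) = m := by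
        rw [Nat.mul_add, ← Nat.add_assoc, ← Nat.add_mul, Nat.sub_add_cancel (le_of_lt hba)]
        exact he
      exact ⟨⟨by omega, hb, hx, by omega, e1⟩, by omega⟩
  · rintro ⟨a, b, x, y⟩ hv
    simp only [Finset.mem_filter, mem_Sol] at hv
    obtain ⟨⟨ha, hb, hx, hy, he⟩, hne⟩ := hv
    by_cases hlt : y < x
    · rw [psi, if_pos hlt]
      try dsimp only
      rw [if_pos (by omega : a < a + b)]
      try dsimp only
      simp only [Prod.mk.injEq, true_and, and_true]
      omega
    · rw [psi, if_neg hlt]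
      try dsimp only
      rw [if_neg (by omega : ¬ (a + b < b))]
      try dsimp only
      simp only [Prod.mk.injEq, true_and, and_true]
      omega
  · rintro ⟨a, b, x, y⟩ hv
    simp only [Finset.mem_filter, mem_Sol] at hv
    obtain ⟨⟨ha, hb, hx, hy, he⟩, hne⟩ := hv
    by_cases hlt : a < b
    · rw [if_pos hlt, psi, if_pos (by omega : y < x + y)]
      try dsimp only
      simp only [Prod.mk.injEq, true_and, and_true]
      omega
    · rw [if_neg hlt, psi, if_neg (by omega : ¬ (x + y < x))]
      try dsimp only
      simp only [Prod.mk.injEq, true_and, and_true]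
      omega
  · exact fun v _ => rfl

lemma sum_tau (m : ℕ) :
    ∑ v ∈ (Sol m).filter (fun v => v.2.2.1 < v.2.2.2), (v.2.2.1 : ℚ) ^ 2 * v.2.2.2
      = ∑ v ∈ (Sol m).filter (fun v => v.2.2.2 < v.2.2.1), (v.2.2.1 : ℚ) * (v.2.2.2 : ℚ) ^ 2 := by
  apply Finset.sum_nbij' (fun v => (v.2.1, v.1, v.2.2.2, v.2.2.1))
    (fun v => (v.2.1, v.1, v.2.2.2, v.2.2.1))
  · rintro ⟨a, b, x, y⟩ hv
    simp only [Finset.mem_filter, mem_Sol] at hv ⊢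
    obtain ⟨⟨ha, hb, hx, hy, he⟩, hne⟩ := hv
    exact ⟨⟨hb, ha, hy, hx, by omega⟩, hne⟩
  · rintro ⟨a, b, x, y⟩ hv
    simp only [Finset.mem_filter, mem_Sol] at hv ⊢
    obtain ⟨⟨ha, hb, hx, hy, he⟩, hne⟩ := hv
    exact ⟨⟨hb, ha, hy, hx, by omega⟩, hne⟩
  · rintro ⟨a, b, x, y⟩ _; rfl
  · rintro ⟨a, b, x, y⟩ _; rfl
  · rintro ⟨a, b, x, y⟩ _; ring

end LiouvilleAux

namespace LiouvilleAux

lemma ite_step {m : ℕ} {v : ℕ × ℕ × ℕ × ℕ} (hv : v ∈ Sol m) :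
    (if v.2.2.1 ≠ v.2.2.2 then Wq (psi v) else 0)
      = (if v.2.2.1 ≠ v.2.2.2 then Wq v else 0)
        + ((if v.2.2.2 < v.2.2.1 then (v.2.2.1 : ℚ) * (v.2.2.2 : ℚ) ^ 2 else 0)
          + (if v.2.2.1 < v.2.2.2 then (v.2.2.1 : ℚ) ^ 2 * v.2.2.2 else 0)) := by
  rw [mem_Sol] at hv
  obtain ⟨a, b, x, y⟩ := v
  obtain ⟨ha, hb, hx, hy, he⟩ := hv
  dsimp only at *
  rcases lt_trichotomy x y with hlt | heq | hgt
  · rw [if_neg (by omega : ¬ (y < x)), if_pos hlt, if_pos (by omega : x ≠ y),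
      if_pos (by omega : x ≠ y), psi, if_neg (by omega : ¬ (y < x))]
    unfold Wq
    dsimp only
    have hc : ((y - x : ℕ) : ℚ) = (y : ℚ) - x := Nat.cast_sub (le_of_lt hlt)
    rw [hc]
    ring
  · rw [if_neg (by omega : ¬ (x ≠ y)), if_neg (by omega : ¬ (x ≠ y)),
      if_neg (by omega : ¬ (y < x)), if_neg (by omega : ¬ (x < y))]
    ring
  · rw [if_pos hgt, if_neg (by omega : ¬ (x < y)), if_pos (by omega : x ≠ y),
      if_pos (by omega : x ≠ y), psi, if_pos hgt]
    unfold Wq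
    dsimp only
    have hc : ((x - y : ℕ) : ℚ) = (x : ℚ) - y := Nat.cast_sub (le_of_lt hgt)
    rw [hc]
    ring

lemma two_T (m : ℕ) :
    2 * (∑ v ∈ Sol m, if v.2.2.2 < v.2.2.1 then (v.2.2.1 : ℚ) * (v.2.2.2 : ℚ) ^ 2 else 0)
      = (∑ v ∈ Sol m, if v.2.2.1 = v.2.2.2 then Wq v else 0)
        - (∑ v ∈ Sol m, if v.1 = v.2.1 then Wq v else 0) := by
  have htau : (∑ v ∈ Sol m, if v.2.2.1 < v.2.2.2 then (v.2.2.1 : ℚ) ^ 2 * v.2.2.2 else 0)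
      = ∑ v ∈ Sol m, if v.2.2.2 < v.2.2.1 then (v.2.2.1 : ℚ) * (v.2.2.2 : ℚ) ^ 2 else 0 := by
    rw [← Finset.sum_filter, ← Finset.sum_filter]
    exact sum_tau m
  have hstep : (∑ v ∈ Sol m, if v.2.2.1 ≠ v.2.2.2 then Wq (psi v) else 0)
      = (∑ v ∈ Sol m, if v.2.2.1 ≠ v.2.2.2 then Wq v else 0)
        + ((∑ v ∈ Sol m, if v.2.2.2 < v.2.2.1 then (v.2.2.1 : ℚ) * (v.2.2.2 : ℚ) ^ 2 else 0)
          + (∑ v ∈ Sol m, if v.2.2.1 < v.2.2.2 then (v.2.2.1 : ℚ) ^ 2 * v.2.2.2 else 0)) := by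
    rw [← Finset.sum_add_distrib, ← Finset.sum_add_distrib]
    exact Finset.sum_congr rfl fun v hv => ite_step hv
  have hpsi : (∑ v ∈ Sol m, if v.2.2.1 ≠ v.2.2.2 then Wq (psi v) else 0)
      = ∑ v ∈ Sol m, if v.1 ≠ v.2.1 then Wq v else 0 := by
    rw [← Finset.sum_filter, ← Finset.sum_filter]
    exact sum_psi m
  have hsp1 : (∑ v ∈ Sol m, if v.2.2.1 ≠ v.2.2.2 then Wq v else 0)
      + (∑ v ∈ Sol m, if v.2.2.1 = v.2.2.2 then Wq v else 0) = ∑ v ∈ Sol m, Wq v := by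
    rw [← Finset.sum_add_distrib]
    refine Finset.sum_congr rfl fun v _ => ?_
    by_cases h : v.2.2.1 = v.2.2.2 <;> simp [h]
  have hsp2 : (∑ v ∈ Sol m, if v.1 ≠ v.2.1 then Wq v else 0)
      + (∑ v ∈ Sol m, if v.1 = v.2.1 then Wq v else 0) = ∑ v ∈ Sol m, Wq v := by
    rw [← Finset.sum_add_distrib]
    refine Finset.sum_congr rfl fun v _ => ?_
    by_cases h : v.1 = v.2.1 <;> simp [h]
  rw [htau] at hstep
  linarith

end LiouvilleAux

namespace LiouvilleAux

lemma sum_diag_xy (m : ℕ) (hm : 0 < m) :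
    (∑ v ∈ Sol m, if v.2.2.1 = v.2.2.2 then Wq v else 0)
      = (sigmaFn 3 m : ℚ) - m * sigmaFn 2 m := by
  rw [← Finset.sum_filter]
  have h1 : ∑ v ∈ (Sol m).filter (fun v => v.2.2.1 = v.2.2.2), Wq v
      = ∑ p ∈ m.divisors.sigma (fun x => Finset.Icc 1 (m / x - 1)), -(p.1 : ℚ) ^ 3 := by
    apply Finset.sum_nbij' (fun v => ⟨v.2.2.1, v.1⟩)
      (fun p => (p.2, m / p.1 - p.2, p.1, p.1))
    · rintro ⟨a, b, x, y⟩ hv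
      simp only [Finset.mem_filter, mem_Sol] at hv
      obtain ⟨⟨ha, hb, hx, hy, he⟩, heq⟩ := hv
      try dsimp only at heq
      subst heq
      have hx2 : (a + b) * x = m := by rw [Nat.add_mul]; exact he
      have hdvd : x ∣ m := hx2 ▸ Dvd.intro_left (a + b) rfl
      have hq : a + b = m / x := by rw [← hx2, Nat.mul_div_cancel _ hx]
      simp only [Finset.mem_sigma, Nat.mem_divisors, Finset.mem_Icc]
      exact ⟨⟨hdvd, by omega⟩, ha, by omega⟩
    · rintro ⟨x, a⟩ hp
      simp only [Finset.mem_sigma, Nat.mem_divisors, Finset.mem_Icc] at hp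
      obtain ⟨⟨hdvd, hm0⟩, ha1, ha2⟩ := hp
      have hx : 0 < x := Nat.pos_of_dvd_of_pos hdvd hm
      have hq : 0 < m / x := Nat.div_pos (Nat.le_of_dvd hm hdvd) hx
      simp only [Finset.mem_filter, mem_Sol]
      refine ⟨⟨by omega, by omega, hx, hx, ?_⟩, trivial⟩
      have hsum : a + (m / x - a) = m / x := by omega
      try dsimp only
      rw [← Nat.add_mul, hsum, Nat.div_mul_cancel hdvd]
    · rintro ⟨a, b, x, y⟩ hv
      simp only [Finset.mem_filter, mem_Sol] at hv
      obtain ⟨⟨ha, hb, hx, hy, he⟩, heq⟩ := hv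
      try dsimp only at heq
      subst heq
      have hx2 : (a + b) * x = m := by rw [Nat.add_mul]; exact he
      have hq : a + b = m / x := by rw [← hx2, Nat.mul_div_cancel _ hx]
      simp only [Prod.mk.injEq, true_and, and_true]
      omega
    · rintro ⟨x, a⟩ _
      rfl
    · rintro ⟨a, b, x, y⟩ hv
      simp only [Finset.mem_filter, mem_Sol] at hv
      obtain ⟨⟨ha, hb, hx, hy, he⟩, heq⟩ := hv
      try dsimp only at heq
      subst heq
      unfold Wq
      try dsimp only
      ring
  rw [h1, Finset.sum_sigma]
  have h2 : ∀ x ∈ m.divisors,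
      (∑ _a ∈ Finset.Icc 1 (m / x - 1), -(x : ℚ) ^ 3) = (x : ℚ) ^ 3 - m * (x : ℚ) ^ 2 := by
    intro x hx
    obtain ⟨hdvd, hm0⟩ := Nat.mem_divisors.mp hx
    have hxpos : 0 < x := Nat.pos_of_dvd_of_pos hdvd hm
    have hq : 0 < m / x := Nat.div_pos (Nat.le_of_dvd hm hdvd) hxpos
    rw [Finset.sum_const, Nat.card_Icc]
    have hD : ((m / x : ℕ) : ℚ) * x = m := by
      exact_mod_cast congrArg (Nat.cast (R := ℚ)) (Nat.div_mul_cancel hdvd)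
    have hcast : ((m / x - 1 + 1 - 1 : ℕ) : ℚ) = ((m / x : ℕ) : ℚ) - 1 := by
      have : (m / x - 1 + 1 - 1 : ℕ) = m / x - 1 := by omega
      rw [this, Nat.cast_sub hq]
      norm_num
    rw [nsmul_eq_mul, hcast]
    linear_combination (-(x : ℚ) ^ 2) * hD
  rw [Finset.sum_congr rfl h2, Finset.sum_sub_distrib]
  have h3 : (sigmaFn 3 m : ℚ) = ∑ x ∈ m.divisors, (x : ℚ) ^ 3 := by
    rw [sigmaFn]; push_cast; rfl
  have h4 : (m : ℚ) * sigmaFn 2 m = ∑ x ∈ m.divisors, (m : ℚ) * (x : ℚ) ^ 2 := by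
    rw [sigmaFn, Nat.cast_sum, Finset.mul_sum]; push_cast; rfl
  rw [h3, h4]

lemma inner_cubic (N : ℕ) (hN : 0 < N) :
    ∑ x ∈ Finset.Icc 1 (N - 1), -((x : ℚ) * (((N : ℕ) : ℚ) - x) * ((N : ℕ) : ℚ)) / 2
      = -((((N : ℕ) : ℚ) ^ 4 - ((N : ℕ) : ℚ) ^ 2) / 12) := by
  have h1 := sum_Icc_id (N - 1)
  have h2 := sum_Icc_sq (N - 1)
  have hc : ((N - 1 : ℕ) : ℚ) = (N : ℚ) - 1 := Nat.cast_sub hN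
  rw [hc] at h1 h2
  have expand : ∑ x ∈ Finset.Icc 1 (N - 1), -((x : ℚ) * ((N : ℚ) - x) * (N : ℚ)) / 2
      = (-(N : ℚ) ^ 2 / 2) * (∑ x ∈ Finset.Icc 1 (N - 1), (x : ℚ))
        + ((N : ℚ) / 2) * (∑ x ∈ Finset.Icc 1 (N - 1), (x : ℚ) ^ 2) := by
    rw [Finset.mul_sum, Finset.mul_sum, ← Finset.sum_add_distrib]
    exact Finset.sum_congr rfl fun x _ => by ring
  rw [expand, h1, h2]
  ring

lemma sum_diag_ab (m : ℕ) (hm : 0 < m) :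
    (∑ v ∈ Sol m, if v.1 = v.2.1 then Wq v else 0)
      = -(((sigmaFn 4 m : ℚ) - sigmaFn 2 m) / 12) := by
  rw [← Finset.sum_filter]
  have h1 : ∑ v ∈ (Sol m).filter (fun v => v.1 = v.2.1), Wq v
      = ∑ p ∈ m.divisors.sigma (fun a => Finset.Icc 1 (m / a - 1)),
          -((p.2 : ℚ) * (((m / p.1 : ℕ) : ℚ) - p.2) * ((m / p.1 : ℕ) : ℚ)) / 2 := by
    apply Finset.sum_nbij' (fun v => ⟨v.1, v.2.2.1⟩)
      (fun p => (p.1, p.1, p.2, m / p.1 - p.2))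
    · rintro ⟨a, b, x, y⟩ hv
      simp only [Finset.mem_filter, mem_Sol] at hv
      obtain ⟨⟨ha, hb, hx, hy, he⟩, heq⟩ := hv
      try dsimp only at heq
      subst heq
      have hx2 : a * (x + y) = m := by rw [Nat.mul_add]; exact he
      have hdvd : a ∣ m := Dvd.intro _ hx2
      have hq : x + y = m / a := by rw [← hx2, Nat.mul_div_cancel_left _ ha]
      simp only [Finset.mem_sigma, Nat.mem_divisors, Finset.mem_Icc]
      exact ⟨⟨hdvd, by omega⟩, hx, by omega⟩
    · rintro ⟨a, x⟩ hp
      simp only [Finset.mem_sigma, Nat.mem_divisors, Finset.mem_Icc] at hp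
      obtain ⟨⟨hdvd, hm0⟩, hx1, hx2⟩ := hp
      have ha : 0 < a := Nat.pos_of_dvd_of_pos hdvd hm
      have hq : 0 < m / a := Nat.div_pos (Nat.le_of_dvd hm hdvd) ha
      simp only [Finset.mem_filter, mem_Sol]
      refine ⟨⟨ha, ha, by omega, by omega, ?_⟩, trivial⟩
      try dsimp only
      have hsum : x + (m / a - x) = m / a := by omega
      rw [← Nat.mul_add, hsum, Nat.mul_div_cancel' hdvd]
    · rintro ⟨a, b, x, y⟩ hv
      simp only [Finset.mem_filter, mem_Sol] at hv
      obtain ⟨⟨ha, hb, hx, hy, he⟩, heq⟩ := hv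
      try dsimp only at heq
      subst heq
      have hx2 : a * (x + y) = m := by rw [Nat.mul_add]; exact he
      have hq : x + y = m / a := by rw [← hx2, Nat.mul_div_cancel_left _ ha]
      simp only [Prod.mk.injEq, true_and, and_true]
      omega
    · rintro ⟨a, x⟩ _
      rfl
    · rintro ⟨a, b, x, y⟩ hv
      simp only [Finset.mem_filter, mem_Sol] at hv
      obtain ⟨⟨ha, hb, hx, hy, he⟩, heq⟩ := hv
      try dsimp only at heq
      subst heq
      have hx2 : a * (x + y) = m := by rw [Nat.mul_add]; exact he
      have hq : x + y = m / a := by rw [← hx2, Nat.mul_div_cancel_left _ ha]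
      have hqc : ((m / a : ℕ) : ℚ) = (x : ℚ) + y := by rw [← hq]; push_cast; ring
      unfold Wq
      try dsimp only
      rw [hqc]
      ring
  rw [h1, Finset.sum_sigma]
  have h2 : ∀ a ∈ m.divisors,
      (∑ x ∈ Finset.Icc 1 (m / a - 1),
          -((x : ℚ) * (((m / a : ℕ) : ℚ) - x) * ((m / a : ℕ) : ℚ)) / 2)
        = -((((m / a : ℕ) : ℚ) ^ 4 - ((m / a : ℕ) : ℚ) ^ 2) / 12) := by
    intro a ha
    obtain ⟨hdvd, hm0⟩ := Nat.mem_divisors.mp ha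
    have hapos : 0 < a := Nat.pos_of_dvd_of_pos hdvd hm
    exact inner_cubic (m / a) (Nat.div_pos (Nat.le_of_dvd hm hdvd) hapos)
  rw [Finset.sum_congr rfl h2,
    Nat.sum_div_divisors m (fun d => -((((d : ℕ) : ℚ) ^ 4 - ((d : ℕ) : ℚ) ^ 2) / 12))]
  have h3 : (sigmaFn 4 m : ℚ) = ∑ x ∈ m.divisors, (x : ℚ) ^ 4 := by
    rw [sigmaFn]; push_cast; rfl
  have h4 : (sigmaFn 2 m : ℚ) = ∑ x ∈ m.divisors, (x : ℚ) ^ 2 := by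
    rw [sigmaFn]; push_cast; rfl
  have hfin : ∑ x ∈ m.divisors, -(((x : ℚ) ^ 4 - (x : ℚ) ^ 2) / 12)
      = -(((∑ x ∈ m.divisors, (x : ℚ) ^ 4) - ∑ x ∈ m.divisors, (x : ℚ) ^ 2) / 12) := by
    rw [← Finset.sum_sub_distrib, ← neg_div, ← Finset.sum_neg_distrib, Finset.sum_div]
    exact Finset.sum_congr rfl fun d _ => by ring
  rw [hfin, ← h3, ← h4]

theorem T_eq_F (m : ℕ) (hm : 0 < m) :
    (∑ v ∈ Sol m, if v.2.2.2 < v.2.2.1 then (v.2.2.1 : ℚ) * (v.2.2.2 : ℚ) ^ 2 else 0)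
      = Ffn m := by
  have h2T := two_T m
  have hxy := sum_diag_xy m hm
  have hab := sum_diag_ab m hm
  rw [hxy, hab] at h2T
  rw [Ffn]
  linarith

end LiouvilleAux

namespace LiouvilleAux

lemma scale (n d : ℕ) (hn : 0 < n) (hdvd : d ∣ n) (hd0 : 0 < d) :
    (∑ v ∈ Sol n, if v.2.2.2 < v.2.2.1 ∧ d ∣ v.2.2.1 ∧ d ∣ v.2.2.2
        then (ArithmeticFunction.moebius d : ℚ) * v.2.2.1 * (v.2.2.2 : ℚ) ^ 2 / d else 0)
      = (ArithmeticFunction.moebius d : ℚ) * (d : ℚ) ^ 2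
        * ∑ w ∈ Sol (n / d), (if w.2.2.2 < w.2.2.1 then (w.2.2.1 : ℚ) * (w.2.2.2 : ℚ) ^ 2 else 0) := by
  rw [← Finset.sum_filter, ← Finset.sum_filter, Finset.mul_sum]
  apply Finset.sum_nbij' (fun v => (v.1, v.2.1, v.2.2.1 / d, v.2.2.2 / d))
    (fun w => (w.1, w.2.1, d * w.2.2.1, d * w.2.2.2))
  · rintro ⟨a, b, x, y⟩ hv
    simp only [Finset.mem_filter, mem_Sol] at hv ⊢
    obtain ⟨⟨ha, hb, hx, hy, he⟩, hlt, hdx, hdy⟩ := hv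
    have e1 : d * (a * (x / d) + b * (y / d)) = n := by
      rw [Nat.mul_add, ← Nat.mul_assoc, Nat.mul_comm d a, Nat.mul_assoc,
        Nat.mul_div_cancel' hdx, ← Nat.mul_assoc, Nat.mul_comm d b, Nat.mul_assoc,
        Nat.mul_div_cancel' hdy]
      exact he
    refine ⟨⟨ha, hb, Nat.div_pos (Nat.le_of_dvd hx hdx) hd0,
      Nat.div_pos (Nat.le_of_dvd hy hdy) hd0, ?_⟩, ?_⟩
    · exact (Nat.div_eq_of_eq_mul_right hd0 e1.symm).symm
    · exact Nat.div_lt_div_of_lt_of_dvd hdx hlt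
  · rintro ⟨a, b, x, y⟩ hw
    simp only [Finset.mem_filter, mem_Sol] at hw ⊢
    obtain ⟨⟨ha, hb, hx, hy, he⟩, hlt⟩ := hw
    have e1 : a * (d * x) + b * (d * y) = n := by
      have h9 : a * (d * x) + b * (d * y) = d * (a * x + b * y) := by ring
      rw [h9, he, Nat.mul_div_cancel' hdvd]
    refine ⟨⟨ha, hb, Nat.mul_pos hd0 hx, Nat.mul_pos hd0 hy, e1⟩,
      by exact Nat.mul_lt_mul_left hd0 |>.mpr hlt, Dvd.intro _ rfl, Dvd.intro _ rfl⟩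
  · rintro ⟨a, b, x, y⟩ hv
    simp only [Finset.mem_filter, mem_Sol] at hv
    obtain ⟨⟨ha, hb, hx, hy, he⟩, hlt, hdx, hdy⟩ := hv
    simp only [Prod.mk.injEq, true_and]
    exact ⟨Nat.mul_div_cancel' hdx, Nat.mul_div_cancel' hdy⟩
  · rintro ⟨a, b, x, y⟩ _
    simp only [Prod.mk.injEq, true_and]
    exact ⟨Nat.mul_div_cancel_left _ hd0, Nat.mul_div_cancel_left _ hd0⟩
  · rintro ⟨a, b, x, y⟩ hv
    simp only [Finset.mem_filter, mem_Sol] at hv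
    obtain ⟨⟨ha, hb, hx, hy, he⟩, hlt, hdx, hdy⟩ := hv
    have hxq : (x : ℚ) = (d : ℚ) * ((x / d : ℕ) : ℚ) := by
      exact_mod_cast congrArg (Nat.cast (R := ℚ)) (Nat.mul_div_cancel' hdx).symm
    have hyq : (y : ℚ) = (d : ℚ) * ((y / d : ℕ) : ℚ) := by
      exact_mod_cast congrArg (Nat.cast (R := ℚ)) (Nat.mul_div_cancel' hdy).symm
    have hdq : (d : ℚ) ≠ 0 := by positivity
    dsimp only
    rw [hxq, hyq]
    field_simp

end LiouvilleAux

theorem sum_U_eq (n : ℕ) (hn : 0 < n) :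
    (∑ v ∈ (Finset.Icc 1 n ×ˢ Finset.Icc 1 n ×ˢ Finset.Icc 1 n ×ˢ Finset.Icc 1 n).filter
        (fun v : ℕ × ℕ × ℕ × ℕ => v.2.2.2 < v.2.2.1 ∧
          v.1 * v.2.2.1 + v.2.1 * v.2.2.2 = n),
      (v.2.2.1 * v.2.2.2 ^ 2 * Nat.totient (Nat.gcd v.2.2.1 v.2.2.2) : ℚ) /
        (Nat.gcd v.2.2.1 v.2.2.2 : ℚ))
    = ∑ d ∈ n.divisors, (ArithmeticFunction.moebius d : ℚ) * (d : ℚ) ^ 2 * Ffn (n / d) := by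
  classical
  have hset : (Finset.Icc 1 n ×ˢ Finset.Icc 1 n ×ˢ Finset.Icc 1 n ×ˢ Finset.Icc 1 n).filter
        (fun v : ℕ × ℕ × ℕ × ℕ => v.2.2.2 < v.2.2.1 ∧
          v.1 * v.2.2.1 + v.2.1 * v.2.2.2 = n)
      = (LiouvilleAux.Sol n).filter (fun v => v.2.2.2 < v.2.2.1) := by
    rw [LiouvilleAux.Sol, Finset.filter_filter]
    exact Finset.filter_congr fun v _ => and_comm
  rw [hset, Finset.sum_filter]
  have hpoint : ∀ v ∈ LiouvilleAux.Sol n,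
      (if v.2.2.2 < v.2.2.1 then
        (v.2.2.1 * v.2.2.2 ^ 2 * Nat.totient (Nat.gcd v.2.2.1 v.2.2.2) : ℚ) /
          (Nat.gcd v.2.2.1 v.2.2.2 : ℚ) else 0)
      = ∑ d ∈ n.divisors, (if v.2.2.2 < v.2.2.1 ∧ d ∣ v.2.2.1 ∧ d ∣ v.2.2.2
          then (ArithmeticFunction.moebius d : ℚ) * v.2.2.1 * (v.2.2.2 : ℚ) ^ 2 / d else 0) := by
    intro v hv
    rw [LiouvilleAux.mem_Sol] at hv
    obtain ⟨a, b, x, y⟩ := v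
    obtain ⟨ha, hb, hx, hy, he⟩ := hv
    dsimp only at *
    by_cases hlt : y < x
    · rw [if_pos hlt]
      have hg : 0 < Nat.gcd x y := Nat.gcd_pos_of_pos_left _ hx
      have hgdvd : (Nat.gcd x y).divisors
          = n.divisors.filter (fun d => d ∣ x ∧ d ∣ y) := by
        ext d
        simp only [Nat.mem_divisors, Finset.mem_filter]
        constructor
        · rintro ⟨hd, hgne⟩
          have hdx : d ∣ x := hd.trans (Nat.gcd_dvd_left x y)
          have hdy : d ∣ y := hd.trans (Nat.gcd_dvd_right x y)
          have hdn : d ∣ n := he ▸ dvd_add (hdx.mul_left a) (hdy.mul_left b)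
          exact ⟨⟨hdn, by omega⟩, hdx, hdy⟩
        · rintro ⟨⟨hdn, hne⟩, hdx, hdy⟩
          exact ⟨Nat.dvd_gcd hdx hdy, by omega⟩
      have ht := LiouvilleAux.totient_div (Nat.gcd x y) hg
      have hexp : ((x : ℚ) * (y : ℚ) ^ 2 * (Nat.totient (Nat.gcd x y) : ℚ))
            / ((Nat.gcd x y : ℕ) : ℚ)
          = ∑ d ∈ (Nat.gcd x y).divisors,
              (ArithmeticFunction.moebius d : ℚ) * x * (y : ℚ) ^ 2 / d := by
        rw [mul_div_assoc, ht, Finset.mul_sum]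
        exact Finset.sum_congr rfl fun d _ => by ring
      rw [hexp, hgdvd, Finset.sum_filter]
      exact Finset.sum_congr rfl fun d _ => by
        by_cases hd : d ∣ x ∧ d ∣ y <;> simp [hd, hlt]
    · rw [if_neg hlt]
      symm
      exact Finset.sum_eq_zero fun d _ => by simp [hlt]
  rw [Finset.sum_congr rfl hpoint, Finset.sum_comm]
  refine Finset.sum_congr rfl fun d hd => ?_
  obtain ⟨hdvd, hne⟩ := Nat.mem_divisors.mp hd
  have hd0 : 0 < d := Nat.pos_of_dvd_of_pos hdvd hn
  rw [LiouvilleAux.scale n d hn hdvd hd0,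
    LiouvilleAux.T_eq_F (n / d) (Nat.div_pos (Nat.le_of_dvd hn hdvd) hd0)]
end

section
/- For every positive integer n, the sum of k·l·φ(gcd(k, l))/gcd(k, l) over all quadruples (p, q, k, l) of positive integers with p·k + q·l = n equals ∑_{d ∣ n} μ(d)·d·G(n/d), where G(m) = (5/12)·σ₃(m) + (1/12)·σ₁(m) − (1/2)·m·σ₁(m). -/
/-- `G(m) = (5/12)σ₃(m) + (1/12)σ₁(m) − (1/2)mσ₁(m)`. -/
def Gfn (m : ℕ) : ℚ :=
  (5 / 12) * sigmaFn 3 m + (1 / 12) * sigmaFn 1 m - (1 / 2) * (m : ℚ) * sigmaFn 1 m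

open Finset


def Tq (n : ℕ) : Finset (ℕ × ℕ × ℕ × ℕ) :=
  (Finset.Icc 1 n ×ˢ Finset.Icc 1 n ×ˢ Finset.Icc 1 n ×ˢ Finset.Icc 1 n).filter
    (fun v : ℕ × ℕ × ℕ × ℕ => v.1 * v.2.2.1 + v.2.1 * v.2.2.2 = n)

lemma mem_Tq {n : ℕ} {v : ℕ × ℕ × ℕ × ℕ} :
    v ∈ Tq n ↔ 0 < v.1 ∧ 0 < v.2.1 ∧ 0 < v.2.2.1 ∧ 0 < v.2.2.2 ∧
      v.1 * v.2.2.1 + v.2.1 * v.2.2.2 = n := by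
  obtain ⟨a, b, x, y⟩ := v
  simp only [Tq, mem_filter, mem_product, Finset.mem_Icc]
  constructor
  · rintro ⟨⟨⟨h1, -⟩, ⟨h2, -⟩, ⟨h3, -⟩, h4, -⟩, h5⟩
    exact ⟨h1, h2, h3, h4, h5⟩
  · rintro ⟨h1, h2, h3, h4, h5⟩
    have ha : a ≤ a * x := Nat.le_mul_of_pos_right a h3
    have hb : b ≤ b * y := Nat.le_mul_of_pos_right b h4
    have hx : x ≤ a * x := Nat.le_mul_of_pos_left x h1
    have hy : y ≤ b * y := Nat.le_mul_of_pos_left y h2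
    exact ⟨⟨⟨h1, by omega⟩, ⟨h2, by omega⟩, ⟨h3, by omega⟩, h4, by omega⟩, h5⟩

/-- swap (a,b,x,y) ↦ (b,a,y,x), region x>y to x<y -/
lemma sum_swap_x (n : ℕ) (f : ℕ × ℕ × ℕ × ℕ → ℚ) :
    ∑ v ∈ (Tq n).filter (fun v => v.2.2.2 < v.2.2.1), f v
    = ∑ v ∈ (Tq n).filter (fun v => v.2.2.1 < v.2.2.2),
        f (v.2.1, v.1, v.2.2.2, v.2.2.1) := by
  refine Finset.sum_nbij' (fun v => (v.2.1, v.1, v.2.2.2, v.2.2.1))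
    (fun v => (v.2.1, v.1, v.2.2.2, v.2.2.1)) ?_ ?_ ?_ ?_ ?_
  · rintro ⟨a, b, x, y⟩ hv
    simp only [mem_filter, mem_Tq] at hv ⊢
    obtain ⟨⟨h1, h2, h3, h4, h5⟩, h6⟩ := hv
    exact ⟨⟨h2, h1, h4, h3, by rw [add_comm]; exact h5⟩, h6⟩
  · rintro ⟨a, b, x, y⟩ hv
    simp only [mem_filter, mem_Tq] at hv ⊢
    obtain ⟨⟨h1, h2, h3, h4, h5⟩, h6⟩ := hv
    exact ⟨⟨h2, h1, h4, h3, by rw [add_comm]; exact h5⟩, h6⟩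
  · rintro ⟨a, b, x, y⟩ _; rfl
  · rintro ⟨a, b, x, y⟩ _; rfl
  · rintro ⟨a, b, x, y⟩ _; rfl

lemma sum_swap_a (n : ℕ) (f : ℕ × ℕ × ℕ × ℕ → ℚ) :
    ∑ v ∈ (Tq n).filter (fun v => v.2.1 < v.1), f v
    = ∑ v ∈ (Tq n).filter (fun v => v.1 < v.2.1),
        f (v.2.1, v.1, v.2.2.2, v.2.2.1) := by
  refine Finset.sum_nbij' (fun v => (v.2.1, v.1, v.2.2.2, v.2.2.1))
    (fun v => (v.2.1, v.1, v.2.2.2, v.2.2.1)) ?_ ?_ ?_ ?_ ?_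
  · rintro ⟨a, b, x, y⟩ hv
    simp only [mem_filter, mem_Tq] at hv ⊢
    obtain ⟨⟨h1, h2, h3, h4, h5⟩, h6⟩ := hv
    exact ⟨⟨h2, h1, h4, h3, by rw [add_comm]; exact h5⟩, h6⟩
  · rintro ⟨a, b, x, y⟩ hv
    simp only [mem_filter, mem_Tq] at hv ⊢
    obtain ⟨⟨h1, h2, h3, h4, h5⟩, h6⟩ := hv
    exact ⟨⟨h2, h1, h4, h3, by rw [add_comm]; exact h5⟩, h6⟩
  · rintro ⟨a, b, x, y⟩ _; rfl
  · rintro ⟨a, b, x, y⟩ _; rfl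
  · rintro ⟨a, b, x, y⟩ _; rfl

/-- β : {x>y} ≃ {a<b}, (a,b,x,y) ↦ (a, a+b, x−y, y). -/
lemma sum_beta (n : ℕ) (f : ℕ × ℕ × ℕ × ℕ → ℚ) :
    ∑ v ∈ (Tq n).filter (fun v => v.2.2.2 < v.2.2.1),
        f (v.1, v.1 + v.2.1, v.2.2.1 - v.2.2.2, v.2.2.2)
    = ∑ v ∈ (Tq n).filter (fun v => v.1 < v.2.1), f v := by
  refine Finset.sum_nbij' (fun v => (v.1, v.1 + v.2.1, v.2.2.1 - v.2.2.2, v.2.2.2))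
    (fun v => (v.1, v.2.1 - v.1, v.2.2.1 + v.2.2.2, v.2.2.2)) ?_ ?_ ?_ ?_ ?_
  · rintro ⟨a, b, x, y⟩ hv
    simp only [mem_filter, mem_Tq] at hv ⊢
    obtain ⟨⟨h1, h2, h3, h4, h5⟩, h6⟩ := hv
    obtain ⟨k, rfl⟩ : ∃ k, x = y + (k + 1) := ⟨x - y - 1, by omega⟩
    refine ⟨⟨h1, by omega, by omega, h4, ?_⟩, by omega⟩
    have : y + (k + 1) - y = k + 1 := by omega
    rw [this]; rw [← h5]; ring
  · rintro ⟨a, b, x, y⟩ hv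
    simp only [mem_filter, mem_Tq] at hv ⊢
    obtain ⟨⟨h1, h2, h3, h4, h5⟩, h6⟩ := hv
    obtain ⟨k, rfl⟩ : ∃ k, b = a + (k + 1) := ⟨b - a - 1, by omega⟩
    refine ⟨⟨h1, by omega, by omega, h4, ?_⟩, by omega⟩
    have : a + (k + 1) - a = k + 1 := by omega
    rw [this]; rw [← h5]; ring
  · rintro ⟨a, b, x, y⟩ hv
    simp only [mem_filter, mem_Tq] at hv
    obtain ⟨⟨h1, h2, h3, h4, h5⟩, h6⟩ := hv
    simp only [Prod.mk.injEq, and_true, true_and]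
    omega
  · rintro ⟨a, b, x, y⟩ hv
    simp only [mem_filter, mem_Tq] at hv
    obtain ⟨⟨h1, h2, h3, h4, h5⟩, h6⟩ := hv
    simp only [Prod.mk.injEq, and_true, true_and]
    omega
  · rintro ⟨a, b, x, y⟩ _; rfl

/-- γ : {x<y} ≃ {a>b}, (a,b,x,y) ↦ (a+b, b, x, y−x). -/
lemma sum_gamma (n : ℕ) (f : ℕ × ℕ × ℕ × ℕ → ℚ) :
    ∑ v ∈ (Tq n).filter (fun v => v.2.2.1 < v.2.2.2),
        f (v.1 + v.2.1, v.2.1, v.2.2.1, v.2.2.2 - v.2.2.1)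
    = ∑ v ∈ (Tq n).filter (fun v => v.2.1 < v.1), f v := by
  refine Finset.sum_nbij' (fun v => (v.1 + v.2.1, v.2.1, v.2.2.1, v.2.2.2 - v.2.2.1))
    (fun v => (v.1 - v.2.1, v.2.1, v.2.2.1, v.2.2.2 + v.2.2.1)) ?_ ?_ ?_ ?_ ?_
  · rintro ⟨a, b, x, y⟩ hv
    simp only [mem_filter, mem_Tq] at hv ⊢
    obtain ⟨⟨h1, h2, h3, h4, h5⟩, h6⟩ := hv
    obtain ⟨k, rfl⟩ : ∃ k, y = x + (k + 1) := ⟨y - x - 1, by omega⟩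
    refine ⟨⟨by omega, h2, h3, by omega, ?_⟩, by omega⟩
    have : x + (k + 1) - x = k + 1 := by omega
    rw [this]; rw [← h5]; ring
  · rintro ⟨a, b, x, y⟩ hv
    simp only [mem_filter, mem_Tq] at hv ⊢
    obtain ⟨⟨h1, h2, h3, h4, h5⟩, h6⟩ := hv
    obtain ⟨k, rfl⟩ : ∃ k, a = b + (k + 1) := ⟨a - b - 1, by omega⟩
    refine ⟨⟨by omega, h2, h3, by omega, ?_⟩, by omega⟩
    have : b + (k + 1) - b = k + 1 := by omega
    rw [this]; rw [← h5]; ring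
  · rintro ⟨a, b, x, y⟩ hv
    simp only [mem_filter, mem_Tq] at hv
    obtain ⟨⟨h1, h2, h3, h4, h5⟩, h6⟩ := hv
    simp only [Prod.mk.injEq, and_true, true_and]
    omega
  · rintro ⟨a, b, x, y⟩ hv
    simp only [mem_filter, mem_Tq] at hv
    obtain ⟨⟨h1, h2, h3, h4, h5⟩, h6⟩ := hv
    simp only [Prod.mk.injEq, and_true, true_and]
    omega
  · rintro ⟨a, b, x, y⟩ _; rfl

lemma sum_part (n : ℕ) (f : ℕ × ℕ × ℕ × ℕ → ℚ) (g : ℕ × ℕ × ℕ × ℕ → ℕ × ℕ) :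
    ∑ v ∈ Tq n, f v
    = ∑ v ∈ (Tq n).filter (fun v => (g v).1 < (g v).2), f v
      + ∑ v ∈ (Tq n).filter (fun v => (g v).1 = (g v).2), f v
      + ∑ v ∈ (Tq n).filter (fun v => (g v).2 < (g v).1), f v := by
  rw [← Finset.sum_filter_add_sum_filter_not (Tq n) (fun v => (g v).1 < (g v).2) f]
  rw [← Finset.sum_filter_add_sum_filter_not
    ((Tq n).filter (fun v => ¬ (g v).1 < (g v).2)) (fun v => (g v).1 = (g v).2) f]
  rw [Finset.filter_filter, Finset.filter_filter]
  have e1 : (Tq n).filter (fun v => ¬(g v).1 < (g v).2 ∧ (g v).1 = (g v).2)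
      = (Tq n).filter (fun v => (g v).1 = (g v).2) := by
    apply Finset.filter_congr; intro v _; constructor
    · rintro ⟨-, h⟩; exact h
    · intro h; omega
  have e2 : (Tq n).filter (fun v => ¬(g v).1 < (g v).2 ∧ ¬(g v).1 = (g v).2)
      = (Tq n).filter (fun v => (g v).2 < (g v).1) := by
    apply Finset.filter_congr; intro v _; constructor
    · rintro ⟨h1, h2⟩; omega
    · intro h; omega
  rw [e1, e2, add_assoc]

lemma sigma_ext {p q : Σ _ : ℕ, ℕ} (h1 : p.1 = q.1) (h2 : p.2 = q.2) : p = q := by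
  obtain ⟨_, _⟩ := p; obtain ⟨_, _⟩ := q
  simp only at h1 h2; subst h1; subst h2; rfl

/-- diagonal x = y : parametrized by divisor d = a + b, a ∈ [1, d-1], x = y = n/d -/
lemma diag_x (n : ℕ) (f : ℕ × ℕ × ℕ × ℕ → ℚ) :
    ∑ v ∈ (Tq n).filter (fun v => v.2.2.1 = v.2.2.2), f v
    = ∑ d ∈ n.divisors, ∑ a ∈ Finset.Icc 1 (d - 1), f (a, d - a, n / d, n / d) := by
  rw [← Finset.sum_sigma n.divisors (fun d => Finset.Icc 1 (d - 1))
    (fun p => f (p.2, p.1 - p.2, n / p.1, n / p.1))]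
  refine Finset.sum_nbij' (fun v => (⟨v.1 + v.2.1, v.1⟩ : Σ _ : ℕ, ℕ))
    (fun p => (p.2, p.1 - p.2, n / p.1, n / p.1)) ?_ ?_ ?_ ?_ ?_
  · rintro ⟨a, b, x, y⟩ hv
    simp only [mem_filter, mem_Tq] at hv
    obtain ⟨⟨h1, h2, h3, h4, h5⟩, h6⟩ := hv
    subst h6
    have hn : n = (a + b) * x := by rw [← h5]; ring
    simp only [Finset.mem_sigma, Nat.mem_divisors, Finset.mem_Icc]
    exact ⟨⟨⟨x, hn⟩, by rw [hn]; exact Nat.mul_ne_zero (by omega) (by omega)⟩, by omega, by omega⟩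
  · rintro ⟨d, a⟩ hp
    simp only [Finset.mem_sigma, Nat.mem_divisors, Finset.mem_Icc] at hp
    obtain ⟨⟨hd, hn0⟩, ha1, ha2⟩ := hp
    have hdpos : 0 < d := by omega
    have hq : 0 < n / d := Nat.div_pos (Nat.le_of_dvd (Nat.pos_of_ne_zero hn0) hd) hdpos
    simp only [mem_filter, mem_Tq]
    refine ⟨⟨by omega, by omega, hq, hq, ?_⟩, trivial⟩
    rw [← add_mul, show a + (d - a) = d by omega, Nat.mul_div_cancel' hd]
  · rintro ⟨a, b, x, y⟩ hv
    simp only [mem_filter, mem_Tq] at hv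
    obtain ⟨⟨h1, h2, h3, h4, h5⟩, h6⟩ := hv
    subst h6
    have hx : n / (a + b) = x :=
      Nat.div_eq_of_eq_mul_left (by omega) (by rw [← h5]; ring)
    simp only [Prod.mk.injEq, true_and]
    exact ⟨by omega, hx, hx⟩
  · rintro ⟨d, a⟩ hp
    simp only [Finset.mem_sigma, Nat.mem_divisors, Finset.mem_Icc] at hp
    exact sigma_ext (by simp; omega) (by simp)
  · rintro ⟨a, b, x, y⟩ hv
    simp only [mem_filter, mem_Tq] at hv
    obtain ⟨⟨h1, h2, h3, h4, h5⟩, h6⟩ := hv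
    subst h6
    have hx : n / (a + b) = x :=
      Nat.div_eq_of_eq_mul_left (by omega) (by rw [← h5]; ring)
    rw [show ((a, a + b - a, n / (a + b), n / (a + b)) : ℕ×ℕ×ℕ×ℕ) = (a, b, x, x) by
      simp only [Prod.mk.injEq, true_and]; exact ⟨by omega, hx, hx⟩]

/-- diagonal a = b : parametrized by divisor d = x + y, x ∈ [1, d-1], a = b = n/d -/
lemma diag_a (n : ℕ) (f : ℕ × ℕ × ℕ × ℕ → ℚ) :
    ∑ v ∈ (Tq n).filter (fun v => v.1 = v.2.1), f v
    = ∑ d ∈ n.divisors, ∑ x ∈ Finset.Icc 1 (d - 1), f (n / d, n / d, x, d - x) := by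
  rw [← Finset.sum_sigma n.divisors (fun d => Finset.Icc 1 (d - 1))
    (fun p => f (n / p.1, n / p.1, p.2, p.1 - p.2))]
  refine Finset.sum_nbij' (fun v => (⟨v.2.2.1 + v.2.2.2, v.2.2.1⟩ : Σ _ : ℕ, ℕ))
    (fun p => (n / p.1, n / p.1, p.2, p.1 - p.2)) ?_ ?_ ?_ ?_ ?_
  · rintro ⟨a, b, x, y⟩ hv
    simp only [mem_filter, mem_Tq] at hv
    obtain ⟨⟨h1, h2, h3, h4, h5⟩, h6⟩ := hv
    subst h6
    have hn : n = (x + y) * a := by rw [← h5]; ring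
    simp only [Finset.mem_sigma, Nat.mem_divisors, Finset.mem_Icc]
    exact ⟨⟨⟨a, hn⟩, by rw [hn]; exact Nat.mul_ne_zero (by omega) (by omega)⟩, by omega, by omega⟩
  · rintro ⟨d, x⟩ hp
    simp only [Finset.mem_sigma, Nat.mem_divisors, Finset.mem_Icc] at hp
    obtain ⟨⟨hd, hn0⟩, ha1, ha2⟩ := hp
    have hdpos : 0 < d := by omega
    have hq : 0 < n / d := Nat.div_pos (Nat.le_of_dvd (Nat.pos_of_ne_zero hn0) hd) hdpos
    simp only [mem_filter, mem_Tq]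
    refine ⟨⟨hq, hq, by omega, by omega, ?_⟩, trivial⟩
    rw [← mul_add, show x + (d - x) = d by omega]
    exact Nat.div_mul_cancel hd
  · rintro ⟨a, b, x, y⟩ hv
    simp only [mem_filter, mem_Tq] at hv
    obtain ⟨⟨h1, h2, h3, h4, h5⟩, h6⟩ := hv
    subst h6
    have hx : n / (x + y) = a :=
      Nat.div_eq_of_eq_mul_left (by omega) (by rw [← h5]; ring)
    simp only [Prod.mk.injEq]
    exact ⟨hx, hx, trivial, by omega⟩
  · rintro ⟨d, x⟩ hp
    simp only [Finset.mem_sigma, Nat.mem_divisors, Finset.mem_Icc] at hp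
    exact sigma_ext (by simp; omega) (by simp)
  · rintro ⟨a, b, x, y⟩ hv
    simp only [mem_filter, mem_Tq] at hv
    obtain ⟨⟨h1, h2, h3, h4, h5⟩, h6⟩ := hv
    subst h6
    have hx : n / (x + y) = a :=
      Nat.div_eq_of_eq_mul_left (by omega) (by rw [← h5]; ring)
    rw [show ((n / (x + y), n / (x + y), x, x + y - x) : ℕ×ℕ×ℕ×ℕ) = (a, a, x, y) by
      simp only [Prod.mk.injEq]; exact ⟨hx, hx, trivial, by omega⟩]

lemma sum_Icc_id (m : ℕ) : ∑ x ∈ Finset.Icc 1 m, (x : ℚ) = m * (m + 1) / 2 := by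
  induction m with
  | zero => simp
  | succ k ih =>
    rw [Finset.sum_Icc_succ_top (by omega), ih]
    push_cast; ring

lemma sum_Icc_sq (m : ℕ) : ∑ x ∈ Finset.Icc 1 m, (x : ℚ) ^ 2
    = m * (m + 1) * (2 * m + 1) / 6 := by
  induction m with
  | zero => simp
  | succ k ih =>
    rw [Finset.sum_Icc_succ_top (by omega), ih]
    push_cast; ring

lemma sum_Icc_mul (m : ℕ) (c : ℚ) : ∑ x ∈ Finset.Icc 1 m, (x : ℚ) * (c - x)
    = c * (m * (m + 1) / 2) - m * (m + 1) * (2 * m + 1) / 6 := by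
  calc ∑ x ∈ Finset.Icc 1 m, (x : ℚ) * (c - x)
      = ∑ x ∈ Finset.Icc 1 m, (c * (x:ℚ) - (x:ℚ)^2) := by
        exact Finset.sum_congr rfl (fun x _ => by ring)
    _ = c * (∑ x ∈ Finset.Icc 1 m, (x:ℚ)) - ∑ x ∈ Finset.Icc 1 m, (x:ℚ)^2 := by
        rw [Finset.sum_sub_distrib, Finset.mul_sum]
    _ = _ := by rw [sum_Icc_id, sum_Icc_sq]

lemma flip_lemma (n : ℕ) :
    ∑ d ∈ n.divisors, ((d:ℚ) - 1) * ((n / d : ℕ) : ℚ) ^ 2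
    = ∑ d ∈ n.divisors, ((n:ℚ) * (d:ℚ) - (d:ℚ)^2) := by
  by_cases hn0 : n = 0
  · simp [hn0]
  have step1 : ∑ d ∈ n.divisors, ((d:ℚ) - 1) * ((n / d : ℕ) : ℚ) ^ 2
      = ∑ d ∈ n.divisors,
        (((n / (n / d) : ℕ) : ℚ) * ((n / d : ℕ) : ℚ) ^ 2 - ((n / d : ℕ) : ℚ) ^ 2) := by
    refine Finset.sum_congr rfl (fun d hd => ?_)
    rw [Nat.mem_divisors] at hd
    rw [Nat.div_div_self hd.1 hn0]
    ring
  rw [step1]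
  rw [Nat.sum_div_divisors n (fun e => ((n / e : ℕ) : ℚ) * ((e : ℕ) : ℚ) ^ 2 - ((e : ℕ) : ℚ) ^ 2)]
  refine Finset.sum_congr rfl (fun d hd => ?_)
  rw [Nat.mem_divisors] at hd
  have : ((n / d : ℕ) : ℚ) * (d : ℚ) = (n : ℚ) := by
    rw [← Nat.cast_mul, Nat.div_mul_cancel hd.1]
  rw [pow_two, ← mul_assoc, this]

lemma besge (n : ℕ) :
    ∑ v ∈ Tq n, (v.2.2.1 : ℚ) * (v.2.2.2 : ℚ) = Gfn n := by
  -- region sums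
  set P1 := ∑ v ∈ (Tq n).filter (fun v => v.2.2.2 < v.2.2.1), (v.2.2.1 : ℚ) * (v.2.2.2 : ℚ) with hP1
  set P2 := ∑ v ∈ (Tq n).filter (fun v => v.2.2.1 < v.2.2.2), (v.2.2.1 : ℚ) * (v.2.2.2 : ℚ) with hP2
  set Q1 := ∑ v ∈ (Tq n).filter (fun v => v.2.1 < v.1), (v.2.2.1 : ℚ) * (v.2.2.2 : ℚ) with hQ1
  set Q2 := ∑ v ∈ (Tq n).filter (fun v => v.1 < v.2.1), (v.2.2.1 : ℚ) * (v.2.2.2 : ℚ) with hQ2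
  set R1 := ∑ v ∈ (Tq n).filter (fun v => v.2.2.2 < v.2.2.1), (v.2.2.1 : ℚ) ^ 2 with hR1
  set R2 := ∑ v ∈ (Tq n).filter (fun v => v.2.2.1 < v.2.2.2), (v.2.2.1 : ℚ) ^ 2 with hR2
  set W1 := ∑ v ∈ (Tq n).filter (fun v => v.2.1 < v.1), (v.2.2.1 : ℚ) ^ 2 with hW1
  set W2 := ∑ v ∈ (Tq n).filter (fun v => v.1 < v.2.1), (v.2.2.1 : ℚ) ^ 2 with hW2
  set Y2 := ∑ v ∈ (Tq n).filter (fun v => v.1 < v.2.1), (v.2.2.2 : ℚ) ^ 2 with hY2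
  set Dxy := ∑ v ∈ (Tq n).filter (fun v => v.2.2.1 = v.2.2.2), (v.2.2.1 : ℚ) * (v.2.2.2 : ℚ) with hDxy
  set Dxx := ∑ v ∈ (Tq n).filter (fun v => v.2.2.1 = v.2.2.2), (v.2.2.1 : ℚ) ^ 2 with hDxx
  set Daxy := ∑ v ∈ (Tq n).filter (fun v => v.1 = v.2.1), (v.2.2.1 : ℚ) * (v.2.2.2 : ℚ) with hDaxy
  set Dax2 := ∑ v ∈ (Tq n).filter (fun v => v.1 = v.2.1), (v.2.2.1 : ℚ) ^ 2 with hDax2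
  -- swap identities
  have hA : P1 = P2 := by
    rw [hP1, sum_swap_x n (fun v => (v.2.2.1 : ℚ) * (v.2.2.2 : ℚ))]
    exact Finset.sum_congr rfl (fun v _ => by push_cast; ring)
  have hB : Q1 = Q2 := by
    rw [hQ1, sum_swap_a n (fun v => (v.2.2.1 : ℚ) * (v.2.2.2 : ℚ))]
    exact Finset.sum_congr rfl (fun v _ => by push_cast; ring)
  have hW : W1 = Y2 := by
    rw [hW1, sum_swap_a n (fun v => (v.2.2.1 : ℚ) ^ 2)]
  -- beta identities
  have hC : P1 = Q2 + Y2 := by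
    have h1 := sum_beta n (fun v => ((v.2.2.1 + v.2.2.2 : ℕ) : ℚ) * (v.2.2.2 : ℚ))
    have h2 : ∑ v ∈ (Tq n).filter (fun v => v.2.2.2 < v.2.2.1),
        (((v.1, v.1 + v.2.1, v.2.2.1 - v.2.2.2, v.2.2.2).2.2.1
          + (v.1, v.1 + v.2.1, v.2.2.1 - v.2.2.2, v.2.2.2).2.2.2 : ℕ) : ℚ)
          * ((v.1, v.1 + v.2.1, v.2.2.1 - v.2.2.2, v.2.2.2).2.2.2 : ℚ) = P1 := by
      refine Finset.sum_congr rfl (fun v hv => ?_)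
      simp only [Finset.mem_filter] at hv
      have hle : v.2.2.2 ≤ v.2.2.1 := le_of_lt hv.2
      simp only
      rw [Nat.sub_add_cancel hle]
    have h3 : ∑ v ∈ (Tq n).filter (fun v => v.1 < v.2.1),
        ((v.2.2.1 + v.2.2.2 : ℕ) : ℚ) * (v.2.2.2 : ℚ) = Q2 + Y2 := by
      rw [hQ2, hY2, ← Finset.sum_add_distrib]
      refine Finset.sum_congr rfl (fun v hv => by push_cast; ring)
    rw [← h2, h1, h3]
  have hD : R1 = W2 + 2 * Q2 + Y2 := by
    have h1 := sum_beta n (fun v => ((v.2.2.1 + v.2.2.2 : ℕ) : ℚ) ^ 2)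
    have h2 : ∑ v ∈ (Tq n).filter (fun v => v.2.2.2 < v.2.2.1),
        (((v.1, v.1 + v.2.1, v.2.2.1 - v.2.2.2, v.2.2.2).2.2.1
          + (v.1, v.1 + v.2.1, v.2.2.1 - v.2.2.2, v.2.2.2).2.2.2 : ℕ) : ℚ) ^ 2 = R1 := by
      refine Finset.sum_congr rfl (fun v hv => ?_)
      simp only [Finset.mem_filter] at hv
      have hle : v.2.2.2 ≤ v.2.2.1 := le_of_lt hv.2
      simp only
      rw [Nat.sub_add_cancel hle]
    have h3 : ∑ v ∈ (Tq n).filter (fun v => v.1 < v.2.1),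
        ((v.2.2.1 + v.2.2.2 : ℕ) : ℚ) ^ 2 = W2 + 2 * Q2 + Y2 := by
      rw [hW2, hQ2, hY2, Finset.mul_sum, ← Finset.sum_add_distrib, ← Finset.sum_add_distrib]
      refine Finset.sum_congr rfl (fun v hv => by push_cast; ring)
    rw [← h2, h1, h3]
  have hE : R2 = W1 := by
    have h1 := sum_gamma n (fun v => (v.2.2.1 : ℚ) ^ 2)
    rw [hR2, hW1, ← h1]
  -- partitions
  have hT : ∑ v ∈ Tq n, (v.2.2.1 : ℚ) * (v.2.2.2 : ℚ) = P2 + Dxy + P1 := by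
    simpa using sum_part n (fun v => (v.2.2.1 : ℚ) * (v.2.2.2 : ℚ))
      (fun v => (v.2.2.1, v.2.2.2))
  have hTa : ∑ v ∈ Tq n, (v.2.2.1 : ℚ) * (v.2.2.2 : ℚ) = Q2 + Daxy + Q1 := by
    simpa using sum_part n (fun v => (v.2.2.1 : ℚ) * (v.2.2.2 : ℚ))
      (fun v => (v.1, v.2.1))
  have hX : ∑ v ∈ Tq n, (v.2.2.1 : ℚ) ^ 2 = R2 + Dxx + R1 := by
    simpa using sum_part n (fun v => (v.2.2.1 : ℚ) ^ 2) (fun v => (v.2.2.1, v.2.2.2))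
  have hXa : ∑ v ∈ Tq n, (v.2.2.1 : ℚ) ^ 2 = W2 + Dax2 + W1 := by
    simpa using sum_part n (fun v => (v.2.2.1 : ℚ) ^ 2) (fun v => (v.1, v.2.1))
  -- main combination
  have key : ∑ v ∈ Tq n, (v.2.2.1 : ℚ) * (v.2.2.2 : ℚ)
      = Dax2 - Dxx + (Daxy + Dxy) / 2 := by linarith
  rw [key]
  -- evaluate diagonals
  have eDxy : Dxy = ∑ d ∈ n.divisors, ((d:ℚ) - 1) * ((n / d : ℕ) : ℚ) ^ 2 := by
    rw [hDxy, diag_x n (fun v => (v.2.2.1 : ℚ) * (v.2.2.2 : ℚ))]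
    refine Finset.sum_congr rfl (fun d hd => ?_)
    rw [Nat.mem_divisors] at hd
    have h1 : 0 < d := Nat.pos_of_dvd_of_pos hd.1 (Nat.pos_of_ne_zero hd.2)
    simp only
    rw [Finset.sum_const, Nat.card_Icc]
    have : (d - 1 + 1 - 1 : ℕ) = d - 1 := by omega
    rw [this, nsmul_eq_mul, Nat.cast_sub (by omega)]
    push_cast; ring
  have eDxx : Dxx = ∑ d ∈ n.divisors, ((d:ℚ) - 1) * ((n / d : ℕ) : ℚ) ^ 2 := by
    rw [hDxx, diag_x n (fun v => (v.2.2.1 : ℚ) ^ 2)]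
    refine Finset.sum_congr rfl (fun d hd => ?_)
    rw [Nat.mem_divisors] at hd
    have h1 : 0 < d := Nat.pos_of_dvd_of_pos hd.1 (Nat.pos_of_ne_zero hd.2)
    simp only
    rw [Finset.sum_const, Nat.card_Icc]
    have : (d - 1 + 1 - 1 : ℕ) = d - 1 := by omega
    rw [this, nsmul_eq_mul, Nat.cast_sub (by omega)]
    push_cast; ring
  have eDax2 : Dax2 = ∑ d ∈ n.divisors,
      (((d:ℚ) - 1) * ((d:ℚ) - 1 + 1) * (2 * ((d:ℚ) - 1) + 1) / 6) := by
    rw [hDax2, diag_a n (fun v => (v.2.2.1 : ℚ) ^ 2)]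
    refine Finset.sum_congr rfl (fun d hd => ?_)
    rw [Nat.mem_divisors] at hd
    have h1 : 0 < d := Nat.pos_of_dvd_of_pos hd.1 (Nat.pos_of_ne_zero hd.2)
    simp only
    rw [sum_Icc_sq, Nat.cast_sub (by omega)]
    push_cast; ring
  have eDaxy : Daxy = ∑ d ∈ n.divisors,
      ((d:ℚ) * (((d:ℚ) - 1) * ((d:ℚ) - 1 + 1) / 2)
        - ((d:ℚ) - 1) * ((d:ℚ) - 1 + 1) * (2 * ((d:ℚ) - 1) + 1) / 6) := by
    rw [hDaxy, diag_a n (fun v => (v.2.2.1 : ℚ) * (v.2.2.2 : ℚ))]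
    refine Finset.sum_congr rfl (fun d hd => ?_)
    rw [Nat.mem_divisors] at hd
    have h1 : 0 < d := Nat.pos_of_dvd_of_pos hd.1 (Nat.pos_of_ne_zero hd.2)
    simp only
    have step : ∑ x ∈ Finset.Icc 1 (d - 1), (x : ℚ) * ((d - x : ℕ) : ℚ)
        = ∑ x ∈ Finset.Icc 1 (d - 1), (x : ℚ) * ((d : ℚ) - (x : ℚ)) := by
      refine Finset.sum_congr rfl (fun x hx => ?_)
      rw [Finset.mem_Icc] at hx
      rw [Nat.cast_sub (by omega)]
    rw [step, sum_Icc_mul, Nat.cast_sub (by omega)]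
    push_cast; ring
  rw [eDxy, eDxx, eDax2, eDaxy, flip_lemma]
  -- assemble into a single divisor sum and compare with Gfn
  rw [Gfn]
  have hsig : ∀ k : ℕ, (sigmaFn k n : ℚ) = ∑ d ∈ n.divisors, (d:ℚ)^k := by
    intro k
    rw [sigmaFn]
    push_cast
    rfl
  rw [hsig 3, hsig 1]
  rw [← Finset.sum_add_distrib, Finset.sum_div, ← Finset.sum_sub_distrib]
  rw [← Finset.sum_add_distrib]
  rw [Finset.mul_sum, Finset.mul_sum, Finset.mul_sum, ← Finset.sum_add_distrib,
    ← Finset.sum_sub_distrib]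
  refine Finset.sum_congr rfl (fun d hd => by ring)

lemma sigma_ext' {α β : Type*} {p q : Σ _ : α, β} (h1 : p.1 = q.1) (h2 : p.2 = q.2) :
    p = q := by
  obtain ⟨_, _⟩ := p; obtain ⟨_, _⟩ := q
  simp only at h1 h2; subst h1; subst h2; rfl

lemma totient_eq (m : ℕ) (hm : m ≠ 0) :
    (Nat.totient m : ℚ)
    = ∑ p ∈ m.divisorsAntidiagonal, (ArithmeticFunction.moebius p.1 : ℚ) * p.2 := by
  refine ((ArithmeticFunction.sum_eq_iff_sum_mul_moebius_eq
    (f := fun i => (Nat.totient i : ℚ)) (g := fun i => (i : ℚ))).mp ?_ m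
    (Nat.pos_of_ne_zero hm)).symm
  intro k _
  rw [← Nat.cast_sum]
  exact_mod_cast congrArg (Nat.cast : ℕ → ℚ) (Nat.sum_totient k)

theorem sum_V_eq (n : ℕ) (hn : 0 < n) :
    (∑ v ∈ (Finset.Icc 1 n ×ˢ Finset.Icc 1 n ×ˢ Finset.Icc 1 n ×ˢ Finset.Icc 1 n).filter
        (fun v : ℕ × ℕ × ℕ × ℕ => v.1 * v.2.2.1 + v.2.1 * v.2.2.2 = n),
      (v.2.2.1 * v.2.2.2 * Nat.totient (Nat.gcd v.2.2.1 v.2.2.2) : ℚ) /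
        (Nat.gcd v.2.2.1 v.2.2.2 : ℚ))
    = ∑ d ∈ n.divisors, (ArithmeticFunction.moebius d : ℚ) * (d : ℚ) * Gfn (n / d) := by
  have hmain : (∑ v ∈ Tq n,
      (v.2.2.1 * v.2.2.2 * Nat.totient (Nat.gcd v.2.2.1 v.2.2.2) : ℚ) /
        (Nat.gcd v.2.2.1 v.2.2.2 : ℚ))
      = ∑ d ∈ n.divisors, (ArithmeticFunction.moebius d : ℚ) * (d : ℚ) * Gfn (n / d) := by
    -- step 1: expand totient via moebius
    have step1 : (∑ v ∈ Tq n,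
        (v.2.2.1 * v.2.2.2 * Nat.totient (Nat.gcd v.2.2.1 v.2.2.2) : ℚ) /
          (Nat.gcd v.2.2.1 v.2.2.2 : ℚ))
        = ∑ v ∈ Tq n, ∑ p ∈ (Nat.gcd v.2.2.1 v.2.2.2).divisorsAntidiagonal,
            (ArithmeticFunction.moebius p.1 : ℚ) * v.2.2.1 * v.2.2.2 * p.2 /
              (Nat.gcd v.2.2.1 v.2.2.2 : ℚ) := by
      refine Finset.sum_congr rfl (fun v hv => ?_)
      rw [mem_Tq] at hv
      have hg : Nat.gcd v.2.2.1 v.2.2.2 ≠ 0 := Nat.gcd_ne_zero_left (by omega)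
      rw [totient_eq _ hg, Finset.mul_sum, Finset.sum_div]
      refine Finset.sum_congr rfl (fun p hp => by ring)
    rw [step1]
    -- step 2: reindex the double sum
    have e1 := Finset.sum_sigma (Tq n)
      (fun v => (Nat.gcd v.2.2.1 v.2.2.2).divisorsAntidiagonal)
      (fun q : Σ _ : ℕ × ℕ × ℕ × ℕ, ℕ × ℕ =>
        (ArithmeticFunction.moebius q.2.1 : ℚ) * q.1.2.2.1 * q.1.2.2.2 * q.2.2 /
          (Nat.gcd q.1.2.2.1 q.1.2.2.2 : ℚ))
    rw [← e1]
    have step3 : ∑ d ∈ n.divisors, (ArithmeticFunction.moebius d : ℚ) * (d : ℚ) * Gfn (n / d)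
        = ∑ d ∈ n.divisors, ∑ w ∈ Tq (n / d),
            (ArithmeticFunction.moebius d : ℚ) * (d : ℚ) * ((w.2.2.1 : ℚ) * (w.2.2.2 : ℚ)) := by
      refine Finset.sum_congr rfl (fun d hd => ?_)
      rw [← Finset.mul_sum, besge]
    have e2 := Finset.sum_sigma n.divisors (fun d => Tq (n / d))
      (fun q : Σ _ : ℕ, ℕ × ℕ × ℕ × ℕ =>
        (ArithmeticFunction.moebius q.1 : ℚ) * (q.1 : ℚ) * ((q.2.2.2.1 : ℚ) * (q.2.2.2.2 : ℚ)))
    rw [step3, ← e2]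
    refine Finset.sum_nbij'
      (fun q => ⟨q.2.1, (q.1.1, q.1.2.1, q.1.2.2.1 / q.2.1, q.1.2.2.2 / q.2.1)⟩)
      (fun q => ⟨(q.2.1, q.2.2.1, q.1 * q.2.2.2.1, q.1 * q.2.2.2.2),
        (q.1, Nat.gcd q.2.2.2.1 q.2.2.2.2)⟩) ?_ ?_ ?_ ?_ ?_
    · rintro ⟨⟨a, b, x, y⟩, e, c⟩ hq
      simp only [Finset.mem_sigma, mem_Tq, Nat.mem_divisorsAntidiagonal] at hq
      obtain ⟨⟨h1, h2, h3, h4, h5⟩, hec, hg0⟩ := hq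
      simp only at hec hg0 h5 ⊢
      have hepos : 0 < e := by
        rcases Nat.eq_zero_or_pos e with h | h
        · exfalso; apply hg0; rw [← hec, h, zero_mul]
        · exact h
      have hex : e ∣ x := dvd_trans ⟨c, hec.symm⟩ (Nat.gcd_dvd_left x y)
      have hey : e ∣ y := dvd_trans ⟨c, hec.symm⟩ (Nat.gcd_dvd_right x y)
      obtain ⟨x', rfl⟩ := hex
      obtain ⟨y', rfl⟩ := hey
      have hx' : 0 < x' := by
        rcases Nat.eq_zero_or_pos x' with h | h
        · subst h; simp at h3
        · exact h
      have hy' : 0 < y' := by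
        rcases Nat.eq_zero_or_pos y' with h | h
        · subst h; simp at h4
        · exact h
      have hdiv : n / e = a * x' + b * y' :=
        Nat.div_eq_of_eq_mul_left hepos (by rw [← h5]; ring)
      rw [Finset.mem_sigma, Nat.mul_div_cancel_left x' hepos,
        Nat.mul_div_cancel_left y' hepos]
      constructor
      · rw [Nat.mem_divisors]
        exact ⟨⟨a * x' + b * y', by rw [← h5]; ring⟩, by omega⟩
      · rw [mem_Tq]
        exact ⟨h1, h2, hx', hy', hdiv.symm⟩
    · rintro ⟨d, a, b, x, y⟩ hq
      simp only [Finset.mem_sigma, Nat.mem_divisors, mem_Tq] at hq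
      obtain ⟨⟨hdn, hn0⟩, h1, h2, h3, h4, h5⟩ := hq
      have hdpos : 0 < d := Nat.pos_of_dvd_of_pos hdn (Nat.pos_of_ne_zero hn0)
      rw [Finset.mem_sigma]
      constructor
      · rw [mem_Tq]
        refine ⟨h1, h2, by positivity, by positivity, ?_⟩
        have : a * (d * x) + b * (d * y) = d * (a * x + b * y) := by ring
        rw [this, h5, Nat.mul_div_cancel' hdn]
      · rw [Nat.mem_divisorsAntidiagonal]
        refine ⟨(Nat.gcd_mul_left d x y).symm, ?_⟩
        simp only
        have : 0 < Nat.gcd (d * x) (d * y) :=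
          Nat.gcd_pos_of_pos_left _ (by positivity)
        omega
    · rintro ⟨⟨a, b, x, y⟩, e, c⟩ hq
      simp only [Finset.mem_sigma, mem_Tq, Nat.mem_divisorsAntidiagonal] at hq
      obtain ⟨⟨h1, h2, h3, h4, h5⟩, hec, hg0⟩ := hq
      have hepos : 0 < e := by
        rcases Nat.eq_zero_or_pos e with h | h
        · exfalso; apply hg0; rw [← hec, h, zero_mul]
        · exact h
      have hex : e ∣ x := dvd_trans ⟨c, hec.symm⟩ (Nat.gcd_dvd_left x y)
      have hey : e ∣ y := dvd_trans ⟨c, hec.symm⟩ (Nat.gcd_dvd_right x y)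
      obtain ⟨x', rfl⟩ := hex
      obtain ⟨y', rfl⟩ := hey
      have hc : c = Nat.gcd x' y' := by
        have hgm : Nat.gcd (e * x') (e * y') = e * Nat.gcd x' y' := Nat.gcd_mul_left e x' y'
        rw [hgm] at hec
        exact Nat.eq_of_mul_eq_mul_left hepos hec
      refine sigma_ext' ?_ ?_
      · simp only [Nat.mul_div_cancel_left x' hepos, Nat.mul_div_cancel_left y' hepos]
      · simp only [Nat.mul_div_cancel_left x' hepos, Nat.mul_div_cancel_left y' hepos]
        rw [← hc]
    · rintro ⟨d, a, b, x, y⟩ hq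
      simp only [Finset.mem_sigma, Nat.mem_divisors, mem_Tq] at hq
      obtain ⟨⟨hdn, hn0⟩, h1, h2, h3, h4, h5⟩ := hq
      have hdpos : 0 < d := Nat.pos_of_dvd_of_pos hdn (Nat.pos_of_ne_zero hn0)
      refine sigma_ext' rfl ?_
      simp only [Nat.mul_div_cancel_left x hdpos, Nat.mul_div_cancel_left y hdpos]
    · rintro ⟨⟨a, b, x, y⟩, e, c⟩ hq
      simp only [Finset.mem_sigma, mem_Tq, Nat.mem_divisorsAntidiagonal] at hq
      obtain ⟨⟨h1, h2, h3, h4, h5⟩, hec, hg0⟩ := hq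
      simp only at hec hg0 ⊢
      have hepos : 0 < e := by
        rcases Nat.eq_zero_or_pos e with h | h
        · exfalso; apply hg0; rw [← hec, h, zero_mul]
        · exact h
      have hex : e ∣ x := dvd_trans ⟨c, hec.symm⟩ (Nat.gcd_dvd_left x y)
      have hey : e ∣ y := dvd_trans ⟨c, hec.symm⟩ (Nat.gcd_dvd_right x y)
      obtain ⟨x', rfl⟩ := hex
      obtain ⟨y', rfl⟩ := hey
      have hx' : 0 < x' := by
        rcases Nat.eq_zero_or_pos x' with h | h
        · subst h; simp at h3
        · exact h
      have hcpos : 0 < c := by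
        rcases Nat.eq_zero_or_pos c with h | h
        · exfalso; apply hg0; rw [← hec, h, mul_zero]
        · exact h
      rw [Nat.mul_div_cancel_left x' hepos, Nat.mul_div_cancel_left y' hepos, ← hec]
      have he0 : (e : ℚ) ≠ 0 := Nat.cast_ne_zero.mpr (by omega)
      have hc0 : (c : ℚ) ≠ 0 := Nat.cast_ne_zero.mpr (by omega)
      push_cast
      field_simp
  exact hmain
end

section
/- For every positive integer n, the sum of k·l² over all quadruples (p, q, k, l) of positive integers with k > l and p·k + q·l = n equals (1/24)·σ₄(n) + (1/2)·σ₃(n) − ((12·n + 1)/24)·σ₂(n). -/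
namespace SumKLAux

abbrev V : Type := ℕ × ℕ × ℕ × ℕ

def box (n : ℕ) : Finset V :=
  Finset.Icc 1 n ×ˢ Finset.Icc 1 n ×ˢ Finset.Icc 1 n ×ˢ Finset.Icc 1 n

def OmegaSet (n : ℕ) : Finset V :=
  (box n).filter (fun v => v.1 * v.2.2.1 + v.2.1 * v.2.2.2 = n)

lemma mem_OmegaSet {n : ℕ} (hn : 0 < n) {v : V} :
    v ∈ OmegaSet n ↔ 0 < v.1 ∧ 0 < v.2.1 ∧ 0 < v.2.2.1 ∧ 0 < v.2.2.2 ∧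
      v.1 * v.2.2.1 + v.2.1 * v.2.2.2 = n := by
  obtain ⟨a, b, x, y⟩ := v
  simp only [OmegaSet, box, Finset.mem_filter, Finset.mem_product, Finset.mem_Icc]
  constructor
  · rintro ⟨⟨⟨h1, _⟩, ⟨h2, _⟩, ⟨h3, _⟩, h4, _⟩, hc⟩
    exact ⟨h1, h2, h3, h4, hc⟩
  · rintro ⟨h1, h2, h3, h4, hc⟩
    have e1 : a ≤ a * x := Nat.le_mul_of_pos_right a h3
    have e2 : b ≤ b * y := Nat.le_mul_of_pos_right b h4
    have e3 : x ≤ a * x := Nat.le_mul_of_pos_left x h1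
    have e4 : y ≤ b * y := Nat.le_mul_of_pos_left y h2
    exact ⟨⟨⟨h1, by omega⟩, ⟨h2, by omega⟩, ⟨h3, by omega⟩, h4, by omega⟩, hc⟩

/-- Trichotomy split of a sum. -/
lemma tri (s : Finset V) (f : V → ℚ) (c d : V → ℕ) :
    ∑ v ∈ s, f v =
      ∑ v ∈ s.filter (fun v => c v < d v), f v +
      ∑ v ∈ s.filter (fun v => c v = d v), f v +
      ∑ v ∈ s.filter (fun v => d v < c v), f v := by
  classical
  have h1 := Finset.sum_filter_add_sum_filter_not s (fun v => c v < d v) f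
  have h2 := Finset.sum_filter_add_sum_filter_not
    (s.filter (fun v => ¬ c v < d v)) (fun v => c v = d v) f
  rw [Finset.filter_filter, Finset.filter_filter] at h2
  have e1 : s.filter (fun v => ¬ c v < d v ∧ c v = d v) = s.filter (fun v => c v = d v) :=
    Finset.filter_congr (fun v _ => by omega)
  have e2 : s.filter (fun v => ¬ c v < d v ∧ ¬ c v = d v) = s.filter (fun v => d v < c v) :=
    Finset.filter_congr (fun v _ => by omega)
  rw [e1, e2] at h2
  linarith

/-- Swap `(a,x) ↔ (b,y)` on the region `x < y`. -/
lemma swx (n : ℕ) (hn : 0 < n) (g : ℕ → ℕ → ℚ) :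
    ∑ v ∈ (OmegaSet n).filter (fun v => v.2.2.1 < v.2.2.2), g v.2.2.1 v.2.2.2 =
    ∑ v ∈ (OmegaSet n).filter (fun v => v.2.2.2 < v.2.2.1), g v.2.2.2 v.2.2.1 := by
  refine Finset.sum_nbij' (fun v => (v.2.1, v.1, v.2.2.2, v.2.2.1))
    (fun v => (v.2.1, v.1, v.2.2.2, v.2.2.1)) ?_ ?_ ?_ ?_ ?_
  · rintro ⟨a, b, x, y⟩ hv
    simp only [Finset.mem_filter, mem_OmegaSet hn] at hv ⊢
    obtain ⟨⟨h1, h2, h3, h4, hc⟩, hlt⟩ := hv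
    exact ⟨⟨h2, h1, h4, h3, by rw [Nat.add_comm]; exact hc⟩, hlt⟩
  · rintro ⟨a, b, x, y⟩ hv
    simp only [Finset.mem_filter, mem_OmegaSet hn] at hv ⊢
    obtain ⟨⟨h1, h2, h3, h4, hc⟩, hlt⟩ := hv
    exact ⟨⟨h2, h1, h4, h3, by rw [Nat.add_comm]; exact hc⟩, hlt⟩
  · rintro ⟨a, b, x, y⟩ _; rfl
  · rintro ⟨a, b, x, y⟩ _; rfl
  · rintro ⟨a, b, x, y⟩ _; rfl

/-- Swap `(a,x) ↔ (b,y)` on the region `b < a`. -/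
lemma swa (n : ℕ) (hn : 0 < n) (g : ℕ → ℕ → ℚ) :
    ∑ v ∈ (OmegaSet n).filter (fun v => v.2.1 < v.1), g v.2.2.1 v.2.2.2 =
    ∑ v ∈ (OmegaSet n).filter (fun v => v.1 < v.2.1), g v.2.2.2 v.2.2.1 := by
  refine Finset.sum_nbij' (fun v => (v.2.1, v.1, v.2.2.2, v.2.2.1))
    (fun v => (v.2.1, v.1, v.2.2.2, v.2.2.1)) ?_ ?_ ?_ ?_ ?_
  · rintro ⟨a, b, x, y⟩ hv
    simp only [Finset.mem_filter, mem_OmegaSet hn] at hv ⊢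
    obtain ⟨⟨h1, h2, h3, h4, hc⟩, hlt⟩ := hv
    exact ⟨⟨h2, h1, h4, h3, by rw [Nat.add_comm]; exact hc⟩, hlt⟩
  · rintro ⟨a, b, x, y⟩ hv
    simp only [Finset.mem_filter, mem_OmegaSet hn] at hv ⊢
    obtain ⟨⟨h1, h2, h3, h4, hc⟩, hlt⟩ := hv
    exact ⟨⟨h2, h1, h4, h3, by rw [Nat.add_comm]; exact hc⟩, hlt⟩
  · rintro ⟨a, b, x, y⟩ _; rfl
  · rintro ⟨a, b, x, y⟩ _; rfl
  · rintro ⟨a, b, x, y⟩ _; rfl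

/-- Liouville-type bijection: region `y < x` maps to region `a < b` via
`(a,b,x,y) ↦ (a, a+b, x-y, y)`. -/
lemma b1 (n : ℕ) (hn : 0 < n) (g : ℕ → ℕ → ℚ) :
    ∑ v ∈ (OmegaSet n).filter (fun v => v.2.2.2 < v.2.2.1), g v.2.2.1 v.2.2.2 =
    ∑ v ∈ (OmegaSet n).filter (fun v => v.1 < v.2.1), g (v.2.2.1 + v.2.2.2) v.2.2.2 := by
  refine Finset.sum_nbij' (fun v => (v.1, v.1 + v.2.1, v.2.2.1 - v.2.2.2, v.2.2.2))
    (fun w => (w.1, w.2.1 - w.1, w.2.2.1 + w.2.2.2, w.2.2.2)) ?_ ?_ ?_ ?_ ?_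
  · rintro ⟨a, b, x, y⟩ hv
    simp only [Finset.mem_filter, mem_OmegaSet hn] at hv ⊢
    obtain ⟨⟨h1, h2, h3, h4, hc⟩, hlt⟩ := hv
    refine ⟨⟨h1, by omega, by omega, h4, ?_⟩, by omega⟩
    have e : a * (x - y) + a * y = a * x := by
      rw [← Nat.mul_add, Nat.sub_add_cancel (Nat.le_of_lt hlt)]
    calc a * (x - y) + (a + b) * y = (a * (x - y) + a * y) + b * y := by ring
      _ = a * x + b * y := by rw [e]
      _ = n := hc
  · rintro ⟨a, b, x, y⟩ hw
    simp only [Finset.mem_filter, mem_OmegaSet hn] at hw ⊢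
    obtain ⟨⟨h1, h2, h3, h4, hc⟩, hlt⟩ := hw
    refine ⟨⟨h1, by omega, by omega, h4, ?_⟩, by omega⟩
    have e : (b - a) * y + a * y = b * y := by
      rw [← Nat.add_mul, Nat.sub_add_cancel (Nat.le_of_lt hlt)]
    calc a * (x + y) + (b - a) * y = a * x + ((b - a) * y + a * y) := by ring
      _ = a * x + b * y := by rw [e]
      _ = n := hc
  · rintro ⟨a, b, x, y⟩ hv
    simp only [Finset.mem_filter, mem_OmegaSet hn] at hv
    obtain ⟨⟨h1, h2, h3, h4, hc⟩, hlt⟩ := hv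
    simp only [Prod.mk.injEq, true_and, and_true]
    omega
  · rintro ⟨a, b, x, y⟩ hw
    simp only [Finset.mem_filter, mem_OmegaSet hn] at hw
    obtain ⟨⟨h1, h2, h3, h4, hc⟩, hlt⟩ := hw
    simp only [Prod.mk.injEq, true_and, and_true]
    omega
  · rintro ⟨a, b, x, y⟩ hv
    simp only [Finset.mem_filter, mem_OmegaSet hn] at hv
    obtain ⟨⟨h1, h2, h3, h4, hc⟩, hlt⟩ := hv
    show g x y = g ((x - y) + y) y
    rw [Nat.sub_add_cancel (Nat.le_of_lt hlt)]

lemma cast_sigma (k n : ℕ) : ((sigmaFn k n : ℕ) : ℚ) = ∑ d ∈ n.divisors, (d : ℚ) ^ k := by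
  unfold sigmaFn
  push_cast
  rfl

lemma pow1 (m : ℕ) : ∑ x ∈ Finset.Icc 1 m, (x : ℚ) = m * (m + 1) / 2 := by
  induction m with
  | zero => simp
  | succ k ih =>
    rw [Finset.sum_Icc_succ_top (by omega), ih]
    push_cast
    ring

lemma pow2 (m : ℕ) : ∑ x ∈ Finset.Icc 1 m, (x : ℚ) ^ 2 = m * (m + 1) * (2 * m + 1) / 6 := by
  induction m with
  | zero => simp
  | succ k ih =>
    rw [Finset.sum_Icc_succ_top (by omega), ih]
    push_cast
    ring

lemma pow3 (m : ℕ) : ∑ x ∈ Finset.Icc 1 m, (x : ℚ) ^ 3 = m ^ 2 * (m + 1) ^ 2 / 4 := by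
  induction m with
  | zero => simp
  | succ k ih =>
    rw [Finset.sum_Icc_succ_top (by omega), ih]
    push_cast
    ring

lemma inner_sum (s : ℕ) (hs : 1 ≤ s) :
    ∑ x ∈ Finset.Icc 1 (s - 1), ((x : ℚ) * (((s - x : ℕ)) : ℚ) ^ 2)
      = (s : ℚ) ^ 4 / 12 - (s : ℚ) ^ 2 / 12 := by
  have h1 : ∀ x ∈ Finset.Icc 1 (s - 1),
      ((x : ℚ) * (((s - x : ℕ)) : ℚ) ^ 2)
        = (s : ℚ) ^ 2 * (x : ℚ) - 2 * (s : ℚ) * (x : ℚ) ^ 2 + (x : ℚ) ^ 3 := by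
    intro x hx
    obtain ⟨hx1, hx2⟩ := Finset.mem_Icc.mp hx
    have hxs : x ≤ s := by omega
    rw [Nat.cast_sub hxs]
    ring
  rw [Finset.sum_congr rfl h1, Finset.sum_add_distrib, Finset.sum_sub_distrib,
    ← Finset.mul_sum, ← Finset.mul_sum, pow1, pow2, pow3, Nat.cast_sub hs]
  push_cast
  ring

set_option maxHeartbeats 1000000 in
lemma diag_x (n : ℕ) (hn : 0 < n) :
    ∑ v ∈ (OmegaSet n).filter (fun v => v.2.2.1 = v.2.2.2),
        ((v.2.2.1 : ℚ) * (v.2.2.2 : ℚ) ^ 2)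
      = (n : ℚ) * (sigmaFn 2 n : ℚ) - (sigmaFn 3 n : ℚ) := by
  have key : ∑ v ∈ (OmegaSet n).filter (fun v => v.2.2.1 = v.2.2.2),
        ((v.2.2.1 : ℚ) * (v.2.2.2 : ℚ) ^ 2)
      = ∑ p ∈ n.divisors.sigma (fun d => Finset.Icc 1 (n / d - 1)), ((p.1 : ℚ)) ^ 3 := by
    refine Finset.sum_nbij' (fun v => (⟨v.2.2.1, v.1⟩ : (_ : ℕ) × ℕ))
      (fun p => (p.2, n / p.1 - p.2, p.1, p.1)) ?_ ?_ ?_ ?_ ?_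
    · rintro ⟨a, b, x, y⟩ hv
      simp only [Finset.mem_filter, mem_OmegaSet hn] at hv
      obtain ⟨⟨h1, h2, h3, h4, hc⟩, heq⟩ := hv
      have hc' : (a + b) * x = n := by
        subst heq
        calc (a + b) * x = a * x + b * x := by ring
          _ = n := hc
      have hdvd : x ∣ n := Dvd.intro_left _ hc'
      have hq : n / x = a + b := by
        rw [← hc', Nat.mul_div_cancel _ h3]
      simp only [Finset.mem_sigma, Nat.mem_divisors, Finset.mem_Icc]
      exact ⟨⟨hdvd, by omega⟩, by omega, by omega⟩
    · rintro ⟨d, a⟩ hp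
      simp only [Finset.mem_sigma, Nat.mem_divisors, Finset.mem_Icc] at hp
      obtain ⟨⟨hdvd, hn0⟩, ha1, ha2⟩ := hp
      have hdpos : 0 < d := by
        rcases Nat.eq_zero_or_pos d with h | h
        · subst h; simp at hdvd; omega
        · exact h
      have hq : n / d * d = n := Nat.div_mul_cancel hdvd
      have hq1 : 1 ≤ n / d := (Nat.one_le_div_iff hdpos).mpr (Nat.le_of_dvd hn hdvd)
      simp only [Finset.mem_filter, mem_OmegaSet hn]
      refine ⟨⟨by omega, by omega, hdpos, hdpos, ?_⟩, by trivial⟩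
      show a * d + (n / d - a) * d = n
      have : a + (n / d - a) = n / d := by omega
      calc a * d + (n / d - a) * d = (a + (n / d - a)) * d := by ring
        _ = n / d * d := by rw [this]
        _ = n := hq
    · rintro ⟨a, b, x, y⟩ hv
      simp only [Finset.mem_filter, mem_OmegaSet hn] at hv
      obtain ⟨⟨h1, h2, h3, h4, hc⟩, heq⟩ := hv
      have hc' : (a + b) * x = n := by
        subst heq
        calc (a + b) * x = a * x + b * x := by ring
          _ = n := hc
      have hq : n / x = a + b := by rw [← hc', Nat.mul_div_cancel _ h3]
      simp only [Prod.mk.injEq, true_and, and_true]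
      omega
    · rintro ⟨d, a⟩ hp
      simp only [Finset.mem_sigma, Nat.mem_divisors, Finset.mem_Icc] at hp
      rfl
    · rintro ⟨a, b, x, y⟩ hv
      simp only [Finset.mem_filter, mem_OmegaSet hn] at hv
      obtain ⟨⟨h1, h2, h3, h4, hc⟩, heq⟩ := hv
      show (x : ℚ) * (y : ℚ) ^ 2 = (x : ℚ) ^ 3
      rw [← heq]
      ring
  rw [key, Finset.sum_sigma]
  have step : ∀ d ∈ n.divisors,
      (∑ _a ∈ Finset.Icc 1 (n / d - 1), ((d : ℚ)) ^ 3)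
        = (n : ℚ) * (d : ℚ) ^ 2 - (d : ℚ) ^ 3 := by
    intro d hd
    obtain ⟨hdvd, hn0⟩ := Nat.mem_divisors.mp hd
    have hdpos : 0 < d := Nat.pos_of_mem_divisors hd
    have hq : n / d * d = n := Nat.div_mul_cancel hdvd
    have hq1 : 1 ≤ n / d := (Nat.one_le_div_iff hdpos).mpr (Nat.le_of_dvd hn hdvd)
    rw [Finset.sum_const, Nat.card_Icc]
    have hcard : n / d - 1 + 1 - 1 = n / d - 1 := by omega
    rw [hcard, nsmul_eq_mul]
    have h2 : ((n / d - 1 : ℕ) : ℚ) = ((n / d : ℕ) : ℚ) - 1 := by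
      rw [Nat.cast_sub hq1, Nat.cast_one]
    have hcast : ((n / d : ℕ) : ℚ) * (d : ℚ) = (n : ℚ) := by exact_mod_cast congrArg Nat.cast hq
    rw [h2]
    linear_combination (d : ℚ) ^ 2 * hcast
  rw [Finset.sum_congr rfl step, Finset.sum_sub_distrib, cast_sigma, cast_sigma,
    Finset.mul_sum]

set_option maxHeartbeats 1000000 in
lemma diag_a (n : ℕ) (hn : 0 < n) :
    ∑ v ∈ (OmegaSet n).filter (fun v => v.1 = v.2.1),
        ((v.2.2.1 : ℚ) * (v.2.2.2 : ℚ) ^ 2)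
      = ((sigmaFn 4 n : ℚ) - (sigmaFn 2 n : ℚ)) / 12 := by
  have key : ∑ v ∈ (OmegaSet n).filter (fun v => v.1 = v.2.1),
        ((v.2.2.1 : ℚ) * (v.2.2.2 : ℚ) ^ 2)
      = ∑ p ∈ n.divisors.sigma (fun d => Finset.Icc 1 (n / d - 1)),
          ((p.2 : ℚ) * (((n / p.1 - p.2 : ℕ)) : ℚ) ^ 2) := by
    refine Finset.sum_nbij' (fun v => (⟨v.1, v.2.2.1⟩ : (_ : ℕ) × ℕ))
      (fun p => (p.1, p.1, p.2, n / p.1 - p.2)) ?_ ?_ ?_ ?_ ?_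
    · rintro ⟨a, b, x, y⟩ hv
      simp only [Finset.mem_filter, mem_OmegaSet hn] at hv
      obtain ⟨⟨h1, h2, h3, h4, hc⟩, heq⟩ := hv
      have hc' : a * (x + y) = n := by
        subst heq
        calc a * (x + y) = a * x + a * y := by ring
          _ = n := hc
      have hdvd : a ∣ n := Dvd.intro _ hc'
      have hq : n / a = x + y := by rw [← hc', Nat.mul_div_cancel_left _ h1]
      simp only [Finset.mem_sigma, Nat.mem_divisors, Finset.mem_Icc]
      exact ⟨⟨hdvd, by omega⟩, by omega, by omega⟩
    · rintro ⟨d, x⟩ hp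
      simp only [Finset.mem_sigma, Nat.mem_divisors, Finset.mem_Icc] at hp
      obtain ⟨⟨hdvd, hn0⟩, hx1, hx2⟩ := hp
      have hdpos : 0 < d := by
        rcases Nat.eq_zero_or_pos d with h | h
        · subst h; simp at hdvd; omega
        · exact h
      have hq : d * (n / d) = n := Nat.mul_div_cancel' hdvd
      have hq1 : 1 ≤ n / d := (Nat.one_le_div_iff hdpos).mpr (Nat.le_of_dvd hn hdvd)
      simp only [Finset.mem_filter, mem_OmegaSet hn]
      refine ⟨⟨hdpos, hdpos, by omega, by omega, ?_⟩, by trivial⟩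
      show d * x + d * (n / d - x) = n
      have hxy : x + (n / d - x) = n / d := by omega
      calc d * x + d * (n / d - x) = d * (x + (n / d - x)) := by ring
        _ = d * (n / d) := by rw [hxy]
        _ = n := hq
    · rintro ⟨a, b, x, y⟩ hv
      simp only [Finset.mem_filter, mem_OmegaSet hn] at hv
      obtain ⟨⟨h1, h2, h3, h4, hc⟩, heq⟩ := hv
      have hc' : a * (x + y) = n := by
        subst heq
        calc a * (x + y) = a * x + a * y := by ring
          _ = n := hc
      have hq : n / a = x + y := by rw [← hc', Nat.mul_div_cancel_left _ h1]
      simp only [Prod.mk.injEq, true_and, and_true]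
      omega
    · rintro ⟨d, x⟩ hp
      rfl
    · rintro ⟨a, b, x, y⟩ hv
      simp only [Finset.mem_filter, mem_OmegaSet hn] at hv
      obtain ⟨⟨h1, h2, h3, h4, hc⟩, heq⟩ := hv
      have hc' : a * (x + y) = n := by
        subst heq
        calc a * (x + y) = a * x + a * y := by ring
          _ = n := hc
      have hq : n / a = x + y := by rw [← hc', Nat.mul_div_cancel_left _ h1]
      show (x : ℚ) * (y : ℚ) ^ 2 = (x : ℚ) * (((n / a - x : ℕ)) : ℚ) ^ 2
      have : n / a - x = y := by omega
      rw [this]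
  rw [key, Finset.sum_sigma]
  have step : ∀ d ∈ n.divisors,
      (∑ x ∈ Finset.Icc 1 (n / d - 1), ((x : ℚ) * (((n / d - x : ℕ)) : ℚ) ^ 2))
        = ((n / d : ℕ) : ℚ) ^ 4 / 12 - ((n / d : ℕ) : ℚ) ^ 2 / 12 := by
    intro d hd
    obtain ⟨hdvd, hn0⟩ := Nat.mem_divisors.mp hd
    have hdpos : 0 < d := Nat.pos_of_mem_divisors hd
    have hq : n / d * d = n := Nat.div_mul_cancel hdvd
    have hq1 : 1 ≤ n / d := (Nat.one_le_div_iff hdpos).mpr (Nat.le_of_dvd hn hdvd)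
    exact inner_sum (n / d) hq1
  rw [Finset.sum_congr rfl step]
  calc ∑ d ∈ n.divisors, (((n / d : ℕ) : ℚ) ^ 4 / 12 - ((n / d : ℕ) : ℚ) ^ 2 / 12)
      = ∑ d ∈ n.divisors, ((fun m : ℕ => (m : ℚ) ^ 4 / 12 - (m : ℚ) ^ 2 / 12) (n / d)) := rfl
    _ = ∑ d ∈ n.divisors, ((d : ℚ) ^ 4 / 12 - (d : ℚ) ^ 2 / 12) :=
        Nat.sum_div_divisors n (fun m : ℕ => (m : ℚ) ^ 4 / 12 - (m : ℚ) ^ 2 / 12)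
    _ = ((sigmaFn 4 n : ℚ) - (sigmaFn 2 n : ℚ)) / 12 := by
        rw [Finset.sum_sub_distrib, cast_sigma, cast_sigma]
        rw [← Finset.sum_div, ← Finset.sum_div]
        ring

end SumKLAux

set_option maxHeartbeats 1000000 in
open SumKLAux in
theorem sum_kl_sq_eq (n : ℕ) (hn : 0 < n) :
    (∑ v ∈ (Finset.Icc 1 n ×ˢ Finset.Icc 1 n ×ˢ Finset.Icc 1 n ×ˢ Finset.Icc 1 n).filter
        (fun v : ℕ × ℕ × ℕ × ℕ => v.2.2.2 < v.2.2.1 ∧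
          v.1 * v.2.2.1 + v.2.1 * v.2.2.2 = n),
      ((v.2.2.1 : ℚ) * (v.2.2.2 : ℚ) ^ 2))
    = (1 / 24) * sigmaFn 4 n + (1 / 2) * sigmaFn 3 n -
        ((12 * (n : ℚ) + 1) / 24) * sigmaFn 2 n := by
  classical
  have hsets : (Finset.Icc 1 n ×ˢ Finset.Icc 1 n ×ˢ Finset.Icc 1 n ×ˢ Finset.Icc 1 n).filter
        (fun v : ℕ × ℕ × ℕ × ℕ => v.2.2.2 < v.2.2.1 ∧
          v.1 * v.2.2.1 + v.2.1 * v.2.2.2 = n)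
      = (OmegaSet n).filter (fun v => v.2.2.2 < v.2.2.1) := by
    show (box n).filter _ = _
    rw [OmegaSet, Finset.filter_filter]
    exact Finset.filter_congr (fun v _ => and_comm)
  rw [hsets]
  -- canonical integrands
  have hT1 : ∑ v ∈ OmegaSet n, ((v.2.2.1 : ℚ) * (v.2.2.2 : ℚ) ^ 2) =
      (∑ v ∈ (OmegaSet n).filter (fun v => v.2.2.1 < v.2.2.2),
        ((v.2.2.1 : ℚ) * (v.2.2.2 : ℚ) ^ 2)) +
      (∑ v ∈ (OmegaSet n).filter (fun v => v.2.2.1 = v.2.2.2),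
        ((v.2.2.1 : ℚ) * (v.2.2.2 : ℚ) ^ 2)) +
      (∑ v ∈ (OmegaSet n).filter (fun v => v.2.2.2 < v.2.2.1),
        ((v.2.2.1 : ℚ) * (v.2.2.2 : ℚ) ^ 2)) :=
    tri (OmegaSet n) _ (fun v => v.2.2.1) (fun v => v.2.2.2)
  have hT2 : ∑ v ∈ OmegaSet n, ((v.2.2.1 : ℚ) * (v.2.2.2 : ℚ) ^ 2) =
      (∑ v ∈ (OmegaSet n).filter (fun v => v.1 < v.2.1),
        ((v.2.2.1 : ℚ) * (v.2.2.2 : ℚ) ^ 2)) +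
      (∑ v ∈ (OmegaSet n).filter (fun v => v.1 = v.2.1),
        ((v.2.2.1 : ℚ) * (v.2.2.2 : ℚ) ^ 2)) +
      (∑ v ∈ (OmegaSet n).filter (fun v => v.2.1 < v.1),
        ((v.2.2.1 : ℚ) * (v.2.2.2 : ℚ) ^ 2)) :=
    tri (OmegaSet n) _ (fun v => v.1) (fun v => v.2.1)
  have hswx : ∑ v ∈ (OmegaSet n).filter (fun v => v.2.2.1 < v.2.2.2),
        ((v.2.2.1 : ℚ) * (v.2.2.2 : ℚ) ^ 2) =
      ∑ v ∈ (OmegaSet n).filter (fun v => v.2.2.2 < v.2.2.1),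
        ((v.2.2.1 : ℚ) ^ 2 * (v.2.2.2 : ℚ)) :=
    (swx n hn (fun x y => (x : ℚ) * (y : ℚ) ^ 2)).trans
      (Finset.sum_congr rfl (fun v _ => by ring))
  have hswa : ∑ v ∈ (OmegaSet n).filter (fun v => v.2.1 < v.1),
        ((v.2.2.1 : ℚ) * (v.2.2.2 : ℚ) ^ 2) =
      ∑ v ∈ (OmegaSet n).filter (fun v => v.1 < v.2.1),
        ((v.2.2.1 : ℚ) ^ 2 * (v.2.2.2 : ℚ)) :=
    (swa n hn (fun x y => (x : ℚ) * (y : ℚ) ^ 2)).trans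
      (Finset.sum_congr rfl (fun v _ => by ring))
  have hb1 : ∑ v ∈ (OmegaSet n).filter (fun v => v.2.2.2 < v.2.2.1),
        ((v.2.2.1 : ℚ) * (v.2.2.2 : ℚ) ^ 2) =
      (∑ v ∈ (OmegaSet n).filter (fun v => v.1 < v.2.1),
        ((v.2.2.1 : ℚ) * (v.2.2.2 : ℚ) ^ 2)) +
      (∑ v ∈ (OmegaSet n).filter (fun v => v.1 < v.2.1),
        ((v.2.2.2 : ℚ) ^ 3)) :=
    (b1 n hn (fun x y => (x : ℚ) * (y : ℚ) ^ 2)).trans (by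
      rw [← Finset.sum_add_distrib]
      exact Finset.sum_congr rfl (fun v _ => by push_cast; ring))
  have hb2 : ∑ v ∈ (OmegaSet n).filter (fun v => v.2.2.2 < v.2.2.1),
        ((v.2.2.1 : ℚ) ^ 2 * (v.2.2.2 : ℚ)) =
      (∑ v ∈ (OmegaSet n).filter (fun v => v.1 < v.2.1),
        ((v.2.2.1 : ℚ) ^ 2 * (v.2.2.2 : ℚ))) +
      2 * (∑ v ∈ (OmegaSet n).filter (fun v => v.1 < v.2.1),
        ((v.2.2.1 : ℚ) * (v.2.2.2 : ℚ) ^ 2)) +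
      (∑ v ∈ (OmegaSet n).filter (fun v => v.1 < v.2.1),
        ((v.2.2.2 : ℚ) ^ 3)) :=
    (b1 n hn (fun x y => (x : ℚ) ^ 2 * (y : ℚ))).trans (by
      rw [Finset.mul_sum, ← Finset.sum_add_distrib, ← Finset.sum_add_distrib]
      exact Finset.sum_congr rfl (fun v _ => by push_cast; ring))
  have hDx := diag_x n hn
  have hDa := diag_a n hn
  linarith
end
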